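/- arXiv:1405.7299 — 10 statements merged into one kernel-verified Lean document; each statement's English description precedes it below -/
import Mathlib

section
/- If a closed walk W in a graph G has underlying subgraph a tree, and a vertex v has degree m in that tree, then v occurs at least m times in W. -/
open SimpleGraph

private lemma telescope_darts {V : Type*} {G : SimpleGraph V} {a b : V} (p : G.Walk a b)
    (g : V → ℤ) :
    (p.darts.map (fun d => g d.snd - g d.fst)).sum = g b - g a := by
  induction p with
  | nil => simp
  | cons h q ih =>
    simp only [Walk.darts_cons, List.map_cons, List.sum_cons, ih]
    ring

private lemma sum_pm {α : Type*} [DecidableEq α] (L : List α) (D1 D2 : α)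
    (f : α → ℤ)
    (hf : ∀ d ∈ L, f d = if d = D1 then 1 else if d = D2 then -1 else 0)
    (hne : D1 ≠ D2) :
    (L.map f).sum = (L.count D1 : ℤ) - L.count D2 := by
  induction L with
  | nil => simp
  | cons a L ih =>
    have ih' := ih (fun d hd => hf d (List.mem_cons_of_mem a hd))
    simp only [List.map_cons, List.sum_cons, ih', hf a List.mem_cons_self,
      List.count_cons]
    by_cases h1 : a = D1 <;> by_cases h2 : a = D2 <;>
      simp [h1, h2, hne, Ne.symm hne] <;> push_cast <;> ring

private lemma dart_rev_mem {V : Type*} {G : SimpleGraph V} {v : V} (p : G.Walk v v)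
    (hp : p.toSubgraph.coe.IsTree) {u w : V} (hadj : p.toSubgraph.Adj u w) :
    (⟨(w, u), (p.toSubgraph.adj_sub hadj).symm⟩ : G.Dart) ∈ p.darts := by
  classical
  have hu : u ∈ p.toSubgraph.verts := p.toSubgraph.edge_vert hadj
  have hw : w ∈ p.toSubgraph.verts := p.toSubgraph.edge_vert hadj.symm
  have huw : u ≠ w := (p.toSubgraph.adj_sub hadj).ne
  have hcoe : p.toSubgraph.coe.Adj ⟨u, hu⟩ ⟨w, hw⟩ := hadj
  have hbridge := isAcyclic_iff_forall_adj_isBridge.mp hp.IsAcyclic hcoe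
  rw [isBridge_iff] at hbridge
  set H' : SimpleGraph p.toSubgraph.verts :=
    p.toSubgraph.coe \ fromEdgeSet {s((⟨u, hu⟩ : p.toSubgraph.verts), ⟨w, hw⟩)} with hH'
  have hnr : ¬ H'.Reachable ⟨w, hw⟩ ⟨u, hu⟩ := fun h => hbridge h.symm
  set g : V → ℤ := fun x =>
    if h : x ∈ p.toSubgraph.verts then
      (if H'.Reachable ⟨w, hw⟩ ⟨x, h⟩ then 1 else 0) else 0 with hg
  have hgw : g w = 1 := by
    simp only [hg]; rw [dif_pos hw, if_pos (Reachable.refl _)]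
  have hgu : g u = 0 := by
    simp only [hg]; rw [dif_pos hu, if_neg hnr]
  set D1 : G.Dart := ⟨(u, w), p.toSubgraph.adj_sub hadj⟩ with hD1
  set D2 : G.Dart := ⟨(w, u), (p.toSubgraph.adj_sub hadj).symm⟩ with hD2
  have hD12 : D1 ≠ D2 := by
    intro h
    exact huw (congrArg (fun d => d.toProd.1) h)
  have key : ∀ d ∈ p.darts,
      g d.snd - g d.fst = if d = D1 then 1 else if d = D2 then -1 else 0 := by
    intro d hd
    have hedge : d.edge ∈ p.edges := List.mem_map_of_mem (f := Dart.edge) hd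
    have hsub : p.toSubgraph.Adj d.fst d.snd := by
      rw [← Subgraph.mem_edgeSet]
      rw [p.mem_edges_toSubgraph]
      exact hedge
    have hf : d.fst ∈ p.toSubgraph.verts := p.toSubgraph.edge_vert hsub
    have hs : d.snd ∈ p.toSubgraph.verts := p.toSubgraph.edge_vert hsub.symm
    by_cases he : d.edge = s(u, w)
    · rw [dart_edge_eq_mk'_iff'] at he
      rcases he with ⟨h1, h2⟩ | ⟨h1, h2⟩
      · have hdD : d = D1 := Dart.ext d D1 (Prod.ext h1 h2)
        rw [if_pos hdD, h1, h2, hgw, hgu]; ring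
      · have hdD : d = D2 := Dart.ext d D2 (Prod.ext h1 h2)
        rw [if_neg (fun h => hD12 (h.symm.trans hdD)), if_pos hdD, h1, h2, hgw, hgu]
        ring
    · have hne1 : d ≠ D1 := by
        intro h; apply he; rw [h]; rfl
      have hne2 : d ≠ D2 := by
        intro h; apply he; rw [h]
        exact Sym2.eq_swap
    -- g is constant across this dart
      have hAdj' : H'.Adj ⟨d.fst, hf⟩ ⟨d.snd, hs⟩ := by
        refine ⟨hsub, ?_⟩
        rw [fromEdgeSet_adj]
        rintro ⟨h1, -⟩
        apply he
        simp only [Set.mem_singleton_iff, Sym2.eq_iff] at h1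
        rcases h1 with ⟨h1, h2⟩ | ⟨h1, h2⟩
        · rw [dart_edge_eq_mk'_iff']
          exact Or.inl ⟨congrArg Subtype.val h1, congrArg Subtype.val h2⟩
        · rw [dart_edge_eq_mk'_iff']
          exact Or.inr ⟨congrArg Subtype.val h1, congrArg Subtype.val h2⟩
      have : g d.fst = g d.snd := by
        simp only [hg, dif_pos hf, dif_pos hs]
        have : H'.Reachable ⟨w, hw⟩ ⟨d.fst, hf⟩ ↔ H'.Reachable ⟨w, hw⟩ ⟨d.snd, hs⟩ :=
          ⟨fun h => h.trans hAdj'.reachable, fun h => h.trans hAdj'.symm.reachable⟩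
        by_cases hr : H'.Reachable ⟨w, hw⟩ ⟨d.fst, hf⟩
        · rw [if_pos hr, if_pos (this.mp hr)]
        · rw [if_neg hr, if_neg (fun h => hr (this.mpr h))]
      rw [if_neg hne1, if_neg hne2, this]; ring
  have hsum := telescope_darts p g
  rw [sum_pm p.darts D1 D2 _ key hD12, sub_self] at hsum
  have hcount : p.darts.count D1 = p.darts.count D2 := by
    have := sub_eq_zero.mp hsum
    exact_mod_cast this
  have hmem : D1 ∈ p.darts ∨ D2 ∈ p.darts := by
    have : s(u, w) ∈ p.edges := by
      rw [← p.mem_edges_toSubgraph, Subgraph.mem_edgeSet]; exact hadj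
    rw [Walk.edges, List.mem_map] at this
    obtain ⟨d, hd, hde⟩ := this
    rw [dart_edge_eq_mk'_iff'] at hde
    rcases hde with ⟨h1, h2⟩ | ⟨h1, h2⟩
    · exact Or.inl ((Dart.ext d D1 (Prod.ext h1 h2)) ▸ hd)
    · exact Or.inr ((Dart.ext d D2 (Prod.ext h1 h2)) ▸ hd)
  rcases hmem with h | h
  · have : 0 < p.darts.count D2 := by
      rw [← hcount]
      exact List.count_pos_iff.mpr h
    exact List.count_pos_iff.mp this
  · exact h

/-- if a closed walk `p` in a graph `G` has underlying subgraph a tree and a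
vertex `u` has degree `m` in that tree, then `u` occurs at least `m` times in `p`
(occurrences counted among the vertices `v_1, …, v_r = v_0` of the walk). -/
theorem tree_walk_degree_le_occurrences {V : Type*} [DecidableEq V] (G : SimpleGraph V)
    (v : V) (p : G.Walk v v) (hp : p.toSubgraph.coe.IsTree) (u : V) (m : ℕ)
    (hdeg : (p.toSubgraph.neighborSet u).ncard = m) :
    m ≤ p.support.tail.count u := by
  classical
  subst hdeg
  have hfin : (p.toSubgraph.neighborSet u).Finite := p.finite_neighborSet_toSubgraph
  rw [Set.ncard_eq_toFinset_card _ hfin]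
  have hsubset : hfin.toFinset ⊆
      (p.darts.filter (fun d => d.toProd.2 = u)).toFinset.image (fun d => d.toProd.1) := by
    intro w hwmem
    rw [Set.Finite.mem_toFinset, Subgraph.mem_neighborSet] at hwmem
    have hd := dart_rev_mem p hp hwmem
    rw [Finset.mem_image]
    refine ⟨⟨(w, u), (p.toSubgraph.adj_sub hwmem).symm⟩, ?_, rfl⟩
    rw [List.mem_toFinset, List.mem_filter]
    exact ⟨hd, decide_eq_true rfl⟩
  calc hfin.toFinset.card
      ≤ ((p.darts.filter (fun d => d.toProd.2 = u)).toFinset.image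
          (fun d => d.toProd.1)).card := Finset.card_le_card hsubset
    _ ≤ (p.darts.filter (fun d => d.toProd.2 = u)).toFinset.card :=
        Finset.card_image_le
    _ ≤ (p.darts.filter (fun d => d.toProd.2 = u)).length := List.toFinset_card_le _
    _ = p.support.tail.count u := by
        rw [← p.map_snd_darts, List.count, List.countP_map, ← List.countP_eq_length_filter]
        refine List.countP_congr fun d _ => ?_
        simp only [Function.comp_apply, decide_eq_true_eq, beq_iff_eq]
end

section
/- If a graph G fails to be 2s-repeating for some positive integer s (i.e., there is a closed walk of length 2js with j ≥ 2 having no proper closed subwalk of length a positive multiple of 2s), then G fails to be 2r-repeating for all r ≥ s. -/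
open SimpleGraph

/-- A graph `G` is `k`-repeating if every closed walk of length `j * k` with `j ≥ 2` has a
proper closed subwalk (a contiguous closed subsequence, other than the whole walk) whose
length is a positive multiple of `k`. -/
def IsKRepeating {V : Type*} (G : SimpleGraph V) (k : ℕ) : Prop :=
  ∀ (v : V) (W : G.Walk v v) (j : ℕ), 2 ≤ j → W.length = j * k →
    ∃ i l : ℕ, 0 < l ∧ k ∣ l ∧ l < W.length ∧ i + l ≤ W.length ∧
      W.getVert i = W.getVert (i + l)

namespace KRepAux

variable {V : Type*}

/-- Build a walk of length `L` from a vertex function with adjacency between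
consecutive values. -/
def walkOfFun (G : SimpleGraph V) :
    ∀ (L : ℕ) (f : ℕ → V), (∀ n, n < L → G.Adj (f n) (f (n + 1))) → G.Walk (f 0) (f L)
  | 0, _, _ => Walk.nil
  | (L + 1), f, h =>
      Walk.cons (h 0 (Nat.succ_pos L))
        (walkOfFun G L (fun n => f (n + 1)) (fun n hn => h (n + 1) (by omega)))

theorem length_walkOfFun (G : SimpleGraph V) :
    ∀ (L : ℕ) (f : ℕ → V) (h : ∀ n, n < L → G.Adj (f n) (f (n + 1))),
      (walkOfFun G L f h).length = L
  | 0, _, _ => rfl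
  | (L + 1), f, h => by
      simp [walkOfFun, length_walkOfFun G L]

theorem getVert_walkOfFun (G : SimpleGraph V) :
    ∀ (L : ℕ) (f : ℕ → V) (h : ∀ n, n < L → G.Adj (f n) (f (n + 1))) (k : ℕ), k ≤ L →
      (walkOfFun G L f h).getVert k = f k
  | 0, f, h, 0, _ => rfl
  | 0, f, h, (k + 1), hk => by omega
  | (L + 1), f, h, 0, _ => by simp [walkOfFun]
  | (L + 1), f, h, (k + 1), hk => by
      simp only [walkOfFun, Walk.getVert_cons_succ]
      exact getVert_walkOfFun G L _ _ k (by omega)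

end KRepAux

/-- if `G` fails to be `2s`-repeating for some positive integer `s`, then `G`
fails to be `2r`-repeating for all `r ≥ s`. -/
theorem not_kRepeating_mono {V : Type*} (G : SimpleGraph V) (s : ℕ) (hs : 1 ≤ s)
    (h : ¬ IsKRepeating G (2 * s)) :
    ∀ r : ℕ, s ≤ r → ¬ IsKRepeating G (2 * r) := by
  intro r hr hrep
  apply h
  intro v W j hj hlen
  by_contra hW
  push_neg at hW
  -- hW : ∀ i l, 0 < l → 2*s ∣ l → l < W.length → i + l ≤ W.length →
  --        W.getVert i ≠ W.getVert (i + l)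
  set d := r - s with hd
  have hrd : r = s + d := by omega
  have hR : 0 < 2 * r := by omega
  -- position bound within the original walk
  have hseg : ∀ p e : ℕ, p < j → e < 2 * s → 2 * s * p + e < j * (2 * s) := by
    intro p e hp he
    have h1 : 2 * s * (p + 1) ≤ 2 * s * j := Nat.mul_le_mul_left _ (by omega)
    have h2 : 2 * s * (p + 1) = 2 * s * p + 2 * s := by ring
    have h3 : 2 * s * j = j * (2 * s) := by ring
    omega
  -- the padded vertex function
  set f : ℕ → V := fun n =>
    if n % (2 * r) < 2 * d then W.getVert (2 * s * (n / (2 * r)) + (n % (2 * r)) % 2)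
    else W.getVert (2 * s * (n / (2 * r)) + ((n % (2 * r)) - 2 * d)) with hfdef
  have hf : ∀ i o : ℕ, o < 2 * r →
      f (2 * r * i + o) =
        if o < 2 * d then W.getVert (2 * s * i + o % 2)
        else W.getVert (2 * s * i + (o - 2 * d)) := by
    intro i o ho
    have h1 : (2 * r * i + o) / (2 * r) = i := by
      rw [Nat.mul_add_div hR, Nat.div_eq_of_lt ho]
      omega
    have h2 : (2 * r * i + o) % (2 * r) = o := by
      rw [Nat.mul_add_mod, Nat.mod_eq_of_lt ho]
    simp only [hfdef, h1, h2]
  -- adjacency for W positions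
  have hadjW : ∀ p, p < j * (2 * s) → G.Adj (W.getVert p) (W.getVert (p + 1)) := by
    intro p hp
    exact W.adj_getVert_succ (by omega)
  -- adjacency of f
  have hadj : ∀ n, n < j * (2 * r) → G.Adj (f n) (f (n + 1)) := by
    intro n hn
    set i := n / (2 * r) with hi
    set o := n % (2 * r) with ho
    have hno : n = 2 * r * i + o := (Nat.div_add_mod n (2 * r)).symm
    have holt : o < 2 * r := Nat.mod_lt n hR
    have hij : i < j := by
      rw [hi, Nat.div_lt_iff_lt_mul hR]
      omega
    have hfn : f n = if o < 2 * d then W.getVert (2 * s * i + o % 2)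
        else W.getVert (2 * s * i + (o - 2 * d)) := by
      rw [hno]; exact hf i o holt
    by_cases hcase : o + 1 < 2 * r
    · have hfn1 : f (n + 1) = if o + 1 < 2 * d then W.getVert (2 * s * i + (o + 1) % 2)
          else W.getVert (2 * s * i + (o + 1 - 2 * d)) := by
        have heq1 : n + 1 = 2 * r * i + (o + 1) := by omega
        rw [heq1]; exact hf i (o + 1) hcase
      by_cases h1 : o + 1 < 2 * d
      · -- both in padding region
        have ho1 : o < 2 * d := by omega
        rw [hfn, if_pos ho1, hfn1, if_pos h1]
        rcases Nat.even_or_odd o with he | he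
        · have e0 : o % 2 = 0 := Nat.even_iff.mp he
          have e1 : (o + 1) % 2 = 1 := by omega
          rw [e0, e1]
          exact hadjW (2 * s * i + 0) (hseg i 0 hij (by omega))
        · have e0 : o % 2 = 1 := Nat.odd_iff.mp he
          have e1 : (o + 1) % 2 = 0 := by omega
          rw [e0, e1]
          exact (hadjW (2 * s * i + 0) (hseg i 0 hij (by omega))).symm
      · by_cases h2 : o < 2 * d
        · -- o = 2*d - 1, crossing from padding to main part
          have e0 : o % 2 = 1 := by omega
          rw [hfn, if_pos h2, hfn1, if_neg h1, e0]
          have hz : o + 1 - 2 * d = 0 := by omega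
          rw [hz]
          exact (hadjW (2 * s * i + 0) (hseg i 0 hij (by omega))).symm
        · -- both in main region
          rw [hfn, if_neg h2, hfn1, if_neg h1]
          have hsucc : o + 1 - 2 * d = (o - 2 * d) + 1 := by omega
          rw [hsucc]
          exact hadjW (2 * s * i + (o - 2 * d)) (hseg i (o - 2 * d) hij (by omega))
    · -- o = 2*r - 1, crossing segment boundary
      have h2 : ¬ o < 2 * d := by omega
      have hmulr : 2 * r * (i + 1) = 2 * r * i + 2 * r := by ring
      have hfn1 : f (n + 1) = if (0:ℕ) < 2 * d then W.getVert (2 * s * (i + 1) + 0 % 2)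
          else W.getVert (2 * s * (i + 1) + (0 - 2 * d)) := by
        have heq1 : n + 1 = 2 * r * (i + 1) + 0 := by omega
        rw [heq1]; exact hf (i + 1) 0 hR
      have hval : f (n + 1) = W.getVert (2 * s * (i + 1)) := by
        rw [hfn1]; split_ifs <;> simp
      rw [hfn, if_neg h2, hval]
      have hsub : o - 2 * d = 2 * s - 1 := by omega
      have heq2 : 2 * s * (i + 1) = (2 * s * i + (2 * s - 1)) + 1 := by
        have hx : 2 * s * (i + 1) = 2 * s * i + 2 * s := by ring
        omega
      rw [hsub, heq2]
      exact hadjW (2 * s * i + (2 * s - 1)) (hseg i (2 * s - 1) hij (by omega))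
  -- endpoints
  have hf0 : f 0 = v := by
    have hx := hf 0 0 hR
    have h0 : 2 * r * 0 + 0 = 0 := by ring
    rw [h0] at hx
    rw [hx]
    split_ifs <;> simp
  have hfL : f (j * (2 * r)) = v := by
    have hx := hf j 0 hR
    have h0 : 2 * r * j + 0 = j * (2 * r) := by ring
    rw [h0] at hx
    rw [hx]
    have hlen' : 2 * s * j = W.length := by rw [hlen]; ring
    split_ifs <;> simp [hlen']
  -- the padded walk
  set W' : G.Walk v v :=
    (KRepAux.walkOfFun G (j * (2 * r)) f hadj).copy hf0 hfL with hW'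
  have hlenW' : W'.length = j * (2 * r) := by
    rw [hW', Walk.length_copy, KRepAux.length_walkOfFun]
  have hgetW' : ∀ k, k ≤ j * (2 * r) → W'.getVert k = f k := by
    intro k hk
    rw [hW', Walk.getVert_copy, KRepAux.getVert_walkOfFun G _ f hadj k hk]
  -- apply the repeating hypothesis
  obtain ⟨a, l, hl0, hdvd, hllt, hal, heq⟩ := hrep v W' j hj hlenW'
  rw [hlenW'] at hllt hal
  obtain ⟨m, rfl⟩ := hdvd
  have hm0 : 0 < m := by
    rcases Nat.eq_zero_or_pos m with h0 | h0
    · subst h0; simp at hl0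
    · exact h0
  have hmj : m < j := by
    by_contra hc
    push_neg at hc
    have hx : j * (2 * r) ≤ 2 * r * m := by
      calc j * (2 * r) ≤ m * (2 * r) := Nat.mul_le_mul_right _ hc
        _ = 2 * r * m := by ring
    omega
  set ia := a / (2 * r) with hia
  set o := a % (2 * r) with hoa
  have hao : a = 2 * r * ia + o := (Nat.div_add_mod a (2 * r)).symm
  have holt : o < 2 * r := Nat.mod_lt a hR
  have hsum : a + 2 * r * m = 2 * r * (ia + m) + o := by rw [hao]; ring
  have hjr : j * (2 * r) = 2 * r * j := by ring
  have hiamj : ia + m ≤ j := by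
    by_contra hc
    push_neg at hc
    have hx : 2 * r * (j + 1) ≤ 2 * r * (ia + m) := Nat.mul_le_mul_left _ hc
    have hy : 2 * r * (j + 1) = 2 * r * j + 2 * r := by ring
    omega
  have heqf : f a = f (a + 2 * r * m) := by
    rw [← hgetW' a (by omega), ← hgetW' (a + 2 * r * m) (by omega)]
    exact heq
  have hval : f a = if o < 2 * d then W.getVert (2 * s * ia + o % 2)
      else W.getVert (2 * s * ia + (o - 2 * d)) := by
    rw [hao]; exact hf ia o holt
  have hval2 : f (a + 2 * r * m) = if o < 2 * d then W.getVert (2 * s * (ia + m) + o % 2)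
      else W.getVert (2 * s * (ia + m) + (o - 2 * d)) := by
    rw [hsum]; exact hf (ia + m) o holt
  -- extract a repetition in W at an offset e ≤ 2*s - 1
  obtain ⟨e, hes, heqW⟩ :
      ∃ e : ℕ, (e ≤ 2 * s - 1 ∧ (o = 0 → e = 0)) ∧
        W.getVert (2 * s * ia + e) = W.getVert (2 * s * (ia + m) + e) := by
    by_cases hc : o < 2 * d
    · refine ⟨o % 2, ⟨by omega, fun h0 => by omega⟩, ?_⟩
      rw [hval, if_pos hc, hval2, if_pos hc] at heqf
      exact heqf
    · refine ⟨o - 2 * d, ⟨by omega, fun h0 => by omega⟩, ?_⟩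
      rw [hval, if_neg hc, hval2, if_neg hc] at heqf
      exact heqf
  by_cases hfull : ia + m = j
  · -- hits the end of W; fold back using closedness of W
    have ho0 : o = 0 := by
      rw [hfull] at hsum
      omega
    have he0' : e = 0 := hes.2 ho0
    have hia0 : 0 < ia := by
      rcases Nat.eq_zero_or_pos ia with h0 | h0
      · exfalso
        have hmjeq : m = j := by omega
        rw [hmjeq] at hllt
        omega
      · exact h0
    have hend : W.getVert (2 * s * ia) = v := by
      have hx := heqW
      rw [he0', hfull] at hx
      simp only [Nat.add_zero] at hx
      rw [hx]
      have hy : 2 * s * j = W.length := by rw [hlen]; ring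
      rw [hy, Walk.getVert_length]
    refine hW 0 (2 * s * ia) (Nat.mul_pos (by omega) hia0) ⟨ia, rfl⟩ ?_ ?_ ?_
    · rw [hlen]
      have := hseg ia 0 (by omega) (by omega)
      omega
    · rw [hlen]
      have := hseg ia 0 (by omega) (by omega)
      omega
    · rw [Nat.zero_add, Walk.getVert_zero, hend]
  · -- interior repetition in W
    have hiamj' : ia + m < j := by omega
    refine hW (2 * s * ia + e) (2 * s * m) (Nat.mul_pos (by omega) hm0) ⟨m, rfl⟩ ?_ ?_ ?_
    · rw [hlen]
      have := hseg m 0 hmj (by omega)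
      omega
    · rw [hlen]
      have h1 : 2 * s * ia + e + 2 * s * m = 2 * s * (ia + m) + e := by ring
      have h2 := hseg (ia + m) e hiamj' (by omega)
      omega
    · have h1 : 2 * s * ia + e + 2 * s * m = 2 * s * (ia + m) + e := by ring
      rw [h1, heqW]
end

section
/- For every cycle C in a graph and every positive integer s, the cycle (or the closed walk traversing it twice, if its length is odd) yields a closed walk witnessing that the graph containing C fails to be 2s-repeating; that is, any graph containing a cycle is not 2s-repeating for any s. -/
open SimpleGraph Walk

namespace CycleHelper

variable {V : Type*} {G : SimpleGraph V}

/-- Build a walk from a function with adjacency along it. -/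
def walkOfFn (f : ℕ → V) : ∀ (L : ℕ), (∀ i < L, G.Adj (f i) (f (i+1))) → G.Walk (f 0) (f L)
  | 0, _ => Walk.nil
  | (L+1), h => (walkOfFn f L fun i hi => h i (by omega)).concat (h L (by omega))

lemma length_walkOfFn (f : ℕ → V) (L : ℕ) (h : ∀ i < L, G.Adj (f i) (f (i+1))) :
    (walkOfFn f L h).length = L := by
  induction L with
  | zero => rfl
  | succ L ih =>
    simp [walkOfFn, concat_eq_append, ih]

lemma getVert_walkOfFn (f : ℕ → V) (L : ℕ) (h : ∀ i < L, G.Adj (f i) (f (i+1)))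
    (i : ℕ) (hi : i ≤ L) : (walkOfFn f L h).getVert i = f i := by
  induction L with
  | zero => interval_cases i; simp [walkOfFn]
  | succ L ih =>
    simp only [walkOfFn, concat_eq_append, getVert_append, length_walkOfFn]
    rcases Nat.lt_trichotomy i L with hlt | heq | hgt
    · rw [if_pos hlt]
      exact ih (fun i hi => h i (by omega)) (by omega)
    · subst heq
      rw [if_neg (by omega)]
      simp
    · have : i = L + 1 := by omega
      subst this
      rw [if_neg (by omega)]
      have : L + 1 - L = 1 := by omega
      rw [this]
      rfl

lemma getVert_eq_support_getElem {u v : V} (p : G.Walk u v) (i : ℕ)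
    (hi : i < p.support.length) : p.getVert i = p.support[i] := by
  induction p generalizing i with
  | nil => simp at hi; simp [hi]
  | cons h q ih =>
    cases i with
    | zero => simp
    | succ i =>
      simp only [support_cons, List.getElem_cons_succ, getVert_cons_succ]
      exact ih i (by simpa [length_support] using hi)

/-- vertex injectivity for cycles: distinct indices in `[0, length)` give distinct vertices. -/
lemma IsCycle.getVert_ne {v : V} {c : G.Walk v v} (hc : c.IsCycle) {a b : ℕ}
    (ha : a < c.length) (hb : b < c.length) (hab : a ≠ b) :
    c.getVert a ≠ c.getVert b := by
  -- map 0 to length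
  set a' := if a = 0 then c.length else a with ha'
  set b' := if b = 0 then c.length else b with hb'
  have hva : c.getVert a' = c.getVert a := by
    rw [ha']; split
    · simp_all [Walk.getVert_length, Walk.getVert_zero]
    · rfl
  have hvb : c.getVert b' = c.getVert b := by
    rw [hb']; split
    · simp_all [Walk.getVert_length, Walk.getVert_zero]
    · rfl
  have h3 : 3 ≤ c.length := hc.three_le_length
  have ha1 : 1 ≤ a' ∧ a' ≤ c.length := by rw [ha']; split <;> omega
  have hb1 : 1 ≤ b' ∧ b' ≤ c.length := by rw [hb']; split <;> omega
  have hab' : a' ≠ b' := by rw [ha', hb']; split <;> split <;> omega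
  rw [← hva, ← hvb]
  intro heq
  have hlen : c.support.length = c.length + 1 := c.length_support
  have e1 : c.getVert a' = c.support.tail[a' - 1]'(by simp [List.length_tail, hlen]; omega) := by
    rw [getVert_eq_support_getElem c a' (by omega)]
    rw [List.getElem_tail]
    congr 1
    omega
  have e2 : c.getVert b' = c.support.tail[b' - 1]'(by simp [List.length_tail, hlen]; omega) := by
    rw [getVert_eq_support_getElem c b' (by omega)]
    rw [List.getElem_tail]
    congr 1
    omega
  rw [e1, e2] at heq
  have := hc.support_nodup.getElem_inj_iff.mp heq
  omega

/-- Key lemma: a ±1 integer sequence induces a closed walk on a cycle, whose vertices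
collide only when the integer positions are congruent mod the cycle length. -/
lemma exists_walk_of_seq {v : V} {c : G.Walk v v} (hc : c.IsCycle) (p : ℕ → ℤ) (L : ℕ)
    (hp0 : p 0 = 0)
    (hstep : ∀ i < L, p (i+1) - p i = 1 ∨ p (i+1) - p i = -1)
    (hpL : (c.length : ℤ) ∣ p L) :
    ∃ W : G.Walk v v, W.length = L ∧
      ∀ i j, i ≤ L → j ≤ L → ¬ ((c.length : ℤ) ∣ p j - p i) →
        W.getVert i ≠ W.getVert j := by
  set n := c.length with hn
  have h3 : 3 ≤ n := hc.three_le_length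
  have hnpos : (0:ℤ) < (n:ℤ) := by exact_mod_cast (by omega : 0 < n)
  set f : ℕ → V := fun i => c.getVert ((p i % (n:ℤ)).toNat) with hf
  -- basic facts about residues
  have hres : ∀ i, (p i % (n:ℤ)).toNat < n ∧ ((p i % (n:ℤ)).toNat : ℤ) = p i % n := by
    intro i
    have h1 : 0 ≤ p i % n := Int.emod_nonneg _ (by omega)
    have h2 : p i % n < n := Int.emod_lt_of_pos _ hnpos
    constructor
    · omega
    · omega
  -- adjacency of consecutive residues
  have hadjup : ∀ q : ℤ, G.Adj (c.getVert ((q % (n:ℤ)).toNat)) (c.getVert (((q+1) % (n:ℤ)).toNat)) := by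
    intro q
    have h1 : 0 ≤ q % n := Int.emod_nonneg _ (by omega)
    have h2 : q % n < n := Int.emod_lt_of_pos _ hnpos
    set r := (q % (n:ℤ)).toNat with hr
    have hrn : r < n := by omega
    have hkey : (q + 1) % (n:ℤ) = ((q % n) + 1) % n := by
      rw [Int.add_emod q 1 n, Int.emod_eq_of_lt (by omega : (0:ℤ) ≤ 1) (by omega : (1:ℤ) < n)]
    have hq1 : (q+1) % (n:ℤ) = if (r:ℤ) + 1 = n then 0 else (r:ℤ) + 1 := by
      split
      · rw [hkey]
        have : q % (n:ℤ) + 1 = n := by omega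
        rw [this, Int.emod_self]
      · rw [hkey]
        rw [Int.emod_eq_of_lt (by omega) (by omega)]
        omega
    rcases eq_or_ne ((r:ℤ) + 1) n with he | he
    · rw [hq1, if_pos he]
      have : r + 1 = n := by omega
      have hadj := c.adj_getVert_succ (by omega : r < c.length)
      rw [this] at hadj
      rw [c.getVert_length] at hadj
      have h0 : c.getVert ((0:ℤ).toNat) = v := by simp
      rw [h0]
      exact hadj
    · rw [hq1, if_neg he]
      have hr1 : ((r:ℤ) + 1).toNat = r + 1 := by omega
      rw [hr1]
      exact c.adj_getVert_succ (by omega : r < c.length)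
  have hadj : ∀ i < L, G.Adj (f i) (f (i+1)) := by
    intro i hi
    rcases hstep i hi with h | h
    · have : p (i+1) = p i + 1 := by omega
      rw [hf]; simp only
      rw [this]
      exact hadjup (p i)
    · have : p i = p (i+1) + 1 := by omega
      rw [hf]; simp only
      rw [this]
      exact (hadjup (p (i+1))).symm
  have hf0 : f 0 = v := by
    rw [hf]; simp [hp0]
  have hfL : f L = v := by
    rw [hf]; simp only
    have : p L % n = 0 := Int.emod_eq_zero_of_dvd hpL
    simp [this]
  refine ⟨(walkOfFn f L hadj).copy hf0 hfL, ?_, ?_⟩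
  · simp [length_walkOfFn]
  · intro i j hi hj hndvd
    rw [getVert_copy, getVert_copy, getVert_walkOfFn f L hadj i hi,
      getVert_walkOfFn f L hadj j hj]
    rw [hf]; simp only
    apply IsCycle.getVert_ne hc (hres i).1 (hres j).1
    intro heq
    apply hndvd
    have hip : p i % n = p j % n := by
      have := (hres i).2; have := (hres j).2
      omega
    exact Int.dvd_of_emod_eq_zero (by rw [Int.sub_emod, hip, sub_self, Int.zero_emod])

/-- zigzag base pattern 0,1,2,1,2,... -/
def baseFn (i : ℕ) : ℕ := if i = 0 then 0 else if i % 2 = 1 then 1 else 2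

/-- offset of second half above first half -/
def dFn (m i : ℕ) : ℕ := 2 + 2 * ((i - 1) / 2 - ((i - 1) / 2 - m))

/-- the zigzag-with-climbs position sequence -/
def pFn (k m i : ℕ) : ℕ := if i ≤ k then baseFn i else baseFn (i - k) + dFn m (i - k)

lemma pFn_zero (k m : ℕ) : pFn k m 0 = 0 := by simp [pFn, baseFn]

lemma pFn_step (k m : ℕ) (hk2 : k % 2 = 0) (hkpos : 0 < k) (i : ℕ) :
    pFn k m (i + 1) = pFn k m i + 1 ∨ pFn k m i = pFn k m (i + 1) + 1 := by
  unfold pFn baseFn dFn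
  split_ifs
  all_goals first
  | exact (by assumption : False).elim
  | omega

lemma pFn_shift (k m : ℕ) (hk2 : k % 2 = 0) (hkpos : 0 < k) (i : ℕ) (hi : i ≤ k) :
    pFn k m (i + k) = pFn k m i + dFn m i := by
  unfold pFn baseFn dFn
  split_ifs
  all_goals first
  | exact (by assumption : False).elim
  | omega

lemma pFn_last (k m : ℕ) (hk2 : k % 2 = 0) (hkpos : 0 < k) (hmk : 2 * m + 1 ≤ k) :
    pFn k m (2 * k) = 2 * m + 4 := by
  unfold pFn baseFn dFn
  split_ifs
  all_goals first
  | exact (by assumption : False).elim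
  | omega

end CycleHelper

open CycleHelper

/-- any graph containing a cycle fails to be `2s`-repeating for every
positive integer `s`. -/
theorem cycle_not_kRepeating {V : Type*} (G : SimpleGraph V)
    (hcyc : ∃ (v : V) (c : G.Walk v v), c.IsCycle) :
    ∀ s : ℕ, 1 ≤ s → ¬ IsKRepeating G (2 * s) := by
  obtain ⟨v, c, hc⟩ := hcyc
  intro s hs hrep
  set n := c.length with hn
  set k := 2 * s with hk
  have h3 : 3 ≤ n := hc.three_le_length
  have hkpos : 0 < k := by omega
  have hk2 : k % 2 = 0 := by omega
  by_cases hdvd : n ∣ k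
  · -- Case B: n divides k; use a "zigzag with climbs" walk of length 2k.
    have hnk : n ≤ k := Nat.le_of_dvd hkpos hdvd
    -- choose the number of climbs m
    obtain ⟨m, hT, hmk⟩ : ∃ m : ℕ, ((2 * m + 4 = n ∧ n % 2 = 0) ∨ (2 * m + 4 = 2 * n ∧ n % 2 = 1)) ∧ 2 * m + 4 ≤ k := by
      rcases Nat.even_or_odd n with he | ho
      · exact ⟨(n - 4) / 2, Or.inl ⟨by obtain ⟨t, ht⟩ := he; omega, by obtain ⟨t, ht⟩ := he; omega⟩, by
          obtain ⟨t, ht⟩ := he; omega⟩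
      · have h2n : 2 * n ∣ k := by
          have hcop : Nat.Coprime 2 n := Nat.coprime_two_left.mpr ho
          exact hcop.mul_dvd_of_dvd_of_dvd ⟨s, hk⟩ hdvd
        have := Nat.le_of_dvd hkpos h2n
        exact ⟨n - 2, Or.inr ⟨by omega, Nat.odd_iff.mp ho⟩, by omega⟩
    set p : ℕ → ℤ := fun i => (pFn k m i : ℤ) with hp
    have hp0 : p 0 = 0 := by rw [hp]; simp [pFn_zero]
    have hstep : ∀ i < 2 * k, p (i+1) - p i = 1 ∨ p (i+1) - p i = -1 := by
      intro i _
      rcases pFn_step k m hk2 hkpos i with h | h <;> rw [hp] <;> simp only <;> omega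
    have hpL : (n : ℤ) ∣ p (2 * k) := by
      rw [hp]
      simp only
      rw [pFn_last k m hk2 hkpos (by omega)]
      rcases hT with ⟨h, -⟩ | ⟨h, -⟩
      · exact Int.natCast_dvd_natCast.mpr ⟨1, by omega⟩
      · exact Int.natCast_dvd_natCast.mpr ⟨2, by omega⟩
    obtain ⟨W, hWlen, hWinj⟩ := CycleHelper.exists_walk_of_seq hc p (2 * k) hp0 hstep hpL
    obtain ⟨i, l, hl0, hkl, hlW, hilW, heq⟩ := hrep v W 2 (le_refl 2) (by rw [hWlen])
    rw [hWlen] at hlW hilW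
    have hlk : l = k := by
      obtain ⟨t, ht⟩ := hkl
      rcases Nat.lt_or_ge t 2 with h | h
      · interval_cases t <;> omega
      · exfalso
        have : k * 2 ≤ k * t := Nat.mul_le_mul_left k h
        omega
    subst hlk
    refine hWinj i (i + k) (by omega) (by omega) ?_ heq
    -- show the positions differ mod n
    have hik : i ≤ k := by omega
    show ¬ (n : ℤ) ∣ (pFn k m (i + k) : ℤ) - (pFn k m i : ℤ)
    rw [pFn_shift k m hk2 hkpos i hik]
    have hcast : ((pFn k m i + dFn m i : ℕ) : ℤ) - (pFn k m i : ℤ) = ((dFn m i : ℕ) : ℤ) := by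
      push_cast; ring
    rw [hcast]
    intro hcontra
    have hdvdn : n ∣ dFn m i := Int.natCast_dvd_natCast.mp hcontra
    have hdval : dFn m i = 2 + 2 * ((i - 1) / 2 - ((i - 1) / 2 - m)) := rfl
    have hdle : 2 ≤ dFn m i ∧ dFn m i ≤ 2 + 2 * m := by
      constructor
      · omega
      · omega
    have hle : n ≤ dFn m i := Nat.le_of_dvd (by omega) hdvdn
    rcases hT with ⟨hT, hpar⟩ | ⟨hT, hpar⟩
    · -- n even: dFn ≤ 2 + 2m = n - 2 < n
      omega
    · -- n odd: 2 ∣ dFn, n ∣ dFn, n odd ⇒ 2n ∣ dFn, but dFn ≤ 2n - 2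
      have hno : n % 2 = 1 := by omega
      have hcop : Nat.Coprime 2 n := Nat.coprime_two_left.mpr (Nat.odd_iff.mpr hno)
      have h2n : 2 * n ∣ dFn m i :=
        hcop.mul_dvd_of_dvd_of_dvd ⟨1 + ((i - 1) / 2 - ((i - 1) / 2 - m)), by omega⟩ hdvdn
      have := Nat.le_of_dvd (by omega) h2n
      omega
  · -- Case A: n does not divide k; use the cycle traversed lcm(n,k)/n times.
    set g := Nat.gcd n k with hg
    have hgn : g ∣ n := Nat.gcd_dvd_left n k
    have hgk : g ∣ k := Nat.gcd_dvd_right n k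
    have hgpos : 0 < g := Nat.gcd_pos_of_pos_left k (by omega)
    set j := n / g with hj
    have hgj : g * j = n := Nat.mul_div_cancel' hgn
    have hj2 : 2 ≤ j := by
      rcases Nat.lt_or_ge j 2 with h | h
      · interval_cases j
        · omega
        · exfalso; apply hdvd; rw [← hgj]; simpa using hgk
      · exact h
    set L := j * k with hL
    have hlcm : Nat.lcm n k = L := by
      have h1 : g * Nat.lcm n k = n * k := Nat.gcd_mul_lcm n k
      have h2 : g * L = n * k := by
        rw [hL, ← hgj]; ring
      exact Nat.eq_of_mul_eq_mul_left hgpos (by rw [h1, h2])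
    have hnL : n ∣ L := hlcm ▸ Nat.dvd_lcm_left n k
    obtain ⟨W, hWlen, hWinj⟩ := CycleHelper.exists_walk_of_seq hc (fun i => (i : ℤ)) L
      (by simp) (by intro i _; left; push_cast; ring) (Int.natCast_dvd_natCast.mpr hnL)
    obtain ⟨i, l, hl0, hkl, hlW, hilW, heq⟩ := hrep v W j hj2 (by rw [hWlen])
    rw [hWlen] at hlW hilW
    refine hWinj i (i + l) (by omega) (by omega) ?_ heq
    show ¬ (n : ℤ) ∣ ((i + l : ℕ) : ℤ) - ((i : ℕ) : ℤ)
    have hcast : ((i + l : ℕ) : ℤ) - ((i : ℕ) : ℤ) = ((l : ℕ) : ℤ) := by push_cast; ring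
    rw [hcast]
    intro hcon
    have hnl : n ∣ l := Int.natCast_dvd_natCast.mp hcon
    have hlcmdvd : Nat.lcm n k ∣ l := Nat.lcm_dvd hnl hkl
    rw [hlcm] at hlcmdvd
    have := Nat.le_of_dvd hl0 hlcmdvd
    omega
end

section
/- A graph G is a forest if and only if G is 2-repeating, if and only if G is 4-repeating. -/
open SimpleGraph

section Aux

variable {V : Type*} {G : SimpleGraph V}

/-- In an acyclic graph every path realizes the distance between its endpoints. -/
lemma aux_path_length_eq_dist (hG : G.IsAcyclic) {u w : V} (p : G.Walk u w) (hp : p.IsPath) :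
    p.length = G.dist u w := by
  obtain ⟨q, hq, hql⟩ := p.reachable.exists_path_of_dist
  have : (⟨p, hp⟩ : G.Path u w) = ⟨q, hq⟩ := hG.path_unique _ _
  rw [show p = q from congrArg Subtype.val this, hql]

/-- Along an edge, distance to a fixed vertex changes by exactly one (acyclic case). -/
lemma aux_dist_step (hG : G.IsAcyclic) {v a b : V} (hr : G.Reachable v a) (hab : G.Adj a b) :
    G.dist v b + 1 = G.dist v a ∨ G.dist v a + 1 = G.dist v b := by
  classical
  obtain ⟨P, hP, hPl⟩ := hr.exists_path_of_dist
  by_cases hb : b ∈ P.support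
  · left
    have hQ := hP.takeUntil hb
    have hR := hP.dropUntil hb
    have hsingle : (Walk.cons hab.symm Walk.nil : G.Walk b a).IsPath := by
      simp [Walk.isPath_def, hab.ne']
    have huniq : (⟨P.dropUntil b hb, hR⟩ : G.Path b a) = ⟨Walk.cons hab.symm Walk.nil, hsingle⟩ :=
      hG.path_unique _ _
    have hlen : (P.dropUntil b hb).length = 1 := by
      rw [show P.dropUntil b hb = Walk.cons hab.symm Walk.nil from congrArg Subtype.val huniq]
      simp
    have hsum : (P.takeUntil b hb).length + (P.dropUntil b hb).length = P.length := by
      rw [← Walk.length_append, P.take_spec hb]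
    have hQd : (P.takeUntil b hb).length = G.dist v b := aux_path_length_eq_dist hG _ hQ
    omega
  · right
    have hcp : (P.concat hab).IsPath := by
      rw [Walk.isPath_def, Walk.support_concat]
      simp [List.nodup_append, hP.support_nodup, hb]
      rintro x hx rfl; exact hb hx
    have := aux_path_length_eq_dist hG _ hcp
    rw [Walk.length_concat] at this
    omega

/-- Membership in a path bounds the distance from the start. -/
lemma aux_mem_dist_le (hG : G.IsAcyclic) {u w x : V} (p : G.Walk u w) (hp : p.IsPath)
    (hx : x ∈ p.support) : G.dist u x ≤ p.length := by
  classical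
  have := aux_path_length_eq_dist hG _ (hp.takeUntil hx)
  have := p.length_takeUntil_le hx
  omega

lemma aux_getVert_concat_self {u a b : V} (p : G.Walk u a) (h : G.Adj a b) :
    (p.concat h).getVert p.length = a := by
  rw [Walk.concat_eq_append, Walk.getVert_append]
  simp [Walk.getVert_zero]

/-- In an acyclic graph, two neighbours of `c` that are both strictly closer to `v`
(at distance one less) coincide: the unique parent. -/
lemma aux_parent_unique (hG : G.IsAcyclic) {v a b c : V}
    (hra : G.Reachable v a) (hrb : G.Reachable v b)
    (hac : G.Adj a c) (hbc : G.Adj b c)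
    (hda : G.dist v a + 1 = G.dist v c) (hdb : G.dist v b + 1 = G.dist v c) : a = b := by
  classical
  obtain ⟨P, hP, hPl⟩ := hra.exists_path_of_dist
  obtain ⟨Q, hQ, hQl⟩ := hrb.exists_path_of_dist
  have hcP : c ∉ P.support := fun hmem => by
    have := aux_mem_dist_le hG P hP hmem; omega
  have hcQ : c ∉ Q.support := fun hmem => by
    have := aux_mem_dist_le hG Q hQ hmem; omega
  have hPc : (P.concat hac).IsPath := by
    rw [Walk.isPath_def, Walk.support_concat]
    simp [List.nodup_append, hP.support_nodup, hcP]
    rintro x hx rfl; exact hcP hx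
  have hQc : (Q.concat hbc).IsPath := by
    rw [Walk.isPath_def, Walk.support_concat]
    simp [List.nodup_append, hQ.support_nodup, hcQ]
    rintro x hx rfl; exact hcQ hx
  have huniq : (⟨P.concat hac, hPc⟩ : G.Path v c) = ⟨Q.concat hbc, hQc⟩ := hG.path_unique _ _
  have hwalk : P.concat hac = Q.concat hbc := congrArg Subtype.val huniq
  have hlen : P.length = Q.length := by omega
  have h1 : (P.concat hac).getVert P.length = a := aux_getVert_concat_self P hac
  have h2 : (Q.concat hbc).getVert Q.length = b := aux_getVert_concat_self Q hbc
  rw [hwalk, hlen] at h1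
  rw [h1] at h2
  exact h2

lemma aux_reach (v : V) (W : G.Walk v v) : ∀ i, G.Reachable v (W.getVert i) := by
  intro i
  induction i with
  | zero => rw [Walk.getVert_zero]
  | succ n ih =>
    by_cases h : n < W.length
    · exact ih.trans (W.adj_getVert_succ h).reachable
    · rw [W.getVert_of_length_le (by omega)]

lemma aux_dist_le (hG : G.IsAcyclic) (v : V) (W : G.Walk v v) :
    ∀ i, G.dist v (W.getVert i) ≤ i := by
  intro i
  induction i with
  | zero => simp [Walk.getVert_zero]
  | succ n ih =>
    by_cases h : n < W.length
    · rcases aux_dist_step hG (aux_reach v W n) (W.adj_getVert_succ h) with h' | h' <;> omega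
    · rw [W.getVert_of_length_le (by omega), SimpleGraph.dist_self]
      omega

lemma aux_gap_two (hG : G.IsAcyclic) {v : V} (W : G.Walk v v) (hn : 2 ≤ W.length) :
    ∃ i, i + 2 ≤ W.length ∧ W.getVert i = W.getVert (i + 2) := by
  classical
  set n := W.length with hn'
  have hstep : ∀ i j : ℕ, i + 1 = j → i < n →
      G.dist v (W.getVert j) + 1 = G.dist v (W.getVert i) ∨
      G.dist v (W.getVert i) + 1 = G.dist v (W.getVert j) := by
    intro i j hij hi
    have h := aux_dist_step hG (aux_reach v W i) (W.adj_getVert_succ hi)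
    rwa [hij] at h
  have hdle : ∀ i, G.dist v (W.getVert i) ≤ i := aux_dist_le hG v W
  have hd0 : G.dist v (W.getVert 0) = 0 := by simp [Walk.getVert_zero]
  have hdn : G.dist v (W.getVert n) = 0 := by
    rw [hn', W.getVert_length, SimpleGraph.dist_self]
  obtain ⟨t₀, ht₀, hmax⟩ := Finset.exists_max_image (Finset.range (n + 1))
    (fun i => G.dist v (W.getVert i)) ⟨0, by simp⟩
  have ht₀n : t₀ ≤ n := by have := Finset.mem_range.mp ht₀; omega
  obtain ⟨M, hM⟩ : ∃ M, M = G.dist v (W.getVert t₀) := ⟨_, rfl⟩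
  have hbound : ∀ i, i ≤ n → G.dist v (W.getVert i) ≤ M := fun i hi => by
    rw [hM]; exact hmax i (Finset.mem_range.mpr (by omega))
  obtain ⟨t, htM, htle⟩ : ∃ t, G.dist v (W.getVert t) = M ∧ t ≤ n := by
    refine ⟨Nat.findGreatest (fun i => G.dist v (W.getVert i) = M) n,
      Nat.findGreatest_spec (P := fun i => G.dist v (W.getVert i) = M) (m := t₀) ht₀n hM.symm,
      Nat.findGreatest_le n⟩
  have hM1 : 1 ≤ M := by
    have h1 := hstep 0 1 rfl (by omega)
    have := hbound 1 (by omega)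
    omega
  have ht1 : 1 ≤ t := by have := hdle t; omega
  have htn : t < n := by
    rcases Nat.lt_or_ge t n with h | h
    · exact h
    · exfalso; have heq : t = n := by omega
      rw [heq, hdn] at htM; omega
  obtain ⟨s, rfl⟩ : ∃ s, t = s + 1 := ⟨t - 1, by omega⟩
  have hds : G.dist v (W.getVert s) + 1 = G.dist v (W.getVert (s + 1)) := by
    rcases hstep s (s + 1) rfl (by omega) with h | h
    · exfalso; have := hbound s (by omega); omega
    · exact h
  have hdt1 : G.dist v (W.getVert (s + 2)) + 1 = G.dist v (W.getVert (s + 1)) := by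
    rcases hstep (s + 1) (s + 2) rfl (by omega) with h | h
    · exact h
    · exfalso; have := hbound (s + 2) (by omega); omega
  have hac : G.Adj (W.getVert s) (W.getVert (s + 1)) := W.adj_getVert_succ (by omega)
  have hbc : G.Adj (W.getVert (s + 2)) (W.getVert (s + 1)) :=
    (W.adj_getVert_succ (i := s + 1) (by omega)).symm
  refine ⟨s, by omega, ?_⟩
  exact aux_parent_unique hG (aux_reach v W s) (aux_reach v W (s + 2)) hac hbc
    (by omega) (by omega)

lemma aux_gap_four (hG : G.IsAcyclic) {v : V} (W : G.Walk v v) (hn : 4 ≤ W.length) :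
    ∃ i, i + 4 ≤ W.length ∧ W.getVert i = W.getVert (i + 4) := by
  classical
  set n := W.length with hn'
  have hstep : ∀ i j : ℕ, i + 1 = j → i < n →
      G.dist v (W.getVert j) + 1 = G.dist v (W.getVert i) ∨
      G.dist v (W.getVert i) + 1 = G.dist v (W.getVert j) := by
    intro i j hij hi
    have h := aux_dist_step hG (aux_reach v W i) (W.adj_getVert_succ hi)
    rwa [hij] at h
  have hdle : ∀ i, G.dist v (W.getVert i) ≤ i := aux_dist_le hG v W
  have hd0 : G.dist v (W.getVert 0) = 0 := by simp [Walk.getVert_zero]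
  have hdn : G.dist v (W.getVert n) = 0 := by
    rw [hn', W.getVert_length, SimpleGraph.dist_self]
  obtain ⟨t₀, ht₀, hmax⟩ := Finset.exists_max_image (Finset.range (n + 1))
    (fun i => G.dist v (W.getVert i)) ⟨0, by simp⟩
  have ht₀n : t₀ ≤ n := by have := Finset.mem_range.mp ht₀; omega
  obtain ⟨M, hM⟩ : ∃ M, M = G.dist v (W.getVert t₀) := ⟨_, rfl⟩
  have hbound : ∀ i, i ≤ n → G.dist v (W.getVert i) ≤ M := fun i hi => by
    rw [hM]; exact hmax i (Finset.mem_range.mpr (by omega))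
  by_cases hMsmall : M ≤ 1
  · have heven : ∀ i, 2 * i ≤ n → G.dist v (W.getVert (2 * i)) = 0 := by
      intro i
      induction i with
      | zero => intro _; simpa using hd0
      | succ m ih =>
        intro hle
        have h1 : G.dist v (W.getVert (2 * m)) = 0 := ih (by omega)
        have h2 := hstep (2 * m) (2 * m + 1) rfl (by omega)
        have h3 := hstep (2 * m + 1) (2 * (m + 1)) (by ring) (by omega)
        have h4 := hbound (2 * (m + 1)) (by omega)
        omega
    have h40 : G.dist v (W.getVert 4) = 0 := heven 2 (by omega)
    refine ⟨0, by omega, ?_⟩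
    rw [Walk.getVert_zero]
    exact (SimpleGraph.Reachable.dist_eq_zero_iff (aux_reach v W 4)).mp h40
  · have hM2 : 2 ≤ M := by omega
    obtain ⟨t, htM, htle, hgt⟩ : ∃ t, G.dist v (W.getVert t) = M ∧ t ≤ n ∧
        ∀ i, t < i → i ≤ n → G.dist v (W.getVert i) ≠ M := by
      refine ⟨Nat.findGreatest (fun i => G.dist v (W.getVert i) = M) n,
        Nat.findGreatest_spec (P := fun i => G.dist v (W.getVert i) = M) (m := t₀) ht₀n hM.symm,
        Nat.findGreatest_le n, fun i h1 h2 =>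
        Nat.findGreatest_is_greatest (P := fun i => G.dist v (W.getVert i) = M) h1 h2⟩
    have ht2 : 2 ≤ t := by have := hdle t; omega
    have htn : t < n := by
      rcases Nat.lt_or_ge t n with h | h
      · exact h
      · exfalso; have heq : t = n := by omega
        rw [heq, hdn] at htM; omega
    obtain ⟨u, rfl⟩ : ∃ u, t = u + 2 := ⟨t - 2, by omega⟩
    have hds : G.dist v (W.getVert (u + 1)) + 1 = G.dist v (W.getVert (u + 2)) := by
      rcases hstep (u + 1) (u + 2) rfl (by omega) with h | h
      · exfalso; have := hbound (u + 1) (by omega); omega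
      · exact h
    have hdt1 : G.dist v (W.getVert (u + 3)) + 1 = G.dist v (W.getVert (u + 2)) := by
      rcases hstep (u + 2) (u + 3) rfl (by omega) with h | h
      · exact h
      · exfalso; have := hbound (u + 3) (by omega); omega
    have ht3n : u + 3 < n := by
      rcases Nat.lt_or_ge (u + 3) n with h | h
      · exact h
      · exfalso; have heq : u + 3 = n := by omega
        rw [heq, hdn] at hdt1; omega
    have hdt2 : G.dist v (W.getVert (u + 4)) + 1 = G.dist v (W.getVert (u + 3)) := by
      rcases hstep (u + 3) (u + 4) rfl (by omega) with h | h
      · exact h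
      · exfalso
        exact hgt (u + 4) (by omega) (by omega) (by omega)
    have hadj12 : G.Adj (W.getVert (u + 1)) (W.getVert (u + 2)) :=
      W.adj_getVert_succ (by omega)
    have hadj32 : G.Adj (W.getVert (u + 3)) (W.getVert (u + 2)) :=
      (W.adj_getVert_succ (i := u + 2) (by omega)).symm
    have hpar1 : W.getVert (u + 1) = W.getVert (u + 3) :=
      aux_parent_unique hG (aux_reach v W (u + 1)) (aux_reach v W (u + 3)) hadj12 hadj32
        (by omega) (by omega)
    rcases hstep u (u + 1) rfl (by omega) with hcase | hcase
    · -- d u = M : deep case, use positions u-1 and u+3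
      have hduM : G.dist v (W.getVert u) = M := by omega
      have hu2 : 2 ≤ u := by have := hdle u; omega
      obtain ⟨w, rfl⟩ : ∃ w, u = w + 1 := ⟨u - 1, by omega⟩
      have hds' : G.dist v (W.getVert (w + 2)) + 1 = G.dist v (W.getVert (w + 3)) := hds
      have htM' : G.dist v (W.getVert (w + 3)) = M := htM
      have hdw : G.dist v (W.getVert w) + 1 = G.dist v (W.getVert (w + 1)) := by
        rcases hstep w (w + 1) rfl (by omega) with h | h
        · exfalso; have := hbound w (by omega); omega
        · exact h
      have hadjw : G.Adj (W.getVert w) (W.getVert (w + 1)) := W.adj_getVert_succ (by omega)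
      have hadj21 : G.Adj (W.getVert (w + 2)) (W.getVert (w + 1)) :=
        (W.adj_getVert_succ (i := w + 1) (by omega)).symm
      have hpar3 : W.getVert w = W.getVert (w + 2) :=
        aux_parent_unique hG (aux_reach v W w) (aux_reach v W (w + 2)) hadjw hadj21
          (by omega) (by omega)
      refine ⟨w, by omega, ?_⟩
      rw [hpar3]
      exact hpar1
    · -- shallow case: pair (u, u+4)
      have hadju : G.Adj (W.getVert u) (W.getVert (u + 1)) := W.adj_getVert_succ (by omega)
      have hadj4 : G.Adj (W.getVert (u + 4)) (W.getVert (u + 1)) := by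
        have h34 : G.Adj (W.getVert (u + 3)) (W.getVert (u + 4)) :=
          W.adj_getVert_succ (i := u + 3) (by omega)
        rw [← hpar1] at h34
        exact h34.symm
      refine ⟨u, by omega, ?_⟩
      exact aux_parent_unique hG (aux_reach v W u) (aux_reach v W (u + 4)) hadju hadj4
        (by omega) (by omega)

lemma aux_getVert_eq_support_get {u w : V} (p : G.Walk u w) :
    ∀ i (hi : i < p.support.length), p.getVert i = p.support.get ⟨i, hi⟩ := by
  induction p with
  | nil => intro i hi; simp [Walk.support_nil] at hi; subst hi; rfl
  | cons h q ih =>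
    intro i hi
    cases i with
    | zero => rfl
    | succ n =>
      rw [Walk.getVert_cons_succ]
      simp only [Walk.support_cons, List.length_cons] at hi ⊢
      rw [ih n (by omega)]
      rfl

/-- On a cycle, `getVert` is injective on `[1, length]`. -/
lemma aux_cycle_getVert_inj {v : V} {c : G.Walk v v} (hc : c.IsCycle) {a b : ℕ}
    (ha1 : 1 ≤ a) (ha2 : a ≤ c.length) (hb1 : 1 ≤ b) (hb2 : b ≤ c.length)
    (h : c.getVert a = c.getVert b) : a = b := by
  have hlen : c.support.length = c.length + 1 := c.length_support
  have htail : c.support.tail.Nodup := hc.support_nodup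
  obtain ⟨a', rfl⟩ : ∃ a', a = a' + 1 := ⟨a - 1, by omega⟩
  obtain ⟨b', rfl⟩ : ∃ b', b = b' + 1 := ⟨b - 1, by omega⟩
  rw [aux_getVert_eq_support_get c (a' + 1) (by omega),
      aux_getVert_eq_support_get c (b' + 1) (by omega)] at h
  have hta : c.support.get ⟨a' + 1, by omega⟩ = c.support.tail.get ⟨a', by
      rw [List.length_tail]; omega⟩ := by
    rw [List.get_tail]
  have htb : c.support.get ⟨b' + 1, by omega⟩ = c.support.tail.get ⟨b', by
      rw [List.length_tail]; omega⟩ := by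
    rw [List.get_tail]
  rw [hta, htb] at h
  have := List.Nodup.get_inj_iff htail |>.mp h
  simpa using this

/-- Iterate a closed walk `r` times. -/
def auxIterate {v : V} (c : G.Walk v v) : ℕ → G.Walk v v
  | 0 => Walk.nil
  | r + 1 => c.append (auxIterate c r)

lemma auxIterate_length {v : V} (c : G.Walk v v) (r : ℕ) :
    (auxIterate c r).length = r * c.length := by
  induction r with
  | zero => simp [auxIterate]
  | succ m ih => simp [auxIterate, Walk.length_append, ih]; ring

lemma auxIterate_getVert {v : V} (c : G.Walk v v) (hc : 0 < c.length) (r : ℕ) :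
    ∀ i, i ≤ r * c.length → (auxIterate c r).getVert i = c.getVert (i % c.length) := by
  induction r with
  | zero =>
    intro i hi
    have : i = 0 := by omega
    subst this
    simp [auxIterate, Walk.getVert_zero, Nat.zero_mod]
  | succ m ih =>
    intro i hi
    show (c.append (auxIterate c m)).getVert i = _
    rw [Walk.getVert_append]
    split_ifs with h
    · rw [Nat.mod_eq_of_lt h]
    · have h1 : c.length ≤ i := by omega
      rw [ih (i - c.length) (by
        have : (m + 1) * c.length = m * c.length + c.length := by ring
        omega)]
      congr 1
      conv_rhs => rw [show i = (i - c.length) + c.length by omega]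
      rw [Nat.add_mod_right]

/-- Engine: if iterating a cycle `r` times gives a walk of length `j*k` with no positive
multiple of `k` that is also a multiple of the cycle length below `r * length`, then
`G` is not `k`-repeating. -/
lemma aux_engine {v : V} {c : G.Walk v v} (hc : c.IsCycle) (k r j : ℕ)
    (hrm : r * c.length = j * k) (hj : 2 ≤ j)
    (hnol : ∀ l, 0 < l → k ∣ l → c.length ∣ l → r * c.length ≤ l)
    (hrep : IsKRepeating G k) : False := by
  have hm0 : 0 < c.length := by have := hc.three_le_length; omega
  have hlen : (auxIterate c r).length = r * c.length := auxIterate_length c r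
  obtain ⟨i, l, hl0, hkl, hlt, hil, heq⟩ := hrep v (auxIterate c r) j hj (by rw [hlen, hrm])
  rw [hlen] at hlt hil
  rw [auxIterate_getVert c hm0 r i (by omega),
      auxIterate_getVert c hm0 r (i + l) (by omega)] at heq
  -- convert to injectivity domain [1, m]
  have hmod1 : i % c.length < c.length := Nat.mod_lt _ hm0
  have hmod2 : (i + l) % c.length < c.length := Nat.mod_lt _ hm0
  have hv0 : c.getVert c.length = c.getVert 0 := by
    rw [Walk.getVert_length, Walk.getVert_zero]
  have heq' : c.getVert (if i % c.length = 0 then c.length else i % c.length) =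
      c.getVert (if (i + l) % c.length = 0 then c.length else (i + l) % c.length) := by
    split_ifs with h1 h2 h2
    · rfl
    · rw [hv0, ← h1]; exact heq
    · rw [hv0, ← h2]; exact heq
    · exact heq
  have hab := aux_cycle_getVert_inj hc
    (a := if i % c.length = 0 then c.length else i % c.length)
    (b := if (i + l) % c.length = 0 then c.length else (i + l) % c.length)
    (by split_ifs <;> omega) (by split_ifs <;> omega)
    (by split_ifs <;> omega) (by split_ifs <;> omega) heq'
  have hmodeq : i % c.length = (i + l) % c.length := by
    split_ifs at hab <;> omega
  have hdvd : c.length ∣ l := by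
    have h1 : i ≡ i + l [MOD c.length] := hmodeq
    have := (Nat.modEq_iff_dvd' (by omega)).mp h1
    simpa using this
  have := hnol l hl0 hkl hdvd
  omega

end Aux

/-- a graph is a forest (acyclic) iff it is `2`-repeating, iff it is
`4`-repeating. -/
theorem forest_iff_two_repeating_iff_four_repeating {V : Type*} (G : SimpleGraph V) :
    (G.IsAcyclic ↔ IsKRepeating G 2) ∧ (G.IsAcyclic ↔ IsKRepeating G 4) := by
  have fwd2 : G.IsAcyclic → IsKRepeating G 2 := by
    intro hG v W j hj hl
    obtain ⟨i, hi, heq⟩ := aux_gap_two hG W (by omega)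
    exact ⟨i, 2, by omega, ⟨1, rfl⟩, by omega, by omega, heq⟩
  have fwd4 : G.IsAcyclic → IsKRepeating G 4 := by
    intro hG v W j hj hl
    obtain ⟨i, hi, heq⟩ := aux_gap_four hG W (by omega)
    exact ⟨i, 4, by omega, ⟨1, rfl⟩, by omega, by omega, heq⟩
  have bwd2 : IsKRepeating G 2 → G.IsAcyclic := by
    intro hrep v c hc
    have hm3 : 3 ≤ c.length := hc.three_le_length
    by_cases h2 : 2 ∣ c.length
    · exact aux_engine hc 2 1 (c.length / 2) (by omega) (by omega)
        (fun l hl0 hkl hml => by have := Nat.le_of_dvd hl0 hml; omega) hrep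
    · refine aux_engine hc 2 2 c.length (by ring) (by omega) (fun l hl0 hkl hml => ?_) hrep
      obtain ⟨q, rfl⟩ := hml
      have hq0 : 0 < q := Nat.pos_of_ne_zero (fun h0 => by subst h0; simp at hl0)
      rcases (Nat.prime_two.dvd_mul.mp hkl) with h | h
      · exact absurd h h2
      · calc 2 * c.length = c.length * 2 := by ring
          _ ≤ c.length * q := Nat.mul_le_mul (le_refl _) (by omega)
  have bwd4 : IsKRepeating G 4 → G.IsAcyclic := by
    intro hrep v c hc
    have hm3 : 3 ≤ c.length := hc.three_le_length
    by_cases hodd : c.length % 2 = 1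
    · have hcop2 : Nat.Coprime 2 c.length :=
        (Nat.prime_two.coprime_iff_not_dvd).mpr (by omega)
      have hcop4 : Nat.Coprime 4 c.length := by
        have := Nat.Coprime.mul hcop2 hcop2
        norm_num at this ⊢
        exact this
      refine aux_engine hc 4 4 c.length (by ring) (by omega) (fun l hl0 hkl hml => ?_) hrep
      obtain ⟨q, rfl⟩ := hml
      have hq0 : 0 < q := Nat.pos_of_ne_zero (fun h0 => by subst h0; simp at hl0)
      have h4q : 4 ∣ q := hcop4.dvd_of_dvd_mul_left hkl
      calc 4 * c.length = c.length * 4 := by ring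
        _ ≤ c.length * q := Nat.mul_le_mul (le_refl _) (Nat.le_of_dvd hq0 h4q)
    · by_cases h42 : c.length % 4 = 2
      · refine aux_engine hc 4 2 (c.length / 2) (by omega) (by omega)
          (fun l hl0 hkl hml => ?_) hrep
        obtain ⟨q, rfl⟩ := hml
        obtain ⟨m', hm'⟩ : ∃ m', c.length = 2 * m' := ⟨c.length / 2, by omega⟩
        have hm'odd : m' % 2 = 1 := by omega
        have h2q : 2 ∣ m' * q := by
          have h4 : 2 * 2 ∣ 2 * (m' * q) := by
            rw [show 2 * (m' * q) = c.length * q by rw [hm']; ring]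
            exact (by norm_num : (4:ℕ) = 2 * 2) ▸ hkl
          exact (Nat.mul_dvd_mul_iff_left (by norm_num : (0:ℕ) < 2)).mp h4
        have hq0 : 0 < q := Nat.pos_of_ne_zero (fun h0 => by subst h0; simp at hl0)
        rcases (Nat.prime_two.dvd_mul.mp h2q) with h | h
        · omega
        · calc 2 * c.length = c.length * 2 := by ring
            _ ≤ c.length * q := Nat.mul_le_mul (le_refl _) (by omega)
      · by_cases h44 : c.length = 4
        · -- bespoke walk on the 4-cycle
          have hv40 : c.getVert 4 = c.getVert 0 := by
            rw [show (4:ℕ) = c.length from h44.symm, Walk.getVert_length, Walk.getVert_zero]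
          have hv02 : c.getVert 0 ≠ c.getVert 2 := by
            intro h
            have := aux_cycle_getVert_inj hc (a := 4) (b := 2) (by omega) (by omega)
              (by omega) (by omega) (by rw [hv40, h])
            omega
          have hv13 : c.getVert 1 ≠ c.getVert 3 := by
            intro h
            have := aux_cycle_getVert_inj hc (a := 1) (b := 3) (by omega) (by omega)
              (by omega) (by omega) h
            omega
          have h01 : G.Adj (c.getVert 0) (c.getVert 1) := c.adj_getVert_succ (by omega)
          have h12 : G.Adj (c.getVert 1) (c.getVert 2) := c.adj_getVert_succ (by omega)
          have h23 : G.Adj (c.getVert 2) (c.getVert 3) := c.adj_getVert_succ (by omega)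
          have h30 : G.Adj (c.getVert 3) (c.getVert 0) := by
            have h34 := c.adj_getVert_succ (i := 3) (by omega)
            rwa [hv40] at h34
          -- the walk  v0 v1 v2 v3 v2 v3 v0 v1 v0
          set W₀ : G.Walk (c.getVert 0) (c.getVert 0) :=
            Walk.cons h01 (Walk.cons h12 (Walk.cons h23 (Walk.cons h23.symm (Walk.cons h23
              (Walk.cons h30 (Walk.cons h01 (Walk.cons h01.symm Walk.nil))))))) with hW₀
          set W : G.Walk v v := W₀.copy (c.getVert_zero) (c.getVert_zero) with hW
          have hWlen : W.length = 8 := by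
            simp [hW, hW₀]
          obtain ⟨i, l, hl0, hkl, hlt, hil, heq⟩ := hrep v W 2 (by omega) (by omega)
          rw [hWlen] at hlt hil
          have hl4 : l = 4 := by omega
          subst hl4
          have hgv : ∀ n, W.getVert n = W₀.getVert n := fun n => by
            rw [hW]; exact Walk.getVert_copy _ _ _ _
          rw [hgv, hgv] at heq
          have hi4 : i ≤ 4 := by omega
          interval_cases i
          · exact hv02 heq
          · exact hv13 heq
          · exact hv02 heq.symm
          · exact hv13 heq.symm
          · exact hv02 heq.symm
        · have h40 : c.length % 4 = 0 := by omega
          have h8 : 8 ≤ c.length := by omega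
          exact aux_engine hc 4 1 (c.length / 4) (by omega) (by omega)
            (fun l hl0 hkl hml => by have := Nat.le_of_dvd hl0 hml; omega) hrep
  exact ⟨⟨fwd2, bwd2⟩, ⟨fwd4, bwd4⟩⟩
end

section
/- The tree T* consisting of a path on five vertices together with a path of length two attached to the centre vertex is not 6-repeating: there is a closed walk of length 12 on T* with no proper closed subwalk of length a positive multiple of 6. -/
open SimpleGraph

/-- The tree `T*`: a path on five vertices `0-1-2-3-4` with a path `2-5-6` of length two
attached to the centre vertex `2`. -/
def Tstar : SimpleGraph (Fin 7) :=
  SimpleGraph.fromEdgeSet {s(0, 1), s(1, 2), s(2, 3), s(3, 4), s(2, 5), s(5, 6)}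

lemma Tstar_adj (a b : Fin 7)
    (h : s(a, b) ∈ ({s(0, 1), s(1, 2), s(2, 3), s(3, 4), s(2, 5), s(5, 6)} :
      Set (Sym2 (Fin 7)))) (hne : a ≠ b) : Tstar.Adj a b := by
  exact ⟨h, hne⟩

def Wstar : Tstar.Walk 0 0 :=
  .cons (Tstar_adj 0 1 (by simp) (by decide))
  (.cons (Tstar_adj 1 2 (by simp) (by decide))
  (.cons (Tstar_adj 2 3 (by simp) (by decide))
  (.cons (Tstar_adj 3 4 (by simp) (by decide))
  (.cons (Tstar_adj 4 3 (by simp [Sym2.eq_swap]) (by decide))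
  (.cons (Tstar_adj 3 2 (by simp [Sym2.eq_swap]) (by decide))
  (.cons (Tstar_adj 2 5 (by simp) (by decide))
  (.cons (Tstar_adj 5 6 (by simp) (by decide))
  (.cons (Tstar_adj 6 5 (by simp [Sym2.eq_swap]) (by decide))
  (.cons (Tstar_adj 5 2 (by simp [Sym2.eq_swap]) (by decide))
  (.cons (Tstar_adj 2 1 (by simp [Sym2.eq_swap]) (by decide))
  (.cons (Tstar_adj 1 0 (by simp [Sym2.eq_swap]) (by decide))
  .nil)))))))))))

lemma Wstar_len : Wstar.length = 12 := rfl

lemma Wstar_key : ∀ i l : ℕ, 0 < l → 6 ∣ l → l < 12 → i + l ≤ 12 →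
    Wstar.getVert i ≠ Wstar.getVert (i + l) := by
  intro i l hl hdvd hlt hle
  have hl6 : l = 6 := by omega
  subst hl6
  have hi : i ≤ 6 := by omega
  interval_cases i <;> decide

/-- `T*` is not `6`-repeating; indeed there is a closed walk of length `12`
on `T*` with no proper closed subwalk of length a positive multiple of `6`. -/
theorem Tstar_not_six_repeating :
    ¬ IsKRepeating Tstar 6 ∧
    ∃ (v : Fin 7) (W : Tstar.Walk v v), W.length = 12 ∧
      ∀ i l : ℕ, 0 < l → 6 ∣ l → l < 12 → i + l ≤ 12 →
        W.getVert i ≠ W.getVert (i + l) := by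
  constructor
  · intro h
    obtain ⟨i, l, hl, hdvd, hlt, hle, heq⟩ := h 0 Wstar 2 le_rfl rfl
    exact Wstar_key i l hl hdvd (by simpa [Wstar_len] using hlt) (by simpa [Wstar_len] using hle) heq
  · exact ⟨0, Wstar, Wstar_len, Wstar_key⟩
end

section
/- A forest is a caterpillar forest if and only if it contains no subgraph isomorphic to the tree T* (a path on five vertices with a path of length two attached to its centre vertex). -/
open SimpleGraph

/-- `H` is a path graph: its vertices can be listed without repetition so that adjacency
holds exactly between consecutive members of the list. -/
def IsPathGraph {W : Type*} (H : SimpleGraph W) : Prop :=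
  ∃ l : List W, l.Nodup ∧ (∀ w, w ∈ l) ∧
    ∀ a b, H.Adj a b ↔ ∃ i : ℕ, i + 1 < l.length ∧
      ((l[i]? = some a ∧ l[i + 1]? = some b) ∨
       (l[i]? = some b ∧ l[i + 1]? = some a))

/-- A caterpillar: a tree which becomes a path upon removing its leaves. -/
def IsCaterpillar {V : Type*} (G : SimpleGraph V) : Prop :=
  G.IsTree ∧ IsPathGraph (G.induce {v : V | 2 ≤ (G.neighborSet v).ncard})

/-- A caterpillar forest: each connected component is a caterpillar. -/
def IsCaterpillarForest {V : Type*} (G : SimpleGraph V) : Prop :=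
  ∀ c : G.ConnectedComponent, IsCaterpillar (G.induce c.supp)

section Helpers

variable {W : Type*} {H : SimpleGraph W}

lemma induceAdj {s : Set W} {a b : ↥s} : (H.induce s).Adj a b ↔ H.Adj ↑a ↑b := Iff.rfl

lemma tstar_adj_iff (a b : Fin 7) : Tstar.Adj a b ↔
    ((s(a,b) = s(0,1) ∨ s(a,b) = s(1,2) ∨ s(a,b) = s(2,3) ∨ s(a,b) = s(3,4) ∨
      s(a,b) = s(2,5) ∨ s(a,b) = s(5,6)) ∧ a ≠ b) := by
  simp only [Tstar, fromEdgeSet_adj, Set.mem_insert_iff, Set.mem_singleton_iff]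

theorem getElem?_injective' {α : Type*} {l : List α} {i j : ℕ} (h₀ : i < l.length)
    (h₁ : l.Nodup) (h₂ : l[i]? = l[j]?) : i = j :=
  (List.getElem?_inj h₀ h₁).mp h₂

lemma support_get? {u v : W} (p : H.Walk u v) :
    ∀ n, n ≤ p.length → p.support[n]? = some (p.getVert n) := by
  induction p with
  | nil =>
    intro n hn
    simp only [SimpleGraph.Walk.length_nil, Nat.le_zero] at hn
    subst hn
    simp [SimpleGraph.Walk.getVert_zero]
  | cons h q ih =>
    intro n hn
    cases n with
    | zero => simp [SimpleGraph.Walk.support_cons]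
    | succ m =>
      rw [SimpleGraph.Walk.support_cons, List.getElem?_cons_succ,
        SimpleGraph.Walk.getVert_cons_succ]
      exact ih m (by simpa [SimpleGraph.Walk.length_cons] using hn)

lemma singleton_isPath {a b : W} (h : H.Adj a b) : (SimpleGraph.Walk.cons h .nil).IsPath := by
  rw [SimpleGraph.Walk.cons_isPath_iff]
  exact ⟨SimpleGraph.Walk.IsPath.nil, by simp [h.ne]⟩

lemma endpoint_eq_of_length_zero {a b : W} (q : H.Walk a b) (h : q.length = 0) : a = b := by
  cases q with
  | nil => rfl
  | cons _ _ => simp [SimpleGraph.Walk.length_cons] at h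

/-- `a` and `b` occur consecutively (in this order) in `l`. -/
def Consec {α : Type*} (l : List α) (a b : α) : Prop :=
  ∃ i : ℕ, l[i]? = some a ∧ l[i + 1]? = some b

lemma consec_cons {α : Type*} {l : List α} {a b x : α} (h : Consec l a b) :
    Consec (x :: l) a b := by
  obtain ⟨i, h1, h2⟩ := h
  exact ⟨i + 1, by simpa [List.getElem?_cons_succ] using h1, by simpa [List.getElem?_cons_succ] using h2⟩

lemma chain'_get? {α : Type*} {R : α → α → Prop} {l : List α} (h : List.IsChain R l) {i : ℕ}
    {a b : α} (h1 : l[i]? = some a) (h2 : l[i+1]? = some b) : R a b := by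
  obtain ⟨hi1, ha⟩ := List.getElem?_eq_some_iff.mp h1
  obtain ⟨hi2, hb⟩ := List.getElem?_eq_some_iff.mp h2
  subst ha hb
  exact List.isChain_iff_getElem.mp h i (by omega)

lemma adj_of_consec {u v : W} (p : H.Walk u v) {a b : W} (h : Consec p.support a b) :
    H.Adj a b := by
  obtain ⟨i, h1, h2⟩ := h
  exact chain'_get? p.isChain_adj_support h1 h2

end Helpers
section TreeLemmas

variable {W : Type*} {H : SimpleGraph W}

lemma adj_consec (hT : H.IsTree) {u v a b : W} (p : H.Walk u v) (hp : p.IsPath)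
    (ha : a ∈ p.support) (hb : b ∈ p.support) (hab : H.Adj a b) :
    Consec p.support a b ∨ Consec p.support b a := by
  classical
  revert hp ha hb
  induction p with
  | nil =>
    intro hp ha hb
    simp only [SimpleGraph.Walk.support_nil, List.mem_singleton] at ha hb
    exact absurd (ha.trans hb.symm) hab.ne
  | @cons u' w' v' hadj q ih =>
    intro hp ha hb
    simp only [SimpleGraph.Walk.support_cons] at ha hb ⊢
    have hq : q.IsPath := hp.of_cons
    have hu : u' ∉ q.support := ((SimpleGraph.Walk.cons_isPath_iff hadj q).mp hp).2
    rcases List.mem_cons.mp ha with rfl | haq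
    · rcases List.mem_cons.mp hb with rfl | hbq
      · exact absurd rfl hab.ne
      · by_cases hbw : b = w'
        · subst hbw
          refine Or.inl ⟨0, rfl, ?_⟩
          rw [List.getElem?_cons_succ, SimpleGraph.Walk.support_eq_cons]
          rfl
        · exfalso
          have hW1 : (SimpleGraph.Walk.cons hab .nil).IsPath := singleton_isPath hab
          have htk : (q.takeUntil b hbq).IsPath := hq.takeUntil hbq
          have hW2 : (SimpleGraph.Walk.cons hadj (q.takeUntil b hbq)).IsPath := by
            rw [SimpleGraph.Walk.cons_isPath_iff]
            exact ⟨htk, fun hmem => hu (SimpleGraph.Walk.support_takeUntil_subset _ _ hmem)⟩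
          have heq := (hT.existsUnique_path a b).unique hW1 hW2
          have hlen := congrArg SimpleGraph.Walk.length heq
          simp only [SimpleGraph.Walk.length_cons, SimpleGraph.Walk.length_nil] at hlen
          exact hbw (endpoint_eq_of_length_zero (q.takeUntil b hbq) (by omega)).symm
    · rcases List.mem_cons.mp hb with rfl | hbq
      · by_cases haw : a = w'
        · subst haw
          refine Or.inr ⟨0, rfl, ?_⟩
          rw [List.getElem?_cons_succ, SimpleGraph.Walk.support_eq_cons]
          rfl
        · exfalso
          have hW1 : (SimpleGraph.Walk.cons hab.symm .nil).IsPath := singleton_isPath hab.symm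
          have htk : (q.takeUntil a haq).IsPath := hq.takeUntil haq
          have hW2 : (SimpleGraph.Walk.cons hadj (q.takeUntil a haq)).IsPath := by
            rw [SimpleGraph.Walk.cons_isPath_iff]
            exact ⟨htk, fun hmem => hu (SimpleGraph.Walk.support_takeUntil_subset _ _ hmem)⟩
          have heq := (hT.existsUnique_path b a).unique hW1 hW2
          have hlen := congrArg SimpleGraph.Walk.length heq
          simp only [SimpleGraph.Walk.length_cons, SimpleGraph.Walk.length_nil] at hlen
          exact haw (endpoint_eq_of_length_zero (q.takeUntil a haq) (by omega)).symm
      · rcases ih hq haq hbq with h | h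
        · exact Or.inl (consec_cons h)
        · exact Or.inr (consec_cons h)

lemma exists_path_sub {u v a b : W} (p : H.Walk u v) (hp : p.IsPath)
    (ha : a ∈ p.support) (hb : b ∈ p.support) :
    ∃ q : H.Walk a b, q.IsPath ∧ ∀ z ∈ q.support, z ∈ p.support := by
  classical
  have hb' : b ∈ (p.takeUntil a ha).support ∨ b ∈ (p.dropUntil a ha).support := by
    conv_lhs at hb => rw [← p.take_spec ha]
    rw [SimpleGraph.Walk.support_append] at hb
    rcases List.mem_append.mp hb with h | h
    · exact Or.inl h
    · exact Or.inr (List.mem_of_mem_tail h)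
  rcases hb' with h | h
  · have hmem : b ∈ (p.takeUntil a ha).reverse.support := by
      rw [SimpleGraph.Walk.support_reverse]; exact List.mem_reverse.mpr h
    refine ⟨(p.takeUntil a ha).reverse.takeUntil b hmem, (hp.takeUntil ha).reverse.takeUntil hmem,
      fun z hz => ?_⟩
    have h1 := SimpleGraph.Walk.support_takeUntil_subset _ hmem hz
    rw [SimpleGraph.Walk.support_reverse] at h1
    exact SimpleGraph.Walk.support_takeUntil_subset _ ha (List.mem_reverse.mp h1)
  · refine ⟨(p.dropUntil a ha).takeUntil b h, (hp.dropUntil ha).takeUntil h, fun z hz => ?_⟩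
    exact SimpleGraph.Walk.support_dropUntil_subset _ ha
      (SimpleGraph.Walk.support_takeUntil_subset _ h hz)

lemma pathGraph_no_three {α : Type*} {K : SimpleGraph α} (hK : IsPathGraph K)
    {x a b c : α} (ha : K.Adj x a) (hb : K.Adj x b) (hc : K.Adj x c)
    (hab : a ≠ b) (hac : a ≠ c) (hbc : b ≠ c) : False := by
  obtain ⟨l, hnd, -, hiff⟩ := hK
  obtain ⟨i0, hi0len, h0⟩ := (hiff x a).mp ha
  have hxpos : ∃ j : ℕ, l[j]? = some x := by
    rcases h0 with ⟨h, -⟩ | ⟨-, h⟩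
    exacts [⟨i0, h⟩, ⟨i0 + 1, h⟩]
  obtain ⟨jx, hjx⟩ := hxpos
  have slot : ∀ y, K.Adj x y → l[jx + 1]? = some y ∨ (l[jx - 1]? = some y ∧ 1 ≤ jx) := by
    intro y hy
    obtain ⟨i, hilen, hcase⟩ := (hiff x y).mp hy
    rcases hcase with ⟨h1, h2⟩ | ⟨h1, h2⟩
    · left
      have hi : i = jx := getElem?_injective' (List.getElem?_eq_some_iff.mp h1).1 hnd (h1.trans hjx.symm)
      rwa [hi] at h2
    · right
      have hi : i + 1 = jx := getElem?_injective' (List.getElem?_eq_some_iff.mp h2).1 hnd (h2.trans hjx.symm)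
      refine ⟨?_, by omega⟩
      rw [← hi]
      simpa using h1
  rcases slot a ha with h1 | ⟨h1, -⟩ <;> rcases slot b hb with h2 | ⟨h2, -⟩ <;>
    rcases slot c hc with h3 | ⟨h3, -⟩
  all_goals first
    | exact hab (Option.some.inj (h1.symm.trans h2))
    | exact hac (Option.some.inj (h1.symm.trans h3))
    | exact hbc (Option.some.inj (h2.symm.trans h3))

end TreeLemmas
private lemma pmap_mk_get? {α : Type*} {S : Set α} (l : List α) (h : ∀ a ∈ l, a ∈ S)
    (n : ℕ) (x : ↥S) : (l.pmap Subtype.mk h)[n]? = some x ↔ l[n]? = some ↑x := by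
  induction l generalizing n with
  | nil => simp [List.pmap]
  | cons a l ih =>
    cases n with
    | zero => simp [List.pmap, Subtype.ext_iff]
    | succ m =>
      simp only [List.pmap, List.getElem?_cons_succ]
      exact ih _ _

private lemma walk_to_support_adj {W : Type*} {H : SimpleGraph W} {u v : W} {p : H.Walk u v}
    (hE : ∀ x y m, x ∉ p.support → y ∉ p.support → H.Adj x y → m ∈ p.support →
      H.Adj y m → False) :
    ∀ {x z : W} (_ : H.Walk x z), z ∈ p.support → x ∉ p.support →
      ∃ m, m ∈ p.support ∧ H.Adj x m := by
  intro x z r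
  induction r with
  | nil => intro hz hx; exact absurd hz hx
  | @cons a b c h q ih =>
    intro hz hx
    by_cases hy : b ∈ p.support
    · exact ⟨b, hy, h⟩
    · obtain ⟨m, hm, hym⟩ := ih hz hy
      exact absurd hym fun hc => hE a b m hx hy h hm hc

open SimpleGraph.Walk in
private lemma spine_isPathGraph {W : Type*} [Fintype W] {H : SimpleGraph W} (hT : H.IsTree)
    (noT : ¬ ∃ f : Fin 7 → W, Function.Injective f ∧
      ∀ a b : Fin 7, Tstar.Adj a b → H.Adj (f a) (f b)) :
    IsPathGraph (H.induce {v : W | 2 ≤ (H.neighborSet v).ncard}) := by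
  classical
  set S : Set W := {v : W | 2 ≤ (H.neighborSet v).ncard} with hSdef
  have hSmem : ∀ z : W, z ∈ S ↔ 2 ≤ (H.neighborSet z).ncard := fun z => Iff.rfl
  obtain ⟨w0⟩ : Nonempty W := hT.1.nonempty
  have hmaxlen : ∃ (x y : W) (q : H.Walk x y), q.IsPath ∧
      ∀ (x' y' : W) (q' : H.Walk x' y'), q'.IsPath → q'.length ≤ q.length := by
    obtain ⟨x, y, q, hq, hql⟩ :=
      Nat.findGreatest_spec
        (P := fun n => ∃ (x y : W) (q : H.Walk x y), q.IsPath ∧ q.length = n)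
        (n := Fintype.card W) (Nat.zero_le _)
        ⟨w0, w0, .nil, SimpleGraph.Walk.IsPath.nil, rfl⟩
    refine ⟨x, y, q, hq, fun x' y' q' hq' => ?_⟩
    rw [hql]
    exact Nat.le_findGreatest
      (P := fun n => ∃ (x y : W) (q : H.Walk x y), q.IsPath ∧ q.length = n)
      hq'.length_lt.le ⟨x', y', q', hq', rfl⟩
  obtain ⟨u, v, p, hp, hmax'⟩ := hmaxlen
  obtain ⟨N, hlen⟩ : ∃ N, p.length = N := ⟨_, rfl⟩
  have hmax : ∀ {x y : W} (q : H.Walk x y), q.IsPath → q.length ≤ N := by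
    intro x y q hq
    rw [← hlen]
    exact hmax' _ _ q hq
  -- index bookkeeping
  have hget : ∀ i, i ≤ N → p.support[i]? = some (p.getVert i) := by
    intro i hi
    exact support_get? p i (by omega)
  have hinj : ∀ i j, i ≤ N → j ≤ N → p.getVert i = p.getVert j → i = j := by
    intro i j hi hj hij
    refine getElem?_injective' ?_ hp.support_nodup ((hget i hi).trans ?_)
    · rw [SimpleGraph.Walk.length_support]; omega
    · rw [hij, ← hget j hj]
  have hmem : ∀ z, z ∈ p.support ↔ ∃ i, i ≤ N ∧ p.getVert i = z := by
    intro z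
    rw [SimpleGraph.Walk.mem_support_iff_exists_getVert]
    constructor
    · rintro ⟨i, h1, h2⟩; exact ⟨i, by omega, h1⟩
    · rintro ⟨i, h1, h2⟩; exact ⟨i, h2, by omega⟩
  have hadjk : ∀ i, i < N → H.Adj (p.getVert i) (p.getVert (i+1)) := by
    intro i hi
    exact p.adj_getVert_succ (by omega)
  -- no neighbors of the endpoints outside the support
  have hnadj_u : ∀ x, x ∉ p.support → ¬ H.Adj x u := by
    intro x hx hadj
    have hq : (SimpleGraph.Walk.cons hadj p).IsPath := by
      rw [SimpleGraph.Walk.cons_isPath_iff]; exact ⟨hp, hx⟩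
    have := hmax _ hq
    rw [SimpleGraph.Walk.length_cons] at this
    omega
  have hnadj_v : ∀ x, x ∉ p.support → ¬ H.Adj x v := by
    intro x hx hadj
    have hq : (SimpleGraph.Walk.cons hadj p.reverse).IsPath := by
      rw [SimpleGraph.Walk.cons_isPath_iff]
      refine ⟨hp.reverse, ?_⟩
      rw [SimpleGraph.Walk.support_reverse]
      exact fun hc => hx (List.mem_reverse.mp hc)
    have := hmax _ hq
    rw [SimpleGraph.Walk.length_cons, SimpleGraph.Walk.length_reverse] at this
    omega
  -- the key exclusion using T*
  have hE : ∀ x y m, x ∉ p.support → y ∉ p.support → H.Adj x y → m ∈ p.support →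
      H.Adj y m → False := by
    intro x y m hx hy hxy hm hym
    obtain ⟨i, hiN, him⟩ := (hmem m).mp hm
    have htd := p.take_spec hm
    have hlen_add : (p.takeUntil m hm).length + (p.dropUntil m hm).length = N := by
      rw [← SimpleGraph.Walk.length_append, htd]; exact hlen
    have htake_len : (p.takeUntil m hm).length = i := by
      have h1 : p.getVert (p.takeUntil m hm).length = m := by
        have h2 := SimpleGraph.Walk.getVert_append (p.takeUntil m hm) (p.dropUntil m hm)
          (p.takeUntil m hm).length
        rw [htd] at h2
        simpa using h2
      exact hinj _ i (by omega) hiN (h1.trans him.symm)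
    by_cases hle : i ≤ 1
    · -- extend beyond u
      have hdp : (p.dropUntil m hm).IsPath := hp.dropUntil hm
      have hyd : y ∉ (p.dropUntil m hm).support :=
        fun hc => hy (SimpleGraph.Walk.support_dropUntil_subset _ _ hc)
      have h2 : (SimpleGraph.Walk.cons hym (p.dropUntil m hm)).IsPath := by
        rw [SimpleGraph.Walk.cons_isPath_iff]; exact ⟨hdp, hyd⟩
      have h3 : (SimpleGraph.Walk.cons hxy (SimpleGraph.Walk.cons hym (p.dropUntil m hm))).IsPath := by
        rw [SimpleGraph.Walk.cons_isPath_iff]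
        refine ⟨h2, ?_⟩
        rw [SimpleGraph.Walk.support_cons]
        intro hc
        rcases List.mem_cons.mp hc with h | h
        · exact hxy.ne h
        · exact hx (SimpleGraph.Walk.support_dropUntil_subset _ _ h)
      have := hmax _ h3
      simp only [SimpleGraph.Walk.length_cons] at this
      omega
    by_cases hge : N - 1 ≤ i
    · -- extend beyond v
      have hdp : (p.takeUntil m hm).reverse.IsPath := (hp.takeUntil hm).reverse
      have hyd : y ∉ (p.takeUntil m hm).reverse.support := by
        rw [SimpleGraph.Walk.support_reverse]
        exact fun hc => hy (SimpleGraph.Walk.support_takeUntil_subset _ _ (List.mem_reverse.mp hc))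
      have h2 : (SimpleGraph.Walk.cons hym (p.takeUntil m hm).reverse).IsPath := by
        rw [SimpleGraph.Walk.cons_isPath_iff]; exact ⟨hdp, hyd⟩
      have h3 : (SimpleGraph.Walk.cons hxy
          (SimpleGraph.Walk.cons hym (p.takeUntil m hm).reverse)).IsPath := by
        rw [SimpleGraph.Walk.cons_isPath_iff]
        refine ⟨h2, ?_⟩
        rw [SimpleGraph.Walk.support_cons]
        intro hc
        rcases List.mem_cons.mp hc with h | h
        · exact hxy.ne h
        · rw [SimpleGraph.Walk.support_reverse] at h
          exact hx (SimpleGraph.Walk.support_takeUntil_subset _ _ (List.mem_reverse.mp h))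
      have := hmax _ h3
      simp only [SimpleGraph.Walk.length_cons, SimpleGraph.Walk.length_reverse] at this
      omega
    · -- interior : build T*
      obtain ⟨j, rfl⟩ : ∃ j, i = j + 2 := ⟨i - 2, by omega⟩
      have hj4 : j + 4 ≤ N := by omega
      apply noT
      set F : Fin 7 → W := fun t =>
        if t.val ≤ 4 then p.getVert (j + t.val) else if t.val = 5 then y else x with hF
      have hyne : ∀ k, k ≤ N → p.getVert k ≠ y := fun k hk he => hy ((hmem y).mpr ⟨k, hk, he⟩)
      have hxne : ∀ k, k ≤ N → p.getVert k ≠ x := fun k hk he => hx ((hmem x).mpr ⟨k, hk, he⟩)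
      have hgv : ∀ k k', k ≤ 4 → k' ≤ 4 → k ≠ k' → p.getVert (j + k) ≠ p.getVert (j + k') :=
        fun k k' hk hk' hne he => hne (by have := hinj (j+k) (j+k') (by omega) (by omega) he; omega)
      have d01 := hgv 0 1 (by omega) (by omega) (by omega)
      have d02 := hgv 0 2 (by omega) (by omega) (by omega)
      have d03 := hgv 0 3 (by omega) (by omega) (by omega)
      have d04 := hgv 0 4 (by omega) (by omega) (by omega)
      have d12 := hgv 1 2 (by omega) (by omega) (by omega)
      have d13 := hgv 1 3 (by omega) (by omega) (by omega)
      have d14 := hgv 1 4 (by omega) (by omega) (by omega)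
      have d23 := hgv 2 3 (by omega) (by omega) (by omega)
      have d24 := hgv 2 4 (by omega) (by omega) (by omega)
      have d34 := hgv 3 4 (by omega) (by omega) (by omega)
      have dy0 := hyne (j+0) (by omega)
      have dy1 := hyne (j+1) (by omega)
      have dy2 := hyne (j+2) (by omega)
      have dy3 := hyne (j+3) (by omega)
      have dy4 := hyne (j+4) (by omega)
      have dx0 := hxne (j+0) (by omega)
      have dx1 := hxne (j+1) (by omega)
      have dx2 := hxne (j+2) (by omega)
      have dx3 := hxne (j+3) (by omega)
      have dx4 := hxne (j+4) (by omega)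
      have dxy : y ≠ x := hxy.ne'
      have hymGV : H.Adj y (p.getVert (j + 2)) := him ▸ hym
      have A01 := hadjk (j+0) (by omega)
      have A12 := hadjk (j+1) (by omega)
      have A23 := hadjk (j+2) (by omega)
      have A34 := hadjk (j+3) (by omega)
      have hFle : ∀ r : Fin 7, r.val ≤ 4 → F r = p.getVert (j + r.val) := by
        intro r hr; simp [hF, hr]
      have hF5 : ∀ r : Fin 7, r.val = 5 → F r = y := by
        intro r hr; simp [hF, hr]
      have hF6 : ∀ r : Fin 7, r.val = 6 → F r = x := by
        intro r hr; simp [hF, hr]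
      have e0 : F 0 = p.getVert (j + 0) := hFle 0 (by decide)
      have e1 : F 1 = p.getVert (j + 1) := hFle 1 (by decide)
      have e2 : F 2 = p.getVert (j + 2) := hFle 2 (by decide)
      have e3 : F 3 = p.getVert (j + 3) := hFle 3 (by decide)
      have e4 : F 4 = p.getVert (j + 4) := hFle 4 (by decide)
      have e5 : F 5 = y := hF5 5 (by decide)
      have e6 : F 6 = x := hF6 6 (by decide)
      refine ⟨F, ?_, ?_⟩
      · intro s t hst
        have hs7 : s.val < 7 := s.isLt
        have ht7 : t.val < 7 := t.isLt
        by_cases hs4 : s.val ≤ 4 <;> by_cases ht4 : t.val ≤ 4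
        · rw [hFle s hs4, hFle t ht4] at hst
          have := hinj (j + s.val) (j + t.val) (by omega) (by omega) hst
          exact Fin.ext (by omega)
        · exfalso
          rcases (by omega : t.val = 5 ∨ t.val = 6) with ht | ht
          · rw [hFle s hs4, hF5 t ht] at hst; exact hyne _ (by omega) hst
          · rw [hFle s hs4, hF6 t ht] at hst; exact hxne _ (by omega) hst
        · exfalso
          rcases (by omega : s.val = 5 ∨ s.val = 6) with hs | hs
          · rw [hF5 s hs, hFle t ht4] at hst; exact hyne _ (by omega) hst.symm
          · rw [hF6 s hs, hFle t ht4] at hst; exact hxne _ (by omega) hst.symm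
        · rcases (by omega : s.val = 5 ∨ s.val = 6) with hs | hs <;>
            rcases (by omega : t.val = 5 ∨ t.val = 6) with ht | ht
          · exact Fin.ext (by omega)
          · rw [hF5 s hs, hF6 t ht] at hst; exact absurd hst dxy
          · rw [hF6 s hs, hF5 t ht] at hst; exact absurd hst.symm dxy
          · exact Fin.ext (by omega)
      · intro s t hst
        rw [tstar_adj_iff] at hst
        obtain ⟨hor, -⟩ := hst
        rcases hor with h | h | h | h | h | h <;> rw [Sym2.eq_iff] at h <;>
          rcases h with ⟨rfl, rfl⟩ | ⟨rfl, rfl⟩ <;>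
          simp only [e0, e1, e2, e3, e4, e5, e6]
        exacts [A01, A01.symm, A12, A12.symm, A23, A23.symm, A34, A34.symm,
          hymGV.symm, hymGV, hxy.symm, hxy]
  have hD : ∀ x, x ∉ p.support → ∃ m, m ∈ p.support ∧ H.Adj x m := by
    intro x hx
    obtain ⟨r⟩ := hT.1.preconnected x u
    exact walk_to_support_adj hE r p.start_mem_support hx
  have hOff : ∀ x z, x ∉ p.support → H.Adj x z → z ∈ p.support := by
    intro x z hx hxz
    by_contra hz
    obtain ⟨m, hm, hzm⟩ := hD z hz
    exact hE x z m hx hz hxz hm hzm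
  have hOffU : ∀ x z1 z2, x ∉ p.support → H.Adj x z1 → H.Adj x z2 → z1 = z2 := by
    intro x z1 z2 hx h1 h2
    by_contra hne
    obtain ⟨q, hq, hqsub⟩ := exists_path_sub p hp (hOff x z1 hx h1) (hOff x z2 hx h2)
    have hW2 : (SimpleGraph.Walk.cons h1 q).IsPath := by
      rw [SimpleGraph.Walk.cons_isPath_iff]
      exact ⟨hq, fun hc => hx (hqsub _ hc)⟩
    have hW1 : (SimpleGraph.Walk.cons h2 .nil).IsPath := singleton_isPath h2
    have heq := (hT.existsUnique_path x z2).unique hW1 hW2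
    have hlenq := congrArg SimpleGraph.Walk.length heq
    simp only [SimpleGraph.Walk.length_cons, SimpleGraph.Walk.length_nil] at hlenq
    exact hne (endpoint_eq_of_length_zero q (by omega))
  have hu_only : ∀ z, H.Adj u z → z = p.getVert 1 := by
    intro z hz
    have hzs : z ∈ p.support := by
      by_contra hzs
      exact hnadj_u z hzs hz.symm
    rcases adj_consec hT p hp p.start_mem_support hzs hz with ⟨i, h1, h2⟩ | ⟨i, h1, h2⟩
    · have hu0 : p.support[0]? = some u := by
        rw [hget 0 (Nat.zero_le _), SimpleGraph.Walk.getVert_zero]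
      have hi0 : i = 0 :=
        getElem?_injective' (List.getElem?_eq_some_iff.mp h1).1 hp.support_nodup (h1.trans hu0.symm)
      subst hi0
      have h1N : 1 ≤ N := by
        have := (List.getElem?_eq_some_iff.mp h2).1
        rw [SimpleGraph.Walk.length_support] at this
        omega
      have := (hget 1 h1N).symm.trans h2
      exact (Option.some.inj this).symm
    · exfalso
      have hu0 : p.support[0]? = some u := by
        rw [hget 0 (Nat.zero_le _), SimpleGraph.Walk.getVert_zero]
      have : (0 : ℕ) = i + 1 :=
        getElem?_injective' (by rw [SimpleGraph.Walk.length_support]; omega) hp.support_nodup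
          (hu0.trans h2.symm)
      omega
  have hv_only : ∀ z, H.Adj v z → z = p.getVert (N - 1) := by
    intro z hz
    have hzs : z ∈ p.support := by
      by_contra hzs
      exact hnadj_v z hzs hz.symm
    have hvN : p.support[N]? = some v := by
      rw [hget N le_rfl]
      congr 1
      rw [← hlen]
      exact p.getVert_length
    rcases adj_consec hT p hp p.end_mem_support hzs hz with ⟨i, h1, h2⟩ | ⟨i, h1, h2⟩
    · exfalso
      have hiN : i = N :=
        getElem?_injective' (List.getElem?_eq_some_iff.mp h1).1 hp.support_nodup (h1.trans hvN.symm)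
      subst hiN
      have := (List.getElem?_eq_some_iff.mp h2).1
      rw [SimpleGraph.Walk.length_support] at this
      omega
    · have hiN : i + 1 = N :=
        getElem?_injective' (List.getElem?_eq_some_iff.mp h2).1 hp.support_nodup (h2.trans hvN.symm)
      have hi : i = N - 1 := by omega
      subst hi
      have := (hget (N - 1) (by omega)).symm.trans h1
      exact (Option.some.inj this).symm
  have hS_iff : ∀ z, z ∈ S ↔ ∃ i, 0 < i ∧ i < N ∧ p.getVert i = z := by
    intro z
    constructor
    · intro hz
      obtain ⟨a, ha, b, hb, hne⟩ := (Set.one_lt_ncard (Set.toFinite _)).mp hz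
      rw [SimpleGraph.mem_neighborSet] at ha hb
      have hzs : z ∈ p.support := by
        by_contra hzs
        exact hne (hOffU z a b hzs ha hb)
      obtain ⟨i, hiN, hiz⟩ := (hmem z).mp hzs
      refine ⟨i, ?_, ?_, hiz⟩
      · rcases Nat.eq_zero_or_pos i with rfl | h
        · exfalso
          have hzu : z = u := by rw [← hiz, SimpleGraph.Walk.getVert_zero]
          subst hzu
          exact hne ((hu_only a ha).trans (hu_only b hb).symm)
        · exact h
      · by_contra hiN'
        have hiN2 : i = N := by omega
        have hzv : z = v := by
          rw [← hiz, hiN2, ← hlen]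
          exact p.getVert_length
        subst hzv
        exact hne ((hv_only a ha).trans (hv_only b hb).symm)
    · rintro ⟨i, h0, hN, rfl⟩
      have hprev : H.Adj (p.getVert i) (p.getVert (i - 1)) := by
        have := hadjk (i - 1) (by omega)
        rw [show i - 1 + 1 = i by omega] at this
        exact this.symm
      have hnext : H.Adj (p.getVert i) (p.getVert (i + 1)) := hadjk i hN
      refine (Set.one_lt_ncard (Set.toFinite _)).mpr
        ⟨p.getVert (i - 1), hprev, p.getVert (i + 1), hnext, fun he => ?_⟩
      have := hinj (i - 1) (i + 1) (by omega) (by omega) he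
      omega
  -- build the list
  set L0 : List W := (List.range (N - 1)).map (fun j => p.getVert (j + 1)) with hL0
  have hL0len : L0.length = N - 1 := by simp [hL0]
  have hL0get : ∀ j, j < N - 1 → L0[j]? = some (p.getVert (j + 1)) := by
    intro j hj
    rw [hL0, List.getElem?_map, List.getElem?_range hj]
    rfl
  have hL0mem : ∀ z, z ∈ L0 ↔ z ∈ S := by
    intro z
    rw [hL0, List.mem_map]
    constructor
    · rintro ⟨j, hj, rfl⟩
      have hj' := List.mem_range.mp hj
      exact (hS_iff _).mpr ⟨j + 1, by omega, by omega, rfl⟩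
    · intro hz
      obtain ⟨i, h0, hN', rfl⟩ := (hS_iff _).mp hz
      exact ⟨i - 1, List.mem_range.mpr (by omega), by rw [show i - 1 + 1 = i by omega]⟩
  have hL0nd : L0.Nodup := by
    rw [hL0]
    refine List.Nodup.map_on ?_ (List.nodup_range)
    intro a ha b hb he
    have ha' := List.mem_range.mp ha
    have hb' := List.mem_range.mp hb
    have := hinj (a + 1) (b + 1) (by omega) (by omega) he
    omega
  refine ⟨L0.pmap Subtype.mk (fun a ha => (hL0mem a).mp ha), ?_, ?_, ?_⟩
  · exact List.Nodup.pmap (fun a _ b _ h => congrArg Subtype.val h) hL0nd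
  · intro w
    rw [List.mem_pmap]
    exact ⟨w.1, (hL0mem _).mpr w.2, rfl⟩
  · intro a b
    have lslen : (L0.pmap Subtype.mk (fun a ha => (hL0mem a).mp ha)).length = N - 1 := by
      rw [List.length_pmap, hL0len]
    have lsget : ∀ j (hj : j < N - 1), ∀ x : ↥S,
        (L0.pmap Subtype.mk (fun a ha => (hL0mem a).mp ha))[j]? = some x ↔
          p.getVert (j + 1) = ↑x := by
      intro j hj x
      rw [pmap_mk_get?, hL0get j hj]
      exact ⟨fun h => Option.some.inj h, fun h => congrArg some h⟩
    constructor
    · intro hadj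
      have hadj' : H.Adj ↑a ↑b := hadj
      obtain ⟨ia, hia0, hiaN, hia⟩ := (hS_iff ↑a).mp a.2
      obtain ⟨ib, hib0, hibN, hib⟩ := (hS_iff ↑b).mp b.2
      have hmema : (↑a : W) ∈ p.support := (hmem ↑a).mpr ⟨ia, by omega, hia⟩
      have hmemb : (↑b : W) ∈ p.support := (hmem ↑b).mpr ⟨ib, by omega, hib⟩
      have hgeta : p.support[ia]? = some ↑a := by rw [hget ia (by omega), hia]
      have hgetb : p.support[ib]? = some ↑b := by rw [hget ib (by omega), hib]
      rcases adj_consec hT p hp hmema hmemb hadj' with ⟨i, h1, h2⟩ | ⟨i, h1, h2⟩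
      · have hia' : i = ia :=
          getElem?_injective' (List.getElem?_eq_some_iff.mp h1).1 hp.support_nodup (h1.trans hgeta.symm)
        have hib' : i + 1 = ib :=
          getElem?_injective' (List.getElem?_eq_some_iff.mp h2).1 hp.support_nodup (h2.trans hgetb.symm)
        refine ⟨ia - 1, by omega, Or.inl ⟨?_, ?_⟩⟩
        · exact (lsget (ia - 1) (by omega) a).mpr (by rw [show ia - 1 + 1 = ia by omega]; exact hia)
        · rw [show ia - 1 + 1 = ia by omega]
          exact (lsget ia (by omega) b).mpr (by rw [show ia + 1 = ib by omega]; exact hib)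
      · have hib' : i = ib :=
          getElem?_injective' (List.getElem?_eq_some_iff.mp h1).1 hp.support_nodup (h1.trans hgetb.symm)
        have hia' : i + 1 = ia :=
          getElem?_injective' (List.getElem?_eq_some_iff.mp h2).1 hp.support_nodup (h2.trans hgeta.symm)
        refine ⟨ib - 1, by omega, Or.inr ⟨?_, ?_⟩⟩
        · exact (lsget (ib - 1) (by omega) b).mpr (by rw [show ib - 1 + 1 = ib by omega]; exact hib)
        · rw [show ib - 1 + 1 = ib by omega]
          exact (lsget ib (by omega) a).mpr (by rw [show ib + 1 = ia by omega]; exact hia)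
    · rintro ⟨i, hilen, hcase⟩
      rw [lslen] at hilen
      rcases hcase with ⟨h1, h2⟩ | ⟨h1, h2⟩
      · have ha' : p.getVert (i + 1) = ↑a := (lsget i (by omega) a).mp h1
        have hb' : p.getVert (i + 1 + 1) = ↑b := (lsget (i + 1) (by omega) b).mp h2
        have : H.Adj (p.getVert (i + 1)) (p.getVert (i + 1 + 1)) := hadjk (i + 1) (by omega)
        rw [ha', hb'] at this
        exact this
      · have hb' : p.getVert (i + 1) = ↑b := (lsget i (by omega) b).mp h1
        have ha' : p.getVert (i + 1 + 1) = ↑a := (lsget (i + 1) (by omega) a).mp h2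
        have : H.Adj (p.getVert (i + 1)) (p.getVert (i + 1 + 1)) := hadjk (i + 1) (by omega)
        rw [ha', hb'] at this
        exact this.symm
private lemma tstar_adj_explicit :
    Tstar.Adj 0 1 ∧ Tstar.Adj 1 2 ∧ Tstar.Adj 2 3 ∧ Tstar.Adj 3 4 ∧
    Tstar.Adj 2 5 ∧ Tstar.Adj 5 6 := by
  refine ⟨?_, ?_, ?_, ?_, ?_, ?_⟩ <;> rw [tstar_adj_iff] <;>
    exact ⟨by tauto, by decide⟩

private lemma reachable_induce_of_walk {V : Type*} {G : SimpleGraph V} {s : Set V} :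
    ∀ {x y : V} (r : G.Walk x y) (hs : ∀ z ∈ r.support, z ∈ s),
      (G.induce s).Reachable ⟨x, hs _ r.start_mem_support⟩ ⟨y, hs _ r.end_mem_support⟩ := by
  intro x y r
  induction r with
  | nil => intro hs; exact SimpleGraph.Reachable.refl _
  | @cons a b c h q ih =>
    intro hs
    have hs' : ∀ z ∈ q.support, z ∈ s := fun z hz => hs z (by
      rw [SimpleGraph.Walk.support_cons]; exact List.mem_cons_of_mem _ hz)
    have hadj : (G.induce s).Adj ⟨a, hs _ (SimpleGraph.Walk.start_mem_support _)⟩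
        ⟨b, hs' _ (SimpleGraph.Walk.start_mem_support _)⟩ := h
    exact hadj.reachable.trans (ih hs')

/-- a forest is a caterpillar forest iff it contains no subgraph isomorphic
to `T*`. -/
theorem caterpillarForest_iff_no_Tstar {V : Type*} [Fintype V] (G : SimpleGraph V)
    (hG : G.IsAcyclic) :
    IsCaterpillarForest G ↔
      ¬ ∃ f : Fin 7 → V, Function.Injective f ∧
          ∀ a b : Fin 7, Tstar.Adj a b → G.Adj (f a) (f b) := by
  classical
  obtain ⟨t01, t12, t23, t34, t25, t56⟩ := tstar_adj_explicit
  constructor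
  · rintro h ⟨f, hfi, hfadj⟩
    have g01 : G.Adj (f 0) (f 1) := hfadj _ _ t01
    have g12 : G.Adj (f 1) (f 2) := hfadj _ _ t12
    have g23 : G.Adj (f 2) (f 3) := hfadj _ _ t23
    have g34 : G.Adj (f 3) (f 4) := hfadj _ _ t34
    have g25 : G.Adj (f 2) (f 5) := hfadj _ _ t25
    have g56 : G.Adj (f 5) (f 6) := hfadj _ _ t56
    set c := G.connectedComponentMk (f 2) with hc
    have h2c : f 2 ∈ c.supp := by rw [SimpleGraph.ConnectedComponent.mem_supp_iff]
    have h1c : f 1 ∈ c.supp := by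
      rw [SimpleGraph.ConnectedComponent.mem_supp_iff, hc]
      exact SimpleGraph.ConnectedComponent.sound g12.reachable
    have h0c : f 0 ∈ c.supp := by
      rw [SimpleGraph.ConnectedComponent.mem_supp_iff, hc]
      exact SimpleGraph.ConnectedComponent.sound (g01.reachable.trans g12.reachable)
    have h3c : f 3 ∈ c.supp := by
      rw [SimpleGraph.ConnectedComponent.mem_supp_iff, hc]
      exact SimpleGraph.ConnectedComponent.sound g23.reachable.symm
    have h4c : f 4 ∈ c.supp := by
      rw [SimpleGraph.ConnectedComponent.mem_supp_iff, hc]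
      exact SimpleGraph.ConnectedComponent.sound (g34.reachable.symm.trans g23.reachable.symm)
    have h5c : f 5 ∈ c.supp := by
      rw [SimpleGraph.ConnectedComponent.mem_supp_iff, hc]
      exact SimpleGraph.ConnectedComponent.sound g25.reachable.symm
    have h6c : f 6 ∈ c.supp := by
      rw [SimpleGraph.ConnectedComponent.mem_supp_iff, hc]
      exact SimpleGraph.ConnectedComponent.sound (g56.reachable.symm.trans g25.reachable.symm)
    obtain ⟨-, hpathg⟩ := h c
    set Hc := G.induce c.supp with hHc
    set a0 : ↥c.supp := ⟨f 0, h0c⟩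
    set a1 : ↥c.supp := ⟨f 1, h1c⟩
    set a2 : ↥c.supp := ⟨f 2, h2c⟩
    set a3 : ↥c.supp := ⟨f 3, h3c⟩
    set a4 : ↥c.supp := ⟨f 4, h4c⟩
    set a5 : ↥c.supp := ⟨f 5, h5c⟩
    set a6 : ↥c.supp := ⟨f 6, h6c⟩
    have hne : ∀ i j : Fin 7, i ≠ j → f i ≠ f j := fun i j hij => hfi.ne hij
    have sp1 : 2 ≤ (Hc.neighborSet a1).ncard := by
      refine (Set.one_lt_ncard (Set.toFinite _)).mpr ⟨a0, ?_, a2, ?_, ?_⟩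
      · exact (g01.symm : G.Adj (f 1) (f 0))
      · exact (g12 : G.Adj (f 1) (f 2))
      · exact fun hq => hne 0 2 (by decide) (congrArg Subtype.val hq)
    have sp2 : 2 ≤ (Hc.neighborSet a2).ncard := by
      refine (Set.one_lt_ncard (Set.toFinite _)).mpr ⟨a1, ?_, a3, ?_, ?_⟩
      · exact (g12.symm : G.Adj (f 2) (f 1))
      · exact (g23 : G.Adj (f 2) (f 3))
      · exact fun hq => hne 1 3 (by decide) (congrArg Subtype.val hq)
    have sp3 : 2 ≤ (Hc.neighborSet a3).ncard := by
      refine (Set.one_lt_ncard (Set.toFinite _)).mpr ⟨a2, ?_, a4, ?_, ?_⟩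
      · exact (g23.symm : G.Adj (f 3) (f 2))
      · exact (g34 : G.Adj (f 3) (f 4))
      · exact fun hq => hne 2 4 (by decide) (congrArg Subtype.val hq)
    have sp5 : 2 ≤ (Hc.neighborSet a5).ncard := by
      refine (Set.one_lt_ncard (Set.toFinite _)).mpr ⟨a2, ?_, a6, ?_, ?_⟩
      · exact (g25.symm : G.Adj (f 5) (f 2))
      · exact (g56 : G.Adj (f 5) (f 6))
      · exact fun hq => hne 2 6 (by decide) (congrArg Subtype.val hq)
    set Sp : Set ↥c.supp := {v : ↥c.supp | 2 ≤ (Hc.neighborSet v).ncard} with hSp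
    have b1 : ↥Sp := ⟨a1, sp1⟩
    have b2 : ↥Sp := ⟨a2, sp2⟩
    have b3 : ↥Sp := ⟨a3, sp3⟩
    have b5 : ↥Sp := ⟨a5, sp5⟩
    refine pathGraph_no_three hpathg
      (x := (⟨a2, sp2⟩ : ↥Sp)) (a := (⟨a1, sp1⟩ : ↥Sp)) (b := (⟨a3, sp3⟩ : ↥Sp))
      (c := (⟨a5, sp5⟩ : ↥Sp)) ?_ ?_ ?_ ?_ ?_ ?_
    · exact (g12.symm : G.Adj (f 2) (f 1))
    · exact (g23 : G.Adj (f 2) (f 3))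
    · exact (g25 : G.Adj (f 2) (f 5))
    · exact fun hq => hne 1 3 (by decide) (congrArg (fun t => t.1.1) hq)
    · exact fun hq => hne 1 5 (by decide) (congrArg (fun t => t.1.1) hq)
    · exact fun hq => hne 3 5 (by decide) (congrArg (fun t => t.1.1) hq)
  · intro hno c
    haveI : Fintype ↥c.supp := Set.Finite.fintype (Set.toFinite _)
    have hconn : (G.induce c.supp).Connected := by
      rw [SimpleGraph.connected_iff]
      constructor
      · intro a b
        have ha := (SimpleGraph.ConnectedComponent.mem_supp_iff _ _).mp a.2
        have hb := (SimpleGraph.ConnectedComponent.mem_supp_iff _ _).mp b.2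
        have hab : G.Reachable ↑a ↑b :=
          SimpleGraph.ConnectedComponent.exact (ha.trans hb.symm)
        obtain ⟨r⟩ := hab
        have hsub : ∀ z ∈ r.support, z ∈ c.supp := by
          intro z hz
          rw [SimpleGraph.ConnectedComponent.mem_supp_iff]
          have hr : G.Reachable ↑a z := ⟨r.takeUntil z hz⟩
          rw [← ha]
          exact (SimpleGraph.ConnectedComponent.sound hr).symm
        exact reachable_induce_of_walk r hsub
      · obtain ⟨w, hw⟩ := c.exists_rep
        exact ⟨⟨w, by rw [SimpleGraph.ConnectedComponent.mem_supp_iff]; exact hw⟩⟩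
    have hacyc : (G.induce c.supp).IsAcyclic := by
      intro x q hq
      have hcyc : (q.map ⟨Subtype.val, fun h => h⟩).IsCycle :=
        ((SimpleGraph.Walk.map_isCycle_iff_of_injective
          (Subtype.val_injective : Function.Injective
            (⇑(⟨Subtype.val, fun h => h⟩ : G.induce c.supp →g G)))).mpr hq)
      exact hG _ hcyc
    have hT : (G.induce c.supp).IsTree := ⟨hconn, hacyc⟩
    refine ⟨hT, spine_isPathGraph hT ?_⟩
    rintro ⟨f, hfi, hfa⟩
    exact hno ⟨fun j => ↑(f j), Subtype.val_injective.comp hfi,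
      fun a b h => (hfa a b h : G.Adj ↑(f a) ↑(f b))⟩
end

section
/- For a real n×m matrix A, the set Q'(A) = {DAE : D, E positive diagonal matrices} equals the full qualitative class Q(A) if and only if the bipartite graph Γ_A of A is a forest. -/
open Matrix

/-- The qualitative class of a real matrix: matrices with the same sign pattern. -/
def Qual {n m : ℕ} (A : Matrix (Fin n) (Fin m) ℝ) : Set (Matrix (Fin n) (Fin m) ℝ) :=
  {B | ∀ i j, Real.sign (B i j) = Real.sign (A i j)}

/-- The bipartite graph `Γ_A` of a matrix `A`: row-vertices and column-vertices, with an edge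
between row `i` and column `j` iff `A i j ≠ 0`. -/
def bipartiteGraph {n m : ℕ} (A : Matrix (Fin n) (Fin m) ℝ) : SimpleGraph (Fin n ⊕ Fin m) :=
  SimpleGraph.fromRel (fun x y => ∃ i j, x = Sum.inl i ∧ y = Sum.inr j ∧ A i j ≠ 0)


lemma sign_pos_mul {c x : ℝ} (hc : 0 < c) : Real.sign (c * x) = Real.sign x := by
  rcases lt_trichotomy x 0 with h|h|h
  · rw [Real.sign_of_neg h, Real.sign_of_neg (mul_neg_of_pos_of_neg hc h)]
  · simp [h]
  · rw [Real.sign_of_pos h, Real.sign_of_pos (mul_pos hc h)]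

lemma bip_adj {n m : ℕ} (A : Matrix (Fin n) (Fin m) ℝ) (i : Fin n) (j : Fin m) :
    (bipartiteGraph A).Adj (Sum.inl i) (Sum.inr j) ↔ A i j ≠ 0 := by
  simp [bipartiteGraph, SimpleGraph.fromRel_adj]

lemma bip_adj_cases {n m : ℕ} {A : Matrix (Fin n) (Fin m) ℝ} {x y : Fin n ⊕ Fin m}
    (h : (bipartiteGraph A).Adj x y) :
    (∃ i j, x = Sum.inl i ∧ y = Sum.inr j ∧ A i j ≠ 0) ∨
      (∃ i j, x = Sum.inr j ∧ y = Sum.inl i ∧ A i j ≠ 0) := by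
  rw [bipartiteGraph, SimpleGraph.fromRel_adj] at h
  rcases h.2 with ⟨i, j, hx, hy, hA⟩ | ⟨i, j, hx', hy', hA⟩
  · exact Or.inl ⟨i, j, hx, hy, hA⟩
  · exact Or.inr ⟨i, j, hy', hx', hA⟩

lemma ratio_pos {a b : ℝ} (ha : a ≠ 0) (h : Real.sign b = Real.sign a) : 0 < b / a := by
  rcases ha.lt_or_gt with h1|h1
  · rw [Real.sign_of_neg h1] at h
    have hb : b < 0 := by
      rcases lt_trichotomy b 0 with h2|h2|h2
      · exact h2
      · rw [h2, Real.sign_zero] at h; norm_num at h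
      · rw [Real.sign_of_pos h2] at h; norm_num at h
    exact div_pos_iff.mpr (Or.inr ⟨hb, h1⟩)
  · rw [Real.sign_of_pos h1] at h
    have hb : 0 < b := by
      rcases lt_trichotomy b 0 with h2|h2|h2
      · rw [Real.sign_of_neg h2] at h; norm_num at h
      · rw [h2, Real.sign_zero] at h; norm_num at h
      · exact h2
    exact div_pos hb h1

lemma bool_aux {x y a : Bool} (h1 : x ≠ y) (h2 : x ≠ a) : y = a := by
  cases x <;> cases y <;> cases a <;> simp_all

lemma forest_weights {V : Type*} [Fintype V] (side : V → Bool)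
    (w : V → V → ℝ) (hw : ∀ x y, w x y = w y x) :
    ∀ (N : ℕ) (G : SimpleGraph V), G.edgeSet.ncard ≤ N → G.IsAcyclic →
      (∀ x y, G.Adj x y → side x ≠ side y) →
      (∀ x y, G.Adj x y → 0 < w x y) →
      ∃ f : V → ℝ, (∀ v, 0 < f v) ∧ ∀ x y, G.Adj x y → f x * f y = w x y := by
  intro N
  induction N with
  | zero =>
    intro G hcard _ _ _
    have hempty : G.edgeSet = ∅ :=
      Set.ncard_eq_zero (G.edgeSet.toFinite) |>.mp (Nat.le_zero.mp hcard)
    refine ⟨fun _ => 1, fun _ => one_pos, fun x y hxy => ?_⟩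
    exact absurd (G.mem_edgeSet.mpr hxy) (by simp [hempty])
  | succ N ih =>
    intro G hcard hG hside hwpos
    classical
    by_cases hE : ∀ x y, ¬G.Adj x y
    · exact ⟨fun _ => 1, fun _ => one_pos, fun x y hxy => absurd hxy (hE x y)⟩
    push_neg at hE
    obtain ⟨a, b, hab⟩ := hE
    set G' : SimpleGraph V := G \ SimpleGraph.fromEdgeSet {s(a, b)} with hG'def
    have hbridge : ¬G'.Reachable a b :=
      ((SimpleGraph.isAcyclic_iff_forall_adj_isBridge.mp hG) hab)
    have hle : G' ≤ G := sdiff_le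
    have hG'acyc : G'.IsAcyclic := fun v c hc => hG (c.mapLe hle) (hc.mapLe hle)
    have hG'adj : ∀ x y, G'.Adj x y → G.Adj x y := fun x y h => hle h
    have hedge : G'.edgeSet = G.edgeSet \ {s(a, b)} := by
      rw [hG'def, SimpleGraph.edgeSet_sdiff, SimpleGraph.edgeSet_fromEdgeSet,
        SimpleGraph.edgeSet_sdiff_sdiff_isDiag]
    have hcard' : G'.edgeSet.ncard ≤ N := by
      rw [hedge]
      have hmem : s(a, b) ∈ G.edgeSet := G.mem_edgeSet.mpr hab
      have := Set.ncard_diff_singleton_lt_of_mem hmem (G.edgeSet.toFinite)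
      omega
    obtain ⟨f, hfpos, hf⟩ := ih G' hcard' hG'acyc
      (fun x y h => hside x y (hG'adj x y h)) (fun x y h => hwpos x y (hG'adj x y h))
    set c : ℝ := w a b / (f a * f b) with hcdef
    have hc : 0 < c := div_pos (hwpos a b hab) (mul_pos (hfpos a) (hfpos b))
    set g : V → ℝ := fun v =>
      if G'.Reachable a v then (if side v = side a then c * f v else f v / c) else f v with hgdef
    have hgpos : ∀ v, 0 < g v := by
      intro v
      rw [hgdef]
      dsimp only
      split_ifs
      · exact mul_pos hc (hfpos v)
      · exact div_pos (hfpos v) hc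
      · exact hfpos v
    refine ⟨g, hgpos, ?_⟩
    have hga : g a = c * f a := by
      rw [hgdef]
      dsimp only
      rw [if_pos (SimpleGraph.Reachable.refl a), if_pos rfl]
    have hgb : g b = f b := by
      rw [hgdef]
      dsimp only
      rw [if_neg hbridge]
    have hmain : g a * g b = w a b := by
      rw [hga, hgb, hcdef]
      rw [div_mul_eq_mul_div, div_mul_eq_mul_div, mul_assoc]
      exact mul_div_cancel_right₀ _ (ne_of_gt (mul_pos (hfpos a) (hfpos b)))
    intro x y hxy
    by_cases he : s(x, y) = s(a, b)
    · rw [Sym2.eq_iff] at he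
      rcases he with ⟨rfl, rfl⟩ | ⟨rfl, rfl⟩
      · exact hmain
      · rw [mul_comm, hmain, hw]
    · have hxy' : G'.Adj x y := by
        rw [hG'def, SimpleGraph.sdiff_adj]
        exact ⟨hxy, by simp [SimpleGraph.fromEdgeSet_adj, he]⟩
      have hsxy : side x ≠ side y := hside x y hxy
      have hiff : G'.Reachable a x ↔ G'.Reachable a y :=
        ⟨fun h => h.trans hxy'.reachable, fun h => h.trans hxy'.symm.reachable⟩
      by_cases hrx : G'.Reachable a x
      · have hry : G'.Reachable a y := hiff.mp hrx
        have hone : (if side x = side a then c * f x else f x / c) *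
            (if side y = side a then c * f y else f y / c) = f x * f y := by
          by_cases hsx : side x = side a
          · have hsy : side y ≠ side a := fun h => hsxy (hsx.trans h.symm)
            rw [if_pos hsx, if_neg hsy]
            field_simp
          · have hsy : side y = side a := bool_aux hsxy hsx
            rw [if_neg hsx, if_pos hsy]
            field_simp
        rw [hgdef]
        dsimp only
        rw [if_pos hrx, if_pos hry, hone]
        exact hf x y hxy'
      · have hry : ¬G'.Reachable a y := fun h => hrx (hiff.mpr h)
        rw [hgdef]
        dsimp only
        rw [if_neg hrx, if_neg hry]
        exact hf x y hxy'

/-- `Q'(A) = {D A E : D, E positive diagonal}` equals the qualitative class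
`Q(A)` iff the bipartite graph `Γ_A` is a forest. -/
theorem qualPrime_eq_qual_iff_forest {n m : ℕ} (A : Matrix (Fin n) (Fin m) ℝ) :
    {B : Matrix (Fin n) (Fin m) ℝ |
        ∃ (D : Fin n → ℝ) (E : Fin m → ℝ), (∀ i, 0 < D i) ∧ (∀ j, 0 < E j) ∧
          B = Matrix.diagonal D * A * Matrix.diagonal E} = Qual A ↔
      (bipartiteGraph A).IsAcyclic := by
  classical
  constructor
  · -- equality implies acyclic
    intro h
    rw [SimpleGraph.isAcyclic_iff_forall_adj_isBridge]
    -- key: for each i j with A i j ≠ 0, the edge s(inl i, inr j) is a bridge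
    have key : ∀ (i : Fin n) (j : Fin m), A i j ≠ 0 →
        (bipartiteGraph A).IsBridge s(Sum.inl i, Sum.inr j) := by
      intro i j hA
      rw [SimpleGraph.isBridge_iff]
      intro hreach
      -- the perturbed matrix
      set B : Matrix (Fin n) (Fin m) ℝ :=
        Matrix.of (fun i' j' => if i' = i ∧ j' = j then 2 * A i j else A i' j') with hBdef
      have hBQual : B ∈ Qual A := by
        intro i' j'
        by_cases hij : i' = i ∧ j' = j
        · obtain ⟨rfl, rfl⟩ := hij
          show Real.sign (if _ then _ else _) = _
          rw [if_pos ⟨rfl, rfl⟩]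
          exact sign_pos_mul (by norm_num)
        · show Real.sign (if _ then _ else _) = _
          rw [if_neg hij]
      rw [← h] at hBQual
      obtain ⟨D, E, hD, hE, hBE⟩ := hBQual
      have hentry : ∀ i' j', B i' j' = D i' * A i' j' * E j' := by
        intro i' j'
        rw [hBE]
        simp [Matrix.mul_diagonal, Matrix.diagonal_mul, mul_comm, mul_assoc, mul_left_comm]
      -- the special entry gives D i * E j = 2
      have hspec : D i * E j = 2 := by
        have h1 : (2 : ℝ) * A i j = D i * A i j * E j := by
          have := hentry i j
          rwa [hBdef, Matrix.of_apply, if_pos ⟨rfl, rfl⟩] at this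
        have h2 : (2 : ℝ) * A i j = (D i * E j) * A i j := by rw [h1]; ring
        exact (mul_right_cancel₀ hA h2).symm
      -- other edges give D i' * E j' = 1
      have hother : ∀ i' j', A i' j' ≠ 0 → ¬(i' = i ∧ j' = j) → D i' * E j' = 1 := by
        intro i' j' hA' hne
        have h1 : A i' j' = D i' * A i' j' * E j' := by
          have := hentry i' j'
          rwa [hBdef, Matrix.of_apply, if_neg hne] at this
        have h2 : (1 : ℝ) * A i' j' = (D i' * E j') * A i' j' := by
          rw [one_mul]; conv_lhs => rw [h1]
          ring
        exact (mul_right_cancel₀ hA' h2).symm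
      -- potential function
      set ψ : (Fin n ⊕ Fin m) → ℝ :=
        Sum.elim (fun i' => Real.log (D i')) (fun j' => -Real.log (E j')) with hψdef
      set G' : SimpleGraph (Fin n ⊕ Fin m) :=
        bipartiteGraph A \ SimpleGraph.fromEdgeSet {s(Sum.inl i, Sum.inr j)} with hG'def
      have hψeq : ∀ i' j', A i' j' ≠ 0 → ¬(i' = i ∧ j' = j) →
          ψ (Sum.inl i') = ψ (Sum.inr j') := by
        intro i' j' hA' hne
        have h1 : D i' * E j' = 1 := hother i' j' hA' hne
        have : Real.log (D i') + Real.log (E j') = 0 := by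
          rw [← Real.log_mul (ne_of_gt (hD i')) (ne_of_gt (hE j')), h1, Real.log_one]
        simp only [hψdef, Sum.elim_inl, Sum.elim_inr]
        linarith
      have hedgeψ : ∀ x y, G'.Adj x y → ψ x = ψ y := by
        intro x y hxy
        rw [hG'def, SimpleGraph.sdiff_adj] at hxy
        obtain ⟨hadj, hne⟩ := hxy
        rw [SimpleGraph.fromEdgeSet_adj] at hne
        push_neg at hne
        have hnediag : x ≠ y := hadj.ne
        have hsym : s(x, y) ∉ ({s(Sum.inl i, Sum.inr j)} : Set (Sym2 (Fin n ⊕ Fin m))) := by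
          intro hmem
          exact hnediag (hne hmem)
        rcases bip_adj_cases hadj with ⟨i', j', rfl, rfl, hA'⟩ | ⟨i', j', rfl, rfl, hA'⟩
        · refine hψeq i' j' hA' ?_
          rintro ⟨rfl, rfl⟩
          exact hsym rfl
        · refine (hψeq i' j' hA' ?_).symm
          rintro ⟨rfl, rfl⟩
          exact hsym (Sym2.eq_swap)
      have hwalkψ : ∀ {x y : Fin n ⊕ Fin m}, G'.Reachable x y → ψ x = ψ y := by
        intro x y hr
        obtain ⟨p⟩ := hr
        induction p with
        | nil => rfl
        | cons ha p ih => exact (hedgeψ _ _ ha).trans ih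
      have hψij : ψ (Sum.inl i) = ψ (Sum.inr j) := hwalkψ hreach
      have h1 : Real.log (D i) + Real.log (E j) = 0 := by
        simp only [hψdef, Sum.elim_inl, Sum.elim_inr] at hψij
        linarith
      have h2 : D i * E j = 1 := by
        have := Real.exp_log (mul_pos (hD i) (hE j))
        rw [Real.log_mul (ne_of_gt (hD i)) (ne_of_gt (hE j)), h1, Real.exp_zero] at this
        linarith
      rw [hspec] at h2
      norm_num at h2
    intro x y hxy
    rcases bip_adj_cases hxy with ⟨i, j, rfl, rfl, hA⟩ | ⟨i, j, rfl, rfl, hA⟩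
    · exact key i j hA
    · rw [Sym2.eq_swap]
      exact key i j hA
  · -- acyclic implies equality
    intro hG
    apply Set.eq_of_subset_of_subset
    · rintro B ⟨D, E, hD, hE, rfl⟩ i j
      show Real.sign ((Matrix.diagonal D * A * Matrix.diagonal E) i j) = _
      have : (Matrix.diagonal D * A * Matrix.diagonal E) i j = (D i * E j) * A i j := by
        simp [Matrix.mul_diagonal, Matrix.diagonal_mul]
        ring
      rw [this, sign_pos_mul (mul_pos (hD i) (hE j))]
    · intro B hB
      -- weights
      set w : (Fin n ⊕ Fin m) → (Fin n ⊕ Fin m) → ℝ := fun x y =>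
        match x, y with
        | Sum.inl i, Sum.inr j => B i j / A i j
        | Sum.inr j, Sum.inl i => B i j / A i j
        | _, _ => 1 with hwdef
      have hwsymm : ∀ x y, w x y = w y x := by
        rintro (i | j) (i' | j') <;> rfl
      have hwpos : ∀ x y, (bipartiteGraph A).Adj x y → 0 < w x y := by
        intro x y hxy
        rcases bip_adj_cases hxy with ⟨i, j, rfl, rfl, hA⟩ | ⟨i, j, rfl, rfl, hA⟩ <;>
          exact ratio_pos hA (hB _ _)
      obtain ⟨f, hfpos, hf⟩ := forest_weights (Sum.elim (fun _ => true) (fun _ => false))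
        w hwsymm ((bipartiteGraph A).edgeSet.ncard) (bipartiteGraph A) le_rfl hG
        (by
          intro x y hxy
          rcases bip_adj_cases hxy with ⟨i, j, rfl, rfl, _⟩ | ⟨i, j, rfl, rfl, _⟩ <;> simp)
        hwpos
      refine ⟨fun i => f (Sum.inl i), fun j => f (Sum.inr j),
        fun i => hfpos _, fun j => hfpos _, ?_⟩
      ext i j
      have hentry : (Matrix.diagonal (fun i => f (Sum.inl i)) * A *
          Matrix.diagonal (fun j => f (Sum.inr j))) i j
          = (f (Sum.inl i) * f (Sum.inr j)) * A i j := by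
        simp [Matrix.mul_diagonal, Matrix.diagonal_mul]
        ring
      rw [hentry]
      by_cases hA : A i j = 0
      · have : Real.sign (B i j) = 0 := by rw [hB i j, hA, Real.sign_zero]
        rw [Real.sign_eq_zero_iff] at this
        rw [this, hA, mul_zero]
      · have hadj : (bipartiteGraph A).Adj (Sum.inl i) (Sum.inr j) := (bip_adj A i j).mpr hA
        have := hf _ _ hadj
        rw [hwdef] at this
        rw [this]
        field_simp
end

section
/- If the bipartite graph of A ∈ ℝ^{n×m} is a forest, then for all A_1, A_2 in the qualitative class of A, the product A_1 A_2^T is diagonally similar to a positive semidefinite matrix; in particular all eigenvalues of A_1 A_2^T are real and nonnegative. -/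
open Matrix SimpleGraph


lemma my_sign_ratio {x y : ℝ} (hx : x ≠ 0) (h : Real.sign x = Real.sign y) : 0 < y / x := by
  rcases lt_trichotomy x 0 with h1 | h1 | h1
  · have hy : y < 0 := by
      by_contra hy
      push_neg at hy
      rcases eq_or_lt_of_le hy with h2 | h2
      · rw [Real.sign_of_neg h1, ← h2, Real.sign_zero] at h; norm_num at h
      · rw [Real.sign_of_neg h1, Real.sign_of_pos h2] at h; norm_num at h
    exact div_pos_of_neg_of_neg hy h1
  · exact absurd h1 hx
  · have hy : 0 < y := by
      by_contra hy
      push_neg at hy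
      rcases eq_or_lt_of_le hy with h2 | h2
      · rw [Real.sign_of_pos h1, h2, Real.sign_zero] at h; norm_num at h
      · rw [Real.sign_of_pos h1, Real.sign_of_neg h2] at h; norm_num at h
    exact div_pos hy h1

open SimpleGraph in
open SimpleGraph

lemma my_isAcyclic_mono {V : Type*} {G H : SimpleGraph V} (hle : G ≤ H) (h : H.IsAcyclic) :
    G.IsAcyclic := fun _v c hc => h (c.mapLe hle) (hc.mapLe hle)

lemma my_exists_leaf {V : Type*} [Fintype V] [DecidableEq V] {G : SimpleGraph V}
    (hG : G.IsAcyclic) {a₀ b₀ : V} (h₀ : G.Adj a₀ b₀) :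
    ∃ a b, G.Adj a b ∧ ∀ c, G.Adj a c → c = b := by
  classical
  set S : Set ℕ := {L | ∃ (a b : V) (p : G.Walk a b), p.IsPath ∧ p.length = L} with hS
  have h1S : (1 : ℕ) ∈ S := ⟨a₀, b₀, .cons h₀ .nil, by simp [h₀.ne], rfl⟩
  have hne : S.Nonempty := ⟨1, h1S⟩
  have hbdd : BddAbove S := by
    refine ⟨Fintype.card V, fun L hL => ?_⟩
    obtain ⟨a, b, p, hp, rfl⟩ := hL
    exact (hp.length_lt).le
  have hmem := Nat.sSup_mem hne hbdd
  obtain ⟨a, b, p, hp, hlen⟩ := hmem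
  have hL1 : 1 ≤ sSup S := le_csSup hbdd h1S
  cases p with
  | nil => simp at hlen; omega
  | @cons _ b₁ _ h q =>
    refine ⟨a, b₁, h, fun c hc => ?_⟩
    by_contra hne'
    rw [Walk.cons_isPath_iff] at hp
    by_cases hcs : c ∈ (Walk.cons h q).support
    · -- build a cycle
      have hca : c ≠ a := fun e => G.irrefl (e ▸ hc)
      set p' : G.Walk a b := Walk.cons h q with hp'def
      have hp' : p'.IsPath := by rw [Walk.cons_isPath_iff]; exact hp
      have hq1 : (p'.takeUntil c hcs).IsPath := hp'.takeUntil hcs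
      have hedge : s(a, c) ∉ (p'.takeUntil c hcs).reverse.edges := by
        rw [Walk.edges_reverse, List.mem_reverse]
        intro hmem
        have hsub := Walk.edges_takeUntil_subset p' hcs hmem
        rw [hp'def] at hsub
        simp only [Walk.edges_cons, List.mem_cons] at hsub
        rcases hsub with h1 | h2
        · rw [Sym2.eq_iff] at h1
          rcases h1 with ⟨-, h4⟩ | ⟨-, h4⟩
          · exact hne' h4
          · exact hca h4
        · exact hp.2 (Walk.fst_mem_support_of_mem_edges q h2)
      have hcyc : (Walk.cons hc (p'.takeUntil c hcs).reverse).IsCycle := by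
        rw [Walk.cons_isCycle_iff]
        exact ⟨hq1.reverse, hedge⟩
      exact hG _ hcyc
    · -- extend the path
      have hlong : (Walk.cons hc.symm (Walk.cons h q)).IsPath := by
        rw [Walk.cons_isPath_iff]
        exact ⟨by rw [Walk.cons_isPath_iff]; exact hp, hcs⟩
      have : (Walk.cons hc.symm (Walk.cons h q)).length ∈ S := ⟨_, _, _, hlong, rfl⟩
      have hle := le_csSup hbdd this
      simp only [Walk.length_cons] at hle hlen
      omega


open SimpleGraph in
lemma my_scaling {V : Type*} [Fintype V] [DecidableEq V] :
    ∀ (k : ℕ) (G : SimpleGraph V), G.edgeSet.ncard = k → G.IsAcyclic →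
    ∀ (w : V → V → ℝ), (∀ u v, w u v = w v u) → (∀ u v, G.Adj u v → 0 < w u v) →
    ∃ x : V → ℝ, (∀ v, 0 < x v) ∧ ∀ u v, G.Adj u v → x u * x v = w u v := by
  intro k
  induction k using Nat.strong_induction_on with
  | _ k IH =>
    intro G hcard hG w hsym hpos
    by_cases hedge : ∃ u v, G.Adj u v
    · obtain ⟨u₀, v₀, h₀⟩ := hedge
      obtain ⟨a, b, hab, hleaf⟩ := my_exists_leaf hG h₀
      set G' : SimpleGraph V := G.deleteEdges {s(a, b)} with hG'def
      have hle : G' ≤ G := SimpleGraph.deleteEdges_le _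
      have hG'card : G'.edgeSet.ncard < k := by
        have he : G'.edgeSet = G.edgeSet \ {s(a, b)} := SimpleGraph.edgeSet_deleteEdges _
        have hmem : s(a, b) ∈ G.edgeSet := hab
        rw [he]
        rw [Set.ncard_diff_singleton_of_mem hmem]
        have hk : 0 < k := by
          rw [← hcard]
          exact Set.ncard_pos (Set.toFinite _) |>.mpr ⟨_, hmem⟩
        omega
      obtain ⟨x', hx'pos, hx'⟩ := IH _ hG'card G' rfl (my_isAcyclic_mono hle hG) w hsym
        (fun u v huv => hpos u v (hle huv))
      refine ⟨fun v => if v = a then w a b / x' b else x' v, fun v => ?_, fun u v huv => ?_⟩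
      · dsimp only
        split
        · exact div_pos (hpos a b hab) (hx'pos b)
        · exact hx'pos v
      · by_cases hua : u = a
        · have hvb : v = b := hleaf v (hua ▸ huv)
          simp only [hua, hvb, if_pos rfl, if_neg hab.ne', if_true]
          exact div_mul_cancel₀ _ (hx'pos b).ne'
        · by_cases hva : v = a
          · have hub : u = b := hleaf u (hva ▸ huv.symm)
            simp only [hua, hva, hub, if_neg hab.ne', if_pos rfl]
            simp only [if_true]
            rw [hsym b a, mul_comm]
            exact div_mul_cancel₀ _ (hx'pos b).ne'
          · have hG'adj : G'.Adj u v := by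
              rw [hG'def, SimpleGraph.deleteEdges_adj]
              refine ⟨huv, ?_⟩
              simp only [Set.mem_singleton_iff, Sym2.eq_iff]
              push_neg
              constructor
              · intro h1; exact absurd h1 hua
              · intro h1 h2; exact hva h2
            simp only [if_neg hua, if_neg hva]
            exact hx' u v hG'adj
    · push_neg at hedge
      exact ⟨fun _ => 1, fun _ => one_pos, fun u v huv => absurd huv (hedge u v)⟩


open scoped ComplexOrder in
lemma my_memPS {n m : ℕ} (B : Matrix (Fin n) (Fin n) ℝ) (P : Fin n → ℝ)
    (hP : ∀ i, 0 < P i) (M : Matrix (Fin n) (Fin m) ℝ)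
    (h : B = Matrix.diagonal P * (M * Mᵀ) * Matrix.diagonal (fun i => (P i)⁻¹)) :
    ∀ z : ℂ, ((B.charpoly).map (algebraMap ℝ ℂ)).IsRoot z → ∃ x : ℝ, 0 ≤ x ∧ z = x := by
  intro z hz
  set c : ℝ →+* ℂ := (algebraMap ℝ ℂ) with hc
  -- the root is a root of the complex charpoly
  have hchar : ((B.map c).charpoly).IsRoot z := by
    rwa [Matrix.charpoly_map]
  -- determinant vanishing
  have hdet : (Matrix.diagonal (fun _ : Fin n => z) - B.map c).det = 0 := by
    have h0 : (Matrix.charpoly (B.map c)).eval z = 0 := hchar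
    rw [Matrix.charpoly] at h0
    have h0' : (Polynomial.evalRingHom z) (Matrix.charmatrix (B.map c)).det = 0 := h0
    rw [RingHom.map_det] at h0'
    rw [RingHom.mapMatrix_apply] at h0'
    convert h0' using 2
    ext i j
    by_cases hij : i = j
    · subst hij
      simp [Matrix.charmatrix_apply_eq, Matrix.diagonal_apply_eq]
    · simp [Matrix.charmatrix_apply_ne _ _ _ hij, Matrix.diagonal_apply_ne _ hij]
  obtain ⟨v, hv0, hveq⟩ := (Matrix.exists_mulVec_eq_zero_iff).mpr hdet
  have hBv : (B.map c) *ᵥ v = z • v := by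
    rw [Matrix.sub_mulVec] at hveq
    have hd : Matrix.diagonal (fun _ : Fin n => z) *ᵥ v = z • v := by
      ext i; simp [Matrix.mulVec_diagonal]
    rw [hd] at hveq
    exact (sub_eq_zero.mp hveq).symm
  -- the complexified matrices
  set Mc := M.map c with hMc
  set Pc : Fin n → ℂ := fun i => c (P i) with hPc
  have hPcne : ∀ i, Pc i ≠ 0 := fun i => by
    simp [hPc, hc, Complex.ofReal_ne_zero]
    exact (hP i).ne'
  have hBc : B.map c = Matrix.diagonal Pc * (Mc * Mcᴴ) * Matrix.diagonal (fun i => (Pc i)⁻¹) := by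
    rw [h]
    rw [Matrix.map_mul, Matrix.map_mul, Matrix.map_mul]
    congr 1
    · congr 1
      · exact Matrix.diagonal_map (map_zero c)
      · congr 1
        ext i j
        simp [hMc, Matrix.conjTranspose_apply, Complex.star_def, hc, Complex.conj_ofReal]
    · rw [Matrix.diagonal_map (map_zero c)]
      exact congrArg Matrix.diagonal (funext fun i => map_inv₀ c (P i))
  set w : Fin n → ℂ := Matrix.diagonal (fun i => (Pc i)⁻¹) *ᵥ v with hw
  have hw0 : w ≠ 0 := by
    intro hcon
    apply hv0
    ext i
    have : w i = 0 := by rw [hcon]; rfl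
    rw [hw] at this
    simp [Matrix.mulVec_diagonal] at this
    rcases this with h1 | h1
    · exact absurd h1 (hPcne i)
    · exact h1
  have hdiagmul : Matrix.diagonal (fun i => (Pc i)⁻¹) * Matrix.diagonal Pc = 1 := by
    rw [Matrix.diagonal_mul_diagonal]
    have : (fun i => (Pc i)⁻¹ * Pc i) = fun _ => (1 : ℂ) := funext fun i => inv_mul_cancel₀ (hPcne i)
    rw [this, Matrix.diagonal_one]
  have hNw : (Mc * Mcᴴ) *ᵥ w = z • w := by
    have h1 : Matrix.diagonal (fun i => (Pc i)⁻¹) *ᵥ ((B.map c) *ᵥ v)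
        = Matrix.diagonal (fun i => (Pc i)⁻¹) *ᵥ (z • v) := by rw [hBv]
    rw [hBc] at h1
    rw [Matrix.mulVec_mulVec] at h1
    rw [show Matrix.diagonal (fun i => (Pc i)⁻¹) * (Matrix.diagonal Pc * (Mc * Mcᴴ) *
        Matrix.diagonal fun i => (Pc i)⁻¹) = (Mc * Mcᴴ) * Matrix.diagonal (fun i => (Pc i)⁻¹) by
      rw [← Matrix.mul_assoc, ← Matrix.mul_assoc, hdiagmul, Matrix.one_mul]] at h1
    rw [← Matrix.mulVec_mulVec] at h1
    rw [← hw] at h1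
    rw [h1]
    rw [Matrix.mulVec_smul]
  have hpsd : (Mc * Mcᴴ).PosSemidef := Matrix.posSemidef_self_mul_conjTranspose Mc
  have h2 : (0 : ℂ) ≤ dotProduct (star w) ((Mc * Mcᴴ) *ᵥ w) := hpsd.dotProduct_mulVec_nonneg w
  rw [hNw] at h2
  have hq : dotProduct (star w) (z • w) = z * dotProduct (star w) w := by
    rw [dotProduct_smul, smul_eq_mul]
  rw [hq] at h2
  have hqpos : (0 : ℂ) < dotProduct (star w) w := dotProduct_star_self_pos_iff.mpr hw0
  set q := dotProduct (star w) w with hqdef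
  rw [Complex.lt_def] at hqpos
  rw [Complex.le_def] at h2
  simp only [Complex.zero_re, Complex.zero_im, Complex.mul_re, Complex.mul_im] at h2 hqpos
  obtain ⟨hqre, hqim⟩ := hqpos
  obtain ⟨h2re, h2im⟩ := h2
  rw [← hqim] at h2re h2im
  -- q.im = 0
  have hzim : z.im = 0 := by
    have : z.im * q.re = 0 := by linarith [h2im]
    rcases mul_eq_zero.mp this with h' | h'
    · exact h'
    · exact absurd h' (ne_of_gt hqre)
  have hzre : 0 ≤ z.re := by
    have : 0 ≤ z.re * q.re := by nlinarith [h2re, hzim]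
    nlinarith [hqre]
  exact ⟨z.re, hzre, Complex.ext (by simp) (by simp [hzim])⟩

/-- `M` has real nonnegative spectrum. -/
def MemPS {n : ℕ} (M : Matrix (Fin n) (Fin n) ℝ) : Prop :=
  ∀ z : ℂ, ((M.charpoly).map (algebraMap ℝ ℂ)).IsRoot z → ∃ x : ℝ, 0 ≤ x ∧ z = x

/-- if `Γ_A` is a forest then for all `A₁, A₂ ∈ Q(A)`, the product `A₁A₂ᵀ`
is diagonally similar to a positive semidefinite matrix (one of the form `M Mᵀ`); in
particular all its eigenvalues are real and nonnegative. -/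
theorem forest_prod_diagonally_similar_psd {n m : ℕ} (A : Matrix (Fin n) (Fin m) ℝ)
    (hA : (bipartiteGraph A).IsAcyclic) :
    ∀ A₁ ∈ Qual A, ∀ A₂ ∈ Qual A,
      (∃ (P : Fin n → ℝ) (M : Matrix (Fin n) (Fin m) ℝ), (∀ i, 0 < P i) ∧
        A₁ * A₂ᵀ = Matrix.diagonal P * (M * Mᵀ) * (Matrix.diagonal P)⁻¹) ∧
      MemPS (A₁ * A₂ᵀ) := by
  intro A₁ h₁ A₂ h₂
  classical
  -- the weight function on the bipartite graph
  set w : (Fin n ⊕ Fin m) → (Fin n ⊕ Fin m) → ℝ := fun x y =>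
    match x, y with
    | .inl i, .inr j => A₂ i j / A₁ i j
    | .inr j, .inl i => A₂ i j / A₁ i j
    | _, _ => 1 with hwdef
  have hsym : ∀ u v, w u v = w v u := by
    rintro (i | j) (i' | j') <;> rfl
  have hsameA₁ : ∀ i j, A i j ≠ 0 → A₁ i j ≠ 0 := fun i j hij h0 => by
    have : Real.sign (A i j) = 0 := by rw [← h₁ i j, h0, Real.sign_zero]
    exact hij (Real.sign_eq_zero_iff.mp this)
  have hratio : ∀ i j, A i j ≠ 0 → 0 < A₂ i j / A₁ i j := fun i j hij =>
    my_sign_ratio (hsameA₁ i j hij) ((h₁ i j).trans (h₂ i j).symm)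
  have hpos : ∀ u v, (bipartiteGraph A).Adj u v → 0 < w u v := by
    intro u v huv
    rw [bipartiteGraph, SimpleGraph.fromRel_adj] at huv
    obtain ⟨-, h' | h'⟩ := huv <;> obtain ⟨i, j, rfl, rfl, hij⟩ := h'
    · exact hratio i j hij
    · exact hratio i j hij
  obtain ⟨x, hxpos, hx⟩ := my_scaling ((bipartiteGraph A).edgeSet.ncard) (bipartiteGraph A)
    rfl hA w hsym hpos
  set d : Fin n → ℝ := fun i => x (Sum.inl i) with hddef
  set e : Fin m → ℝ := fun j => x (Sum.inr j) with hedef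
  have hd : ∀ i, 0 < d i := fun i => hxpos _
  have he : ∀ j, 0 < e j := fun j => hxpos _
  have key : ∀ i j, A₂ i j = d i * e j * A₁ i j := by
    intro i j
    by_cases hij : A i j = 0
    · have h10 : A₁ i j = 0 := Real.sign_eq_zero_iff.mp (by rw [h₁ i j, hij, Real.sign_zero])
      have h20 : A₂ i j = 0 := Real.sign_eq_zero_iff.mp (by rw [h₂ i j, hij, Real.sign_zero])
      rw [h10, h20, mul_zero]
    · have hadj : (bipartiteGraph A).Adj (Sum.inl i) (Sum.inr j) := by
        rw [bipartiteGraph, SimpleGraph.fromRel_adj]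
        exact ⟨by simp, Or.inl ⟨i, j, rfl, rfl, hij⟩⟩
      have hde : d i * e j = A₂ i j / A₁ i j := hx _ _ hadj
      have h1ne : A₁ i j ≠ 0 := hsameA₁ i j hij
      rw [hde, div_mul_cancel₀ _ h1ne]
  -- the diagonal scaling and the PSD factor
  set P : Fin n → ℝ := fun i => (Real.sqrt (d i))⁻¹ with hPdef
  set M : Matrix (Fin n) (Fin m) ℝ :=
    Matrix.of (fun i j => Real.sqrt (d i) * A₁ i j * Real.sqrt (e j)) with hMdef
  have hPpos : ∀ i, 0 < P i := fun i => inv_pos.mpr (Real.sqrt_pos.mpr (hd i))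
  have hPinv : (Matrix.diagonal P)⁻¹ = Matrix.diagonal (fun i => Real.sqrt (d i)) := by
    apply Matrix.inv_eq_right_inv
    rw [Matrix.diagonal_mul_diagonal]
    have : (fun i => P i * Real.sqrt (d i)) = fun _ => (1 : ℝ) :=
      funext fun i => inv_mul_cancel₀ (Real.sqrt_pos.mpr (hd i)).ne'
    rw [this, Matrix.diagonal_one]
  have hsim : A₁ * A₂ᵀ = Matrix.diagonal P * (M * Mᵀ) * (Matrix.diagonal P)⁻¹ := by
    rw [hPinv]
    ext i k
    rw [Matrix.mul_diagonal, Matrix.diagonal_mul, Matrix.mul_apply, Matrix.mul_apply,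
      Finset.mul_sum, Finset.sum_mul]
    apply Finset.sum_congr rfl
    intro j _
    rw [Matrix.transpose_apply, Matrix.transpose_apply, key k j]
    simp only [hMdef, Matrix.of_apply, hPdef]
    have s1 : Real.sqrt (d i) ≠ 0 := (Real.sqrt_pos.mpr (hd i)).ne'
    have s2 : Real.sqrt (e j) * Real.sqrt (e j) = e j := Real.mul_self_sqrt (he j).le
    have s3 : Real.sqrt (d k) * Real.sqrt (d k) = d k := Real.mul_self_sqrt (hd k).le
    rw [← s2, ← s3]
    field_simp
    rw [Real.sqrt_sq (Real.sqrt_nonneg (e j)), Real.sqrt_sq (Real.sqrt_nonneg (d k))]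
    ring
  refine ⟨⟨P, M, hPpos, hsim⟩, ?_⟩
  apply my_memPS (A₁ * A₂ᵀ) P hPpos M
  rw [hsim, hPinv]
  congr 1
  exact congrArg Matrix.diagonal (funext fun i => (inv_inv _).symm)
end

section
/- If the bipartite graph of A ∈ ℝ^{n×m} contains a cycle of length 2r with r ≥ 2, then there exist matrices B, C in the closure of the qualitative class of A such that the characteristic polynomial of BC^T equals λ^{n−r}(λ^r − 1) or λ^{n−r}(λ^r + 1); in particular BC^T has an eigenvalue not lying on the nonnegative real axis. -/
open Matrix Polynomial

/-- The closure of the qualitative class of `A`: each entry is either zero or has the same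
sign as the corresponding entry of `A`. -/
def Qual0 {n m : ℕ} (A : Matrix (Fin n) (Fin m) ℝ) : Set (Matrix (Fin n) (Fin m) ℝ) :=
  {B | ∀ i j, B i j = 0 ∨ Real.sign (B i j) = Real.sign (A i j)}

lemma getVert_eq_support_get {V : Type*} {G : SimpleGraph V} {u v : V} (p : G.Walk u v)
    (t : ℕ) (ht : t < p.support.length) : p.support.get ⟨t, ht⟩ = p.getVert t := by
  induction p generalizing t with
  | nil =>
    have : t = 0 := by simpa using ht
    subst this; simp [SimpleGraph.Walk.getVert]
  | cons h q ih =>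
    cases t with
    | zero => simp [SimpleGraph.Walk.getVert]
    | succ t =>
      simp only [SimpleGraph.Walk.support_cons, List.get_cons_succ,
        SimpleGraph.Walk.getVert_cons_succ]
      exact ih t (by simpa [SimpleGraph.Walk.support_cons] using ht)

lemma cycle_getVert_inj {V : Type*} {G : SimpleGraph V} {v : V} {c : G.Walk v v}
    (hc : c.IsCycle) {t t' : ℕ} (ht : t < c.length) (ht' : t' < c.length)
    (h : c.getVert t = c.getVert t') : t = t' := by
  have hlen : c.support.length = c.length + 1 := SimpleGraph.Walk.length_support c
  have htail := hc.support_nodup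
  have key : ∀ a b : ℕ, 1 ≤ a → a ≤ c.length → 1 ≤ b → b ≤ c.length →
      c.getVert a = c.getVert b → a = b := by
    intro a b ha1 ha2 hb1 hb2 hab
    have ha' : a - 1 < c.support.tail.length := by
      simp [List.length_tail, hlen]; omega
    have hb' : b - 1 < c.support.tail.length := by
      simp [List.length_tail, hlen]; omega
    have hga : c.support.tail.get ⟨a - 1, ha'⟩ = c.getVert a := by
      rw [List.get_tail, getVert_eq_support_get]
      congr 1; omega
    have hgb : c.support.tail.get ⟨b - 1, hb'⟩ = c.getVert b := by
      rw [List.get_tail, getVert_eq_support_get]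
      congr 1; omega
    have h2 := (List.Nodup.get_inj_iff htail (i := ⟨a-1, ha'⟩) (j := ⟨b-1, hb'⟩)).mp
      (by rw [hga, hgb]; exact hab)
    simp only [Fin.mk.injEq] at h2
    omega
  rcases Nat.eq_zero_or_pos t with h0 | h1 <;> rcases Nat.eq_zero_or_pos t' with h0' | h1'
  · omega
  · exfalso
    subst h0
    rw [SimpleGraph.Walk.getVert_zero] at h
    have hv : c.getVert c.length = v := SimpleGraph.Walk.getVert_length c
    have := key t' c.length h1' (le_of_lt ht') (by omega) le_rfl (by rw [hv, ← h])
    omega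
  · exfalso
    subst h0'
    rw [SimpleGraph.Walk.getVert_zero] at h
    have hv : c.getVert c.length = v := SimpleGraph.Walk.getVert_length c
    have := key t c.length h1 (le_of_lt ht) (by omega) le_rfl (by rw [hv, h])
    omega
  · exact key t t' h1 (le_of_lt ht) h1' (le_of_lt ht') h

lemma fin_succ_val_cases {N : ℕ} (a : Fin (N+1)) :
    ((a+1 : Fin (N+1)) : ℕ) = (a:ℕ)+1 ∨ ((a:ℕ) = N ∧ ((a+1 : Fin (N+1)) : ℕ) = 0) := by
  by_cases h : a = Fin.last N
  · right
    refine ⟨by rw [h]; rfl, by rw [Fin.val_add_one, if_pos h]⟩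
  · left
    rw [Fin.val_add_one, if_neg h]

lemma charpoly_cycle {r' : ℕ} (hr : 1 ≤ r') (ε : Fin (r' + 1) → ℝ) :
    (Matrix.of fun k l : Fin (r' + 1) => if l = k + 1 then ε k else 0).charpoly
      = X ^ (r' + 1) - C (∏ k, ε k) := by
  set M : Matrix (Fin (r'+1)) (Fin (r'+1)) ℝ :=
    Matrix.of fun k l : Fin (r' + 1) => if l = k + 1 then ε k else 0 with hM
  have hMapp : ∀ k l, M k l = if l = k + 1 then ε k else 0 := fun k l => rfl
  have hMeq : ∀ k l : Fin (r'+1), l = k + 1 → M k l = ε k := by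
    intro k l h; rw [hMapp, if_pos h]
  have hMne : ∀ k l : Fin (r'+1), ((l:ℕ) ≠ (k:ℕ)+1 ∧ ((k:ℕ) ≠ r' ∨ (l:ℕ) ≠ 0)) → M k l = 0 := by
    intro k l h
    rw [hMapp, if_neg]
    intro he
    have hv : (l:ℕ) = ((k+1 : Fin (r'+1)):ℕ) := congrArg Fin.val he
    rcases fin_succ_val_cases k with hc | ⟨hc1, hc2⟩ <;> omega
  have hne_self : ∀ k l : Fin (r'+1), (k:ℕ) ≠ (l:ℕ) → k ≠ l :=
    fun k l h he => h (congrArg Fin.val he)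
  have hdiag : ∀ k, M.charmatrix k k = X := by
    intro k
    rw [charmatrix_apply_eq, hMne, map_zero, sub_zero]
    constructor
    · rcases fin_succ_val_cases k with hc | ⟨hc1, hc2⟩ <;> omega
    · rcases Nat.eq_zero_or_pos (k:ℕ) with h | h
      · left; omega
      · right; omega
  have hlast0 : (0 : Fin (r'+1)) = Fin.last r' + 1 := by
    apply Fin.val_injective
    rcases fin_succ_val_cases (Fin.last r') with hc | ⟨hc1, hc2⟩
    · exfalso
      have hlt := (Fin.last r' + 1).isLt
      rw [Fin.val_last] at hc
      omega
    · rw [hc2]; rfl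
  have hlast_ne : Fin.last r' ≠ (0 : Fin (r'+1)) :=
    hne_self _ _ (by simp [Fin.last]; omega)
  have hPlast : M.charmatrix (Fin.last r') 0 = - C (ε (Fin.last r')) := by
    rw [charmatrix_apply_ne _ _ _ hlast_ne, hMeq _ _ hlast0]
  have hmid : ∀ i : Fin (r'+1), i ≠ 0 → i ≠ Fin.last r' → M.charmatrix i 0 = 0 := by
    intro i h0 hl
    rw [charmatrix_apply_ne _ _ _ h0, hMne, map_zero, neg_zero]
    have hv0 : (i:ℕ) ≠ 0 := fun h => h0 (Fin.val_injective h)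
    have hvl : (i:ℕ) ≠ r' := fun h => hl (Fin.val_injective (by rw [h, Fin.val_last]))
    refine ⟨?_, Or.inl hvl⟩
    simp only [Fin.val_zero]
    omega
  have minor0 : (M.charmatrix.submatrix ((0 : Fin (r'+1)).succAbove) Fin.succ).det = X ^ r' := by
    rw [Matrix.det_of_upperTriangular]
    · have he : ∀ i : Fin r', (M.charmatrix.submatrix ((0 : Fin (r'+1)).succAbove) Fin.succ) i i
          = X := by
        intro i
        simp only [Matrix.submatrix_apply, Fin.succAbove_zero]
        exact hdiag i.succ
      rw [Finset.prod_congr rfl (fun i _ => he i)]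
      simp
    · intro i j hij
      have hij' : (j:ℕ) < (i:ℕ) := hij
      simp only [Matrix.submatrix_apply, Fin.succAbove_zero]
      rw [charmatrix_apply_ne _ _ _ (hne_self _ _ (by simp; omega)), hMne, map_zero, neg_zero]
      rcases fin_succ_val_cases i.succ with hc | ⟨hc1, hc2⟩ <;>
        simp only [Fin.val_succ] at * <;> constructor <;> omega
  have minorLast : (M.charmatrix.submatrix ((Fin.last r').succAbove) Fin.succ).det
      = ∏ k : Fin r', (- C (ε k.castSucc)) := by
    rw [Matrix.det_of_lowerTriangular]
    · apply Finset.prod_congr rfl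
      intro k _
      simp only [Matrix.submatrix_apply, Fin.succAbove_last]
      rw [charmatrix_apply_ne _ _ _ (hne_self _ _ (by simp)), hMeq]
      apply Fin.val_injective
      rcases fin_succ_val_cases k.castSucc with hc | ⟨hc1, hc2⟩ <;>
        simp only [Fin.val_succ, Fin.coe_castSucc] at * <;> omega
    · intro i j hij
      have hij' : (i:ℕ) < (j:ℕ) := hij
      simp only [Matrix.submatrix_apply, Fin.succAbove_last]
      rw [charmatrix_apply_ne _ _ _ (hne_self _ _ (by simp; omega)), hMne, map_zero, neg_zero]
      rcases fin_succ_val_cases i.castSucc with hc | ⟨hc1, hc2⟩ <;>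
        simp only [Fin.val_succ, Fin.coe_castSucc] at * <;> constructor <;> omega
  have hzero_ne_last : (0 : Fin (r'+1)) ≠ Fin.last r' := fun h => hlast_ne h.symm
  rw [Matrix.charpoly, Matrix.det_succ_column_zero,
    ← Finset.sum_subset (Finset.subset_univ ({0, Fin.last r'} : Finset (Fin (r'+1))))
      (by
        intro x _ hx
        simp only [Finset.mem_insert, Finset.mem_singleton, not_or] at hx
        rw [hmid x hx.1 hx.2, mul_zero, zero_mul]),
    Finset.sum_pair hzero_ne_last, hdiag 0, hPlast, minor0, minorLast]
  have hprodneg : ∏ k : Fin r', (- C (ε k.castSucc))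
      = (-1 : ℝ[X]) ^ r' * ∏ k : Fin r', C (ε k.castSucc) := by
    rw [Finset.prod_congr rfl (fun (k : Fin r') _ => show - C (ε k.castSucc)
        = (-1) * C (ε k.castSucc) by ring), Finset.prod_mul_distrib, Finset.prod_const,
      Finset.card_univ, Fintype.card_fin]
  rw [hprodneg]
  have hppow : ((-1 : ℝ[X]) ^ r') * ((-1 : ℝ[X]) ^ r') = 1 := by
    rw [← pow_add, ← two_mul, pow_mul, neg_one_sq, one_pow]
  have hCprod : C (∏ k, ε k) = (∏ k : Fin r', C (ε k.castSucc)) * C (ε (Fin.last r')) := by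
    rw [Fin.prod_univ_castSucc, _root_.map_mul, map_prod]
  rw [hCprod]
  have hlastval : ((Fin.last r' : Fin (r'+1)) : ℕ) = r' := rfl
  have hzval : (((0 : Fin (r'+1))) : ℕ) = 0 := rfl
  rw [hlastval, hzval]
  linear_combination (- C (ε (Fin.last r')) * ∏ k : Fin r', C (ε k.castSucc)) * hppow

lemma extract_cycle {n m r : ℕ} [NeZero r] (A : Matrix (Fin n) (Fin m) ℝ) (hr : 2 ≤ r)
    (hcyc : ∃ (v : Fin n ⊕ Fin m) (c : (SimpleGraph.fromRel
        (fun x y => ∃ i j, x = Sum.inl i ∧ y = Sum.inr j ∧ A i j ≠ 0)).Walk v v),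
      c.IsCycle ∧ c.length = 2 * r) :
    ∃ (i : Fin r → Fin n) (j : Fin r → Fin m), Function.Injective i ∧ Function.Injective j ∧
      (∀ k, A (i k) (j k) ≠ 0) ∧ (∀ k, A (i (k + 1)) (j k) ≠ 0) := by
  obtain ⟨v, c, hcyc, hlen⟩ := hcyc
  have hrpos : 0 < r := by omega
  have step : ∀ t, t < c.length →
      (∃ a b, c.getVert t = Sum.inl a ∧ c.getVert (t+1) = Sum.inr b ∧ A a b ≠ 0) ∨
      (∃ a b, c.getVert t = Sum.inr b ∧ c.getVert (t+1) = Sum.inl a ∧ A a b ≠ 0) := by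
    intro t ht
    have hadj := c.adj_getVert_succ ht
    rw [SimpleGraph.fromRel_adj] at hadj
    rcases hadj.2 with ⟨a, b, h1, h2, h3⟩ | ⟨a, b, h1, h2, h3⟩
    · exact Or.inl ⟨a, b, h1, h2, h3⟩
    · exact Or.inr ⟨a, b, h2, h1, h3⟩
  have flip : ∀ t, t < c.length → (c.getVert (t+1)).isLeft = !(c.getVert t).isLeft := by
    intro t ht
    rcases step t ht with ⟨a, b, h1, h2, _⟩ | ⟨a, b, h1, h2, _⟩ <;> rw [h1, h2] <;> rfl
  have side : ∀ t, t ≤ c.length →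
      (c.getVert t).isLeft = (if Even t then v.isLeft else !v.isLeft) := by
    intro t
    induction t with
    | zero => intro _; simp
    | succ t ih =>
      intro ht
      rw [flip t (by omega), ih (by omega)]
      rcases Nat.even_or_odd t with he | ho
      · rw [if_pos he, if_neg (by rw [Nat.even_add_one]; exact not_not_intro he)]
      · have hne : ¬ Even t := by simpa [Nat.not_even_iff_odd] using ho
        rw [if_neg hne, if_pos (Nat.even_add_one.mpr hne), Bool.not_not]
  have inj2 : ∀ (t t' : ℕ), t < 2*r → t' < 2*r → c.getVert t = c.getVert t' → t = t' := by
    intro t t' h1 h2 h3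
    exact cycle_getVert_inj hcyc (by omega) (by omega) h3
  have hval : ∀ k : Fin r, ((k+1 : Fin r) : ℕ) = ((k:ℕ)+1) % r := by
    intro k
    rw [Fin.add_def, Fin.val_one', Nat.mod_eq_of_lt (show 1 < r by omega)]
  have hwrapv : c.getVert (2*r) = v := by
    rw [← hlen]; exact c.getVert_length
  cases hvl : v.isLeft
  case true =>
    have hL : ∀ k : Fin r, ∃ a, c.getVert (2*(k:ℕ)) = Sum.inl a := by
      intro k
      have h := side (2*(k:ℕ)) (by omega)
      rw [if_pos (even_two_mul _), hvl] at h
      exact Sum.isLeft_iff.mp h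
    choose iF hiF using hL
    have hR : ∀ k : Fin r, ∃ b, c.getVert (2*(k:ℕ)+1) = Sum.inr b := by
      intro k
      have h := side (2*(k:ℕ)+1) (by omega)
      rw [if_neg (by simp [Nat.even_add_one]), hvl] at h
      exact Sum.isRight_iff.mp (by simp [← Sum.not_isLeft, h])
    choose jF hjF using hR
    have hnext : ∀ k : Fin r, c.getVert (2*(k:ℕ) + 2) = Sum.inl (iF (k+1)) := by
      intro k
      have h := hiF (k+1)
      rw [hval k] at h
      by_cases hk : (k:ℕ) + 1 < r
      · rw [Nat.mod_eq_of_lt hk] at h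
        rw [← h]
        ring_nf
      · have hk' : (k:ℕ) + 1 = r := by omega
        rw [hk', Nat.mod_self, Nat.mul_zero] at h
        rw [show 2*(k:ℕ)+2 = 2*r by omega, hwrapv, ← c.getVert_zero, h]
    have e1 : ∀ k : Fin r, A (iF k) (jF k) ≠ 0 := by
      intro k
      rcases step (2*(k:ℕ)) (by omega) with ⟨a, b, h1, h2, h3⟩ | ⟨a, b, h1, h2, h3⟩
      · rw [hiF k, Sum.inl.injEq] at h1; rw [hjF k, Sum.inr.injEq] at h2
        rw [h1, h2]; exact h3
      · rw [hiF k] at h1; exact absurd h1 (by simp)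
    have e2 : ∀ k : Fin r, A (iF (k+1)) (jF k) ≠ 0 := by
      intro k
      rcases step (2*(k:ℕ)+1) (by omega) with ⟨a, b, h1, h2, h3⟩ | ⟨a, b, h1, h2, h3⟩
      · rw [hjF k] at h1; exact absurd h1 (by simp)
      · rw [hjF k, Sum.inr.injEq] at h1
        rw [show 2*(k:ℕ)+1+1 = 2*(k:ℕ)+2 by omega, hnext k, Sum.inl.injEq] at h2
        rw [h2, h1]; exact h3
    have hiinj : Function.Injective iF := by
      intro k k' h
      have := inj2 (2*(k:ℕ)) (2*(k':ℕ)) (by omega) (by omega) (by rw [hiF k, hiF k', h])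
      exact Fin.val_injective (by omega)
    have hjinj : Function.Injective jF := by
      intro k k' h
      have := inj2 (2*(k:ℕ)+1) (2*(k':ℕ)+1) (by omega) (by omega) (by rw [hjF k, hjF k', h])
      exact Fin.val_injective (by omega)
    exact ⟨iF, jF, hiinj, hjinj, e1, e2⟩
  case false =>
    have hL : ∀ k : Fin r, ∃ a, c.getVert (2*(k:ℕ)+1) = Sum.inl a := by
      intro k
      have h := side (2*(k:ℕ)+1) (by omega)
      rw [if_neg (by simp [Nat.even_add_one]), hvl] at h
      exact Sum.isLeft_iff.mp (by simpa using h)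
    choose iF hiF using hL
    have hR : ∀ k : Fin r, ∃ b, c.getVert (2*(k:ℕ)) = Sum.inr b := by
      intro k
      have h := side (2*(k:ℕ)) (by omega)
      rw [if_pos (even_two_mul _), hvl] at h
      exact Sum.isRight_iff.mp (by simp [← Sum.not_isLeft, h])
    choose jG hjG using hR
    have hnext : ∀ k : Fin r, c.getVert (2*(k:ℕ) + 2) = Sum.inr (jG (k+1)) := by
      intro k
      have h := hjG (k+1)
      rw [hval k] at h
      by_cases hk : (k:ℕ) + 1 < r
      · rw [Nat.mod_eq_of_lt hk] at h
        rw [← h]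
        ring_nf
      · have hk' : (k:ℕ) + 1 = r := by omega
        rw [hk', Nat.mod_self, Nat.mul_zero] at h
        rw [show 2*(k:ℕ)+2 = 2*r by omega, hwrapv, ← c.getVert_zero, h]
    have e1 : ∀ k : Fin r, A (iF k) (jG k) ≠ 0 := by
      intro k
      rcases step (2*(k:ℕ)) (by omega) with ⟨a, b, h1, h2, h3⟩ | ⟨a, b, h1, h2, h3⟩
      · rw [hjG k] at h1; exact absurd h1 (by simp)
      · rw [hjG k, Sum.inr.injEq] at h1; rw [hiF k, Sum.inl.injEq] at h2
        rw [h2, h1]; exact h3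
    have e2 : ∀ k : Fin r, A (iF k) (jG (k+1)) ≠ 0 := by
      intro k
      rcases step (2*(k:ℕ)+1) (by omega) with ⟨a, b, h1, h2, h3⟩ | ⟨a, b, h1, h2, h3⟩
      · rw [hiF k, Sum.inl.injEq] at h1
        rw [show 2*(k:ℕ)+1+1 = 2*(k:ℕ)+2 by omega, hnext k, Sum.inr.injEq] at h2
        rw [h1, h2]; exact h3
      · rw [hiF k] at h1; exact absurd h1 (by simp)
    have hiinj : Function.Injective iF := by
      intro k k' h
      have := inj2 (2*(k:ℕ)+1) (2*(k':ℕ)+1) (by omega) (by omega) (by rw [hiF k, hiF k', h])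
      exact Fin.val_injective (by omega)
    have hjinj : Function.Injective jG := by
      intro k k' h
      have := inj2 (2*(k:ℕ)) (2*(k':ℕ)) (by omega) (by omega) (by rw [hjG k, hjG k', h])
      exact Fin.val_injective (by omega)
    refine ⟨iF, fun k => jG (k+1), hiinj, fun k k' h => ?_, fun k => e2 k, fun k => e1 (k+1)⟩
    have := hjinj h
    exact add_right_cancel this

lemma mysign_sign (x : ℝ) : Real.sign (Real.sign x) = Real.sign x := by
  rcases lt_trichotomy x 0 with h | h | h
  · rw [Real.sign_of_neg h]; exact Real.sign_of_neg (by norm_num)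
  · simp [h, Real.sign_zero]
  · rw [Real.sign_of_pos h]; exact Real.sign_of_pos (by norm_num)

lemma mysign_mul_self (x : ℝ) (hx : x ≠ 0) : Real.sign x * Real.sign x = 1 := by
  rcases lt_trichotomy x 0 with h | h | h
  · rw [Real.sign_of_neg h]; norm_num
  · exact absurd h hx
  · rw [Real.sign_of_pos h]; norm_num


lemma charpoly_zero_mat (s : ℕ) : (0 : Matrix (Fin s) (Fin s) ℝ).charpoly = X ^ s := by
  have h : charmatrix (0 : Matrix (Fin s) (Fin s) ℝ) = Matrix.diagonal (fun _ => (X:ℝ[X])) := by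
    ext a b
    by_cases h : a = b
    · subst h; rw [charmatrix_apply_eq]; simp
    · rw [charmatrix_apply_ne _ _ _ h]; simp [Matrix.diagonal_apply_ne _ h]
  rw [Matrix.charpoly, h, Matrix.det_diagonal]
  simp

lemma main_alg {n m r : ℕ} [NeZero r] (hr : 2 ≤ r) (A : Matrix (Fin n) (Fin m) ℝ)
    (i : Fin r → Fin n) (j : Fin r → Fin m) (hi : Function.Injective i)
    (hj : Function.Injective j)
    (e1 : ∀ k, A (i k) (j k) ≠ 0) (e2 : ∀ k, A (i (k + 1)) (j k) ≠ 0) :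
    ∃ B ∈ Qual0 A, ∃ C ∈ Qual0 A,
      ((B * Cᵀ).charpoly = X ^ (n - r) * (X ^ r - 1) ∨
        (B * Cᵀ).charpoly = X ^ (n - r) * (X ^ r + 1)) ∧
      ∃ z : ℂ, (((B * Cᵀ).charpoly).map (algebraMap ℝ ℂ)).IsRoot z ∧
        ¬ ∃ x : ℝ, 0 ≤ x ∧ z = x := by
  classical
  set B : Matrix (Fin n) (Fin m) ℝ :=
    Matrix.of (fun a b => if ∃ k, i k = a ∧ j k = b then Real.sign (A a b) else 0) with hB
  set Cm : Matrix (Fin n) (Fin m) ℝ :=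
    Matrix.of (fun a b => if ∃ k, i (k+1) = a ∧ j k = b then Real.sign (A a b) else 0) with hC
  have hBq : B ∈ Qual0 A := by
    intro a b
    by_cases h : ∃ k, i k = a ∧ j k = b
    · right
      show Real.sign (if _ then _ else _) = _
      rw [if_pos h, mysign_sign]
    · left
      show (if _ then _ else _) = (0:ℝ)
      rw [if_neg h]
  have hCq : Cm ∈ Qual0 A := by
    intro a b
    by_cases h : ∃ k, i (k+1) = a ∧ j k = b
    · right
      show Real.sign (if _ then _ else _) = _
      rw [if_pos h, mysign_sign]
    · left
      show (if _ then _ else _) = (0:ℝ)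
      rw [if_neg h]
  set ε : Fin r → ℝ := fun k => Real.sign (A (i k) (j k)) * Real.sign (A (i (k+1)) (j k))
    with hε
  set Mfull : Matrix (Fin n) (Fin n) ℝ :=
    Matrix.of (fun a a' => ∑ k, if i k = a ∧ i (k+1) = a' then ε k else 0) with hMfull
  have hzeroM : ∀ a a', (¬ ∃ k, i k = a ∧ i (k+1) = a') → Mfull a a' = 0 := by
    intro a a' h
    show (∑ k, if i k = a ∧ i (k+1) = a' then ε k else 0) = 0
    apply Finset.sum_eq_zero
    intro k _
    rw [if_neg (fun hc => h ⟨k, hc⟩)]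
  have key : B * Cmᵀ = Mfull := by
    ext a a'
    rw [Matrix.mul_apply]
    simp only [Matrix.transpose_apply]
    by_cases h : ∃ k, i k = a ∧ i (k+1) = a'
    · obtain ⟨k0, hk1, hk2⟩ := h
      have hRHS : Mfull a a' = ε k0 := by
        show (∑ k, if i k = a ∧ i (k+1) = a' then ε k else 0) = ε k0
        rw [Finset.sum_eq_single (f := fun k => if i k = a ∧ i (k+1) = a' then ε k else 0) k0]
        · rw [if_pos ⟨hk1, hk2⟩]
        · intro k _ hk
          rw [if_neg]
          rintro ⟨h1, -⟩
          exact hk (hi (h1.trans hk1.symm))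
        · intro hmem
          exact absurd (Finset.mem_univ k0) hmem
      have hLHS : (∑ b, B a b * Cm a' b) = ε k0 := by
        rw [Finset.sum_eq_single (f := fun b => B a b * Cm a' b) (j k0)]
        · simp only [hB, hC, Matrix.of_apply]
          rw [if_pos ⟨k0, hk1, rfl⟩, if_pos ⟨k0, hk2, rfl⟩]
          simp only [hε]
          rw [hk1, hk2]
        · intro b _ hb
          simp only [hB, hC, Matrix.of_apply]
          rw [if_neg, zero_mul]
          rintro ⟨k, hk1', hk2'⟩
          have hkk : k = k0 := hi (hk1'.trans hk1.symm)
          exact hb (hk2' ▸ hkk ▸ rfl)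
        · intro hmem
          exact absurd (Finset.mem_univ (j k0)) hmem
      rw [hRHS, hLHS]
    · rw [hzeroM a a' h]
      apply Finset.sum_eq_zero
      intro b _
      simp only [hB, hC, Matrix.of_apply]
      by_cases h1 : ∃ k, i k = a ∧ j k = b
      · by_cases h2 : ∃ k, i (k+1) = a' ∧ j k = b
        · obtain ⟨k, hk1, hk2⟩ := h1
          obtain ⟨l, hl1, hl2⟩ := h2
          have hkl : k = l := hj (hk2.trans hl2.symm)
          exact absurd ⟨k, hk1, hkl ▸ hl1⟩ h
        · rw [if_neg h2, mul_zero]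
      · rw [if_neg h1, zero_mul]
  -- now compute charpoly of Mfull
  obtain ⟨r', rfl⟩ : ∃ r', r = r' + 1 := ⟨r - 1, by omega⟩
  have hr' : 1 ≤ r' := by omega
  set M' : Matrix (Fin (r'+1)) (Fin (r'+1)) ℝ :=
    Matrix.of (fun k l : Fin (r'+1) => if l = k + 1 then ε k else 0) with hM'
  have hrn : r' + 1 ≤ n := by
    have := Fintype.card_le_of_injective i hi
    simpa using this
  have hcard : Fintype.card ↥(Set.range i)ᶜ = n - (r'+1) := by
    rw [Fintype.card_compl_set, Set.card_range_of_injective hi]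
    simp
  set e₂ : Fin (n - (r'+1)) ≃ ↥(Set.range i)ᶜ := (Fintype.equivFinOfCardEq hcard).symm with he₂
  set e : (Fin (r'+1) ⊕ Fin (n - (r'+1))) ≃ Fin n :=
    ((Equiv.ofInjective i hi).sumCongr e₂).trans (Equiv.Set.sumCompl (Set.range i)) with he
  have he1 : ∀ k, e (Sum.inl k) = i k := by
    intro k
    simp [he, Equiv.Set.sumCompl_apply_inl]
  have he2 : ∀ x, e (Sum.inr x) ∉ Set.range i := by
    intro x
    have : e (Sum.inr x) = ↑(e₂ x) := by simp [he, Equiv.Set.sumCompl_apply_inr]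
    rw [this]
    exact (e₂ x).2
  have hblocks : Mfull.submatrix e e = Matrix.fromBlocks M' 0 0 0 := by
    apply Matrix.ext
    rintro (k | x) (l | y)
    · show Mfull (e (Sum.inl k)) (e (Sum.inl l)) = M' k l
      rw [he1, he1]
      show (∑ k', if i k' = i k ∧ i (k'+1) = i l then ε k' else 0) = _
      rw [Finset.sum_eq_single (f := fun k' => if i k' = i k ∧ i (k'+1) = i l then ε k' else 0) k]
      · simp only [hM', Matrix.of_apply]
        split_ifs with h1 h2 h2
        · rfl
        · exact absurd (hi h1.2).symm h2
        · exact absurd ⟨by trivial, by rw [h2]⟩ h1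
        · rfl
      · intro k' _ hk'
        rw [if_neg]
        rintro ⟨h1, -⟩
        exact hk' (hi h1)
      · intro hmem
        exact absurd (Finset.mem_univ k) hmem
    · show Mfull (e (Sum.inl k)) (e (Sum.inr y)) = 0
      apply hzeroM
      rintro ⟨k', -, h2⟩
      exact he2 y ⟨k' + 1, h2⟩
    · show Mfull (e (Sum.inr x)) (e (Sum.inl l)) = 0
      apply hzeroM
      rintro ⟨k', h1, -⟩
      exact he2 x ⟨k', h1⟩
    · show Mfull (e (Sum.inr x)) (e (Sum.inr y)) = 0
      apply hzeroM
      rintro ⟨k', h1, -⟩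
      exact he2 x ⟨k', h1⟩
  have hre := Matrix.charpoly_reindex (e.symm) Mfull
  rw [Matrix.reindex_apply, Equiv.symm_symm] at hre
  have hchar0 : Mfull.charpoly = (X ^ (r'+1) - C (∏ k, ε k)) * X ^ (n - (r'+1)) := by
    rw [← hre, hblocks, Matrix.charpoly_fromBlocks_zero₂₁, charpoly_zero_mat, hM',
      charpoly_cycle hr']
  set s : ℝ := ∏ k, ε k with hs
  have hss : s * s = 1 := by
    rw [hs, ← Finset.prod_mul_distrib]
    apply Finset.prod_eq_one
    intro k _
    have : ε k * ε k = (Real.sign (A (i k) (j k)) * Real.sign (A (i k) (j k)))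
        * (Real.sign (A (i (k+1)) (j k)) * Real.sign (A (i (k+1)) (j k))) := by
      rw [hε]; ring
    rw [this, mysign_mul_self _ (e1 k), mysign_mul_self _ (e2 k), mul_one]
  have hchar : (B * Cmᵀ).charpoly = (X ^ (r'+1) - C s) * X ^ (n - (r'+1)) := by
    rw [key, hchar0]
  refine ⟨B, hBq, Cm, hCq, ?_⟩
  rcases mul_self_eq_one_iff.mp hss with h1 | h1
  · have hfin : (B * Cmᵀ).charpoly = X ^ (n - (r'+1)) * (X ^ (r'+1) - 1) := by
      have hC1 : C s = 1 := by rw [h1]; simp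
      rw [hchar, hC1]; ring
    refine ⟨Or.inl hfin, Complex.exp (2 * Real.pi * Complex.I / (r'+1)), ?_, ?_⟩
    · have hz : (Complex.exp (2 * Real.pi * Complex.I / (r'+1))) ^ (r'+1) = 1 := by
        rw [← Complex.exp_nat_mul]
        rw [show ((r'+1 : ℕ) : ℂ) * (2 * Real.pi * Complex.I / (r'+1)) = 2 * Real.pi * Complex.I
          by
            have hne : ((r' : ℂ) + 1) ≠ 0 := by exact_mod_cast Nat.succ_ne_zero r'
            push_cast
            rw [← mul_div_assoc, mul_div_cancel_left₀ _ hne]]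
        exact Complex.exp_two_pi_mul_I
      rw [hfin]
      simp only [Polynomial.map_mul, Polynomial.map_pow, Polynomial.map_X, Polynomial.map_sub,
        Polynomial.map_one, Polynomial.IsRoot, Polynomial.eval_mul, Polynomial.eval_pow,
        Polynomial.eval_X, Polynomial.eval_sub, Polynomial.eval_one]
      rw [hz]
      ring
    · rintro ⟨x, hx0, hzx⟩
      have hz : (Complex.exp (2 * Real.pi * Complex.I / (r'+1))) ^ (r'+1) = 1 := by
        rw [← Complex.exp_nat_mul]
        rw [show ((r'+1 : ℕ) : ℂ) * (2 * Real.pi * Complex.I / (r'+1)) = 2 * Real.pi * Complex.I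
          by
            have hne : ((r' : ℂ) + 1) ≠ 0 := by exact_mod_cast Nat.succ_ne_zero r'
            push_cast
            rw [← mul_div_assoc, mul_div_cancel_left₀ _ hne]]
        exact Complex.exp_two_pi_mul_I
      rw [hzx] at hz
      have hxr : x ^ (r'+1) = 1 := by exact_mod_cast hz
      have hx1 : x = 1 := by
        rcases lt_trichotomy x 1 with h | h | h
        · exfalso
          have := pow_lt_one₀ hx0 h (by omega : r' + 1 ≠ 0)
          rw [hxr] at this; exact lt_irrefl _ this
        · exact h
        · exfalso
          have := one_lt_pow₀ h (by omega : r' + 1 ≠ 0)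
          rw [hxr] at this; exact lt_irrefl _ this
      have hprim := Complex.isPrimitiveRoot_exp (r'+1) (by omega)
      have := hprim.ne_one (by omega : 1 < r' + 1)
      push_cast at this
      apply this
      rw [hzx, hx1]
      exact Complex.ofReal_one
  · have hfin : (B * Cmᵀ).charpoly = X ^ (n - (r'+1)) * (X ^ (r'+1) + 1) := by
      have hC1 : C s = -1 := by rw [h1]; simp
      rw [hchar, hC1]; ring
    refine ⟨Or.inr hfin, Complex.exp (Real.pi * Complex.I / (r'+1)), ?_, ?_⟩
    · have hz : (Complex.exp (Real.pi * Complex.I / (r'+1))) ^ (r'+1) = -1 := by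
        rw [← Complex.exp_nat_mul]
        rw [show ((r'+1 : ℕ) : ℂ) * (Real.pi * Complex.I / (r'+1)) = Real.pi * Complex.I
          by
            have hne : ((r' : ℂ) + 1) ≠ 0 := by exact_mod_cast Nat.succ_ne_zero r'
            push_cast
            rw [← mul_div_assoc, mul_div_cancel_left₀ _ hne]]
        exact Complex.exp_pi_mul_I
      rw [hfin]
      simp only [Polynomial.map_mul, Polynomial.map_pow, Polynomial.map_X, Polynomial.map_add,
        Polynomial.map_one, Polynomial.IsRoot, Polynomial.eval_mul, Polynomial.eval_pow,
        Polynomial.eval_X, Polynomial.eval_add, Polynomial.eval_one]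
      rw [hz]
      ring
    · rintro ⟨x, hx0, hzx⟩
      have hz : (Complex.exp (Real.pi * Complex.I / (r'+1))) ^ (r'+1) = -1 := by
        rw [← Complex.exp_nat_mul]
        rw [show ((r'+1 : ℕ) : ℂ) * (Real.pi * Complex.I / (r'+1)) = Real.pi * Complex.I
          by
            have hne : ((r' : ℂ) + 1) ≠ 0 := by exact_mod_cast Nat.succ_ne_zero r'
            push_cast
            rw [← mul_div_assoc, mul_div_cancel_left₀ _ hne]]
        exact Complex.exp_pi_mul_I
      rw [hzx] at hz
      have hxr : x ^ (r'+1) = -1 := by exact_mod_cast hz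
      have : (0:ℝ) ≤ x ^ (r'+1) := pow_nonneg hx0 _
      rw [hxr] at this
      linarith

/-- if `Γ_A` contains a cycle of length `2r` with `r ≥ 2`, then there exist
`B, C` in the closure of the qualitative class of `A` such that the characteristic polynomial
of `B Cᵀ` is `λ^{n-r}(λ^r - 1)` or `λ^{n-r}(λ^r + 1)`; in particular `B Cᵀ` has an eigenvalue
not on the nonnegative real axis. -/
theorem cycle_gives_bad_spectrum {n m r : ℕ} (A : Matrix (Fin n) (Fin m) ℝ) (hr : 2 ≤ r)
    (hcyc : ∃ (v : Fin n ⊕ Fin m) (c : (bipartiteGraph A).Walk v v),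
      c.IsCycle ∧ c.length = 2 * r) :
    ∃ B ∈ Qual0 A, ∃ C ∈ Qual0 A,
      ((B * Cᵀ).charpoly = X ^ (n - r) * (X ^ r - 1) ∨
        (B * Cᵀ).charpoly = X ^ (n - r) * (X ^ r + 1)) ∧
      ∃ z : ℂ, (((B * Cᵀ).charpoly).map (algebraMap ℝ ℂ)).IsRoot z ∧
        ¬ ∃ x : ℝ, 0 ≤ x ∧ z = x := by
  haveI : NeZero r := ⟨by omega⟩
  obtain ⟨i, j, hi, hj, he1, he2⟩ := extract_cycle A hr hcyc
  exact main_alg hr A i j hi hj he1 he2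
end

section
/- If A is a real n×n matrix all of whose principal minors are nonnegative, then no eigenvalue λ of A satisfies λ = ρe^{iθ} with ρ > 0 and |θ − π| < π/n; consequently, if A^k is a P_0-matrix then no eigenvalue λ of A satisfies λ^k ∈ F(n), where F(n) = {ρe^{iθ} : ρ > 0, |θ − π| < π/n}. -/
open Matrix

/-- A real square matrix is a `P₀`-matrix if all its principal minors are nonnegative. -/
def IsP0 {n : ℕ} (M : Matrix (Fin n) (Fin n) ℝ) : Prop :=
  ∀ α : Finset (Fin n), α.Nonempty →
    0 ≤ (M.submatrix (fun i : α => (i : Fin n)) (fun j : α => (j : Fin n))).det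

/-- The open sector `F(n) = {ρ e^{iθ} : ρ > 0, |θ - π| < π/n}` around the negative real
axis (for `z ≠ 0`, the condition `|θ - π| < π/n` is `|arg(-z)| < π/n`). -/
def Fsector (n : ℕ) : Set ℂ :=
  {z | z ≠ 0 ∧ |Complex.arg (-z)| < Real.pi / n}

/-- A principal minor. -/
noncomputable def pminor {n : ℕ} {R : Type*} [CommRing R] (M : Matrix (Fin n) (Fin n) R)
    (α : Finset (Fin n)) : R :=
  (M.submatrix (fun i : α => (i : Fin n)) (fun j : α => (j : Fin n))).det

lemma pminor_map {n : ℕ} {R S : Type*} [CommRing R] [CommRing S] (f : R →+* S)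
    (M : Matrix (Fin n) (Fin n) R) (α : Finset (Fin n)) :
    pminor (M.map f) α = f (pminor M α) := by
  rw [pminor, pminor, Matrix.submatrix_map, RingHom.map_det, RingHom.mapMatrix_apply]

lemma pminor_empty {n : ℕ} {R : Type*} [CommRing R] (M : Matrix (Fin n) (Fin n) R) :
    pminor M ∅ = 1 := by
  haveI : IsEmpty ((∅ : Finset (Fin n)) : Type) := Finset.isEmpty_coe_sort.2 rfl
  exact Matrix.det_isEmpty

lemma det_piecewise_one {n : ℕ} {R : Type*} [CommRing R] (M : Matrix (Fin n) (Fin n) R)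
    (S : Finset (Fin n)) :
    (Matrix.of (S.piecewise (fun i => (1 : Matrix (Fin n) (Fin n) R) i) (fun i => M i))).det
      = pminor M Sᶜ := by
  classical
  set B : Matrix (Fin n) (Fin n) R :=
    Matrix.of (S.piecewise (fun i => (1 : Matrix (Fin n) (Fin n) R) i) (fun i => M i)) with hB
  let e : {a : Fin n // a ∈ S} ⊕ {a : Fin n // ¬ a ∈ S} ≃ Fin n := Equiv.sumCompl (· ∈ S)
  have hsub : B.submatrix e e =
      Matrix.fromBlocks 1 0
        (M.submatrix (fun i : {a : Fin n // ¬ a ∈ S} => (i : Fin n))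
          (fun j : {a : Fin n // a ∈ S} => (j : Fin n)))
        (M.submatrix (fun i : {a : Fin n // ¬ a ∈ S} => (i : Fin n))
          (fun j : {a : Fin n // ¬ a ∈ S} => (j : Fin n))) := by
    ext i j
    cases i with
    | inl i =>
      cases j with
      | inl j =>
        simp only [Matrix.submatrix_apply, hB, Matrix.of_apply, e, Equiv.sumCompl_apply_inl,
          Matrix.fromBlocks_apply₁₁]
        rw [Finset.piecewise_eq_of_mem _ _ _ i.2]
        simp only [Matrix.one_apply]
        exact if_congr Subtype.ext_iff.symm rfl rfl
      | inr j =>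
        simp only [Matrix.submatrix_apply, hB, Matrix.of_apply, e, Equiv.sumCompl_apply_inl,
          Equiv.sumCompl_apply_inr, Matrix.fromBlocks_apply₁₂]
        rw [Finset.piecewise_eq_of_mem _ _ _ i.2]
        have : (i : Fin n) ≠ (j : Fin n) := by
          intro h; exact j.2 (h ▸ i.2)
        simp [Matrix.one_apply, this]
    | inr i =>
      cases j with
      | inl j =>
        simp only [Matrix.submatrix_apply, hB, Matrix.of_apply, e, Equiv.sumCompl_apply_inl,
          Equiv.sumCompl_apply_inr, Matrix.fromBlocks_apply₂₁]
        rw [Finset.piecewise_eq_of_notMem _ _ _ i.2]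
      | inr j =>
        simp only [Matrix.submatrix_apply, hB, Matrix.of_apply, e,
          Equiv.sumCompl_apply_inr, Matrix.fromBlocks_apply₂₂]
        rw [Finset.piecewise_eq_of_notMem _ _ _ i.2]
  have h1 : B.det = (B.submatrix e e).det := (Matrix.det_submatrix_equiv_self e B).symm
  rw [h1, hsub, Matrix.det_fromBlocks_zero₁₂, Matrix.det_one, one_mul]
  -- identify the block with the principal minor on Sᶜ
  let ε : ((Sᶜ : Finset (Fin n)) : Type) ≃ {a : Fin n // ¬ a ∈ S} :=
    Equiv.subtypeEquivRight (fun a => by simp)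
  rw [pminor, ← Matrix.det_submatrix_equiv_self ε]
  rfl

lemma det_smul_one_add {n : ℕ} {R : Type*} [CommRing R] (x : R) (M : Matrix (Fin n) (Fin n) R) :
    (x • (1 : Matrix (Fin n) (Fin n) R) + M).det
      = ∑ S : Finset (Fin n), x ^ S.card * pminor M Sᶜ := by
  classical
  have h0 : (x • (1 : Matrix (Fin n) (Fin n) R) + M).det =
      (Matrix.detRowAlternating : (Fin n → R) [⋀^Fin n]→ₗ[R] R).toMultilinearMap
        ((fun i => x • (1 : Matrix (Fin n) (Fin n) R) i) + (fun i => M i)) := rfl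
  have hexp := ((Matrix.detRowAlternating :
      (Fin n → R) [⋀^Fin n]→ₗ[R] R).toMultilinearMap).map_add_univ
    (fun i => x • (1 : Matrix (Fin n) (Fin n) R) i) (fun i => M i)
  rw [h0, hexp]
  refine Finset.sum_congr rfl (fun S _ => ?_)
  have hpc : S.piecewise (fun i => x • (1 : Matrix (Fin n) (Fin n) R) i) (fun i => M i)
      = S.piecewise (fun i => x • (S.piecewise (fun i => (1 : Matrix (Fin n) (Fin n) R) i)
          (fun i => M i)) i)
        (S.piecewise (fun i => (1 : Matrix (Fin n) (Fin n) R) i) (fun i => M i)) := by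
    funext i
    by_cases hi : i ∈ S
    · rw [Finset.piecewise_eq_of_mem _ _ _ hi, Finset.piecewise_eq_of_mem _ _ _ hi,
        Finset.piecewise_eq_of_mem _ _ _ hi]
    · rw [Finset.piecewise_eq_of_notMem _ _ _ hi, Finset.piecewise_eq_of_notMem _ _ _ hi,
        Finset.piecewise_eq_of_notMem _ _ _ hi]
  rw [hpc, MultilinearMap.map_piecewise_smul]
  have := det_piecewise_one M S
  have h2 : (Matrix.detRowAlternating : (Fin n → R) [⋀^Fin n]→ₗ[R] R).toMultilinearMap
      (S.piecewise (fun i => (1 : Matrix (Fin n) (Fin n) R) i) (fun i => M i)) = pminor M Sᶜ :=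
    this
  rw [h2, Finset.prod_const, smul_eq_mul]

lemma det_sub_eq_zero_of_root {n : ℕ} (A : Matrix (Fin n) (Fin n) ℝ) {z : ℂ}
    (hz : ((A.charpoly).map (algebraMap ℝ ℂ)).IsRoot z) :
    (z • (1 : Matrix (Fin n) (Fin n) ℂ) - A.map (algebraMap ℝ ℂ)).det = 0 := by
  classical
  set B := A.map (algebraMap ℝ ℂ) with hBdef
  have h1 : (A.charpoly).map (algebraMap ℝ ℂ) = B.charpoly :=
    (Matrix.charpoly_map A (algebraMap ℝ ℂ)).symm
  rw [h1] at hz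
  have h2 : Polynomial.eval z B.charpoly
      = ((Matrix.charmatrix B).map (Polynomial.evalRingHom z)).det := by
    rw [Matrix.charpoly]
    calc Polynomial.eval z (Matrix.charmatrix B).det
        = (Polynomial.evalRingHom z) (Matrix.charmatrix B).det := rfl
      _ = ((Polynomial.evalRingHom z).mapMatrix (Matrix.charmatrix B)).det :=
          RingHom.map_det _ _
      _ = ((Matrix.charmatrix B).map (Polynomial.evalRingHom z)).det := by
          rw [RingHom.mapMatrix_apply]
  have h3 : (Matrix.charmatrix B).map (Polynomial.evalRingHom z)
      = z • (1 : Matrix (Fin n) (Fin n) ℂ) - B := by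
    ext i j
    by_cases h : i = j
    · subst h
      simp [Matrix.charmatrix_apply_eq, Matrix.one_apply]
    · simp [Matrix.charmatrix_apply_ne _ _ _ h, Matrix.one_apply, h]
  have := hz
  rw [Polynomial.IsRoot, h2, h3] at this
  exact this

lemma cos_aux {n : ℕ} (hn : 0 < n) {θ : ℝ} (hθ : (n : ℝ) * |θ| < Real.pi)
    {j : ℕ} (hj : j ≤ n) : 0 < Real.cos ((j : ℝ) * θ - (n : ℝ) * θ / 2) := by
  have hjn : |(j : ℝ) - (n : ℝ) / 2| ≤ (n : ℝ) / 2 := by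
    rw [abs_le]
    constructor <;> · push_cast; nlinarith [Nat.cast_nonneg (α := ℝ) j,
      (Nat.cast_le (α := ℝ)).2 hj]
  have key : |(j : ℝ) * θ - (n : ℝ) * θ / 2| < Real.pi / 2 := by
    have : (j : ℝ) * θ - (n : ℝ) * θ / 2 = ((j : ℝ) - (n : ℝ) / 2) * θ := by ring
    rw [this, abs_mul]
    calc |(j : ℝ) - (n : ℝ) / 2| * |θ| ≤ (n : ℝ) / 2 * |θ| :=
          mul_le_mul_of_nonneg_right hjn (abs_nonneg _)
      _ < Real.pi / 2 := by nlinarith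
  exact Real.cos_pos_of_mem_Ioo (abs_lt.1 key)

lemma core {n : ℕ} (A : Matrix (Fin n) (Fin n) ℝ) (hA : IsP0 A) (z : ℂ)
    (hdet : (z • (1 : Matrix (Fin n) (Fin n) ℂ) - A.map (algebraMap ℝ ℂ)).det = 0) :
    z ∉ Fsector n := by
  classical
  rintro ⟨hz0, harg⟩
  rcases Nat.eq_zero_or_pos n with rfl | hn
  · rw [Nat.cast_zero, div_zero] at harg
    exact absurd harg (not_lt.2 (abs_nonneg _))
  set B := A.map (algebraMap ℝ ℂ) with hBdef
  set μ : ℂ := -z with hμdef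
  have hμ0 : μ ≠ 0 := neg_ne_zero.2 hz0
  -- det (μ • 1 + B) = 0
  have hneg : μ • (1 : Matrix (Fin n) (Fin n) ℂ) + B = -(z • 1 - B) := by
    rw [hμdef]; module
  have hdet2 : (μ • (1 : Matrix (Fin n) (Fin n) ℂ) + B).det = 0 := by
    rw [hneg, Matrix.det_neg, hdet, mul_zero]
  rw [det_smul_one_add] at hdet2
  -- real coefficients
  set c : Finset (Fin n) → ℝ := fun S => pminor A Sᶜ with hcdef
  have hsum : ∑ S : Finset (Fin n), μ ^ S.card * ((c S : ℝ) : ℂ) = 0 := by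
    rw [← hdet2]
    refine Finset.sum_congr rfl (fun S _ => ?_)
    rw [hcdef]
    rw [show pminor B Sᶜ = ((pminor A Sᶜ : ℝ) : ℂ) from pminor_map (algebraMap ℝ ℂ) A Sᶜ]
  have hc_nonneg : ∀ S : Finset (Fin n), 0 ≤ c S := by
    intro S
    rcases Finset.eq_empty_or_nonempty (Sᶜ) with h | h
    · rw [hcdef]; simp only [h, pminor_empty]; norm_num
    · exact hA _ h
  have hc_univ : c Finset.univ = 1 := by
    rw [hcdef]; simp only [Finset.compl_univ]; exact pminor_empty A
  -- polar data
  set r : ℝ := ‖μ‖ with hrdef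
  set θ : ℝ := Complex.arg μ with hθdef
  have hr : 0 < r := norm_pos_iff.mpr hμ0
  have hμ : (r : ℂ) * Complex.exp ((θ : ℂ) * Complex.I) = μ :=
    Complex.norm_mul_exp_arg_mul_I μ
  have hθπ : (n : ℝ) * |θ| < Real.pi := by
    have hn' : (0 : ℝ) < n := by exact_mod_cast hn
    have := harg
    rw [lt_div_iff₀ hn'] at this
    linarith [this]
  set φ : ℝ := (n : ℝ) * θ / 2 with hφdef
  set w : ℂ := Complex.exp (((-φ : ℝ) : ℂ) * Complex.I) with hwdef
  have hterm : ∀ j : ℕ, (w * μ ^ j).re = r ^ j * Real.cos ((j : ℝ) * θ - φ) := by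
    intro j
    have h1 : μ ^ j = ((r ^ j : ℝ) : ℂ) * Complex.exp ((((j : ℝ) * θ : ℝ) : ℂ) * Complex.I) := by
      rw [← hμ, mul_pow, ← Complex.exp_nat_mul]
      push_cast
      ring_nf
    rw [h1, hwdef]
    have h2 : Complex.exp (((-φ : ℝ) : ℂ) * Complex.I) *
        (((r ^ j : ℝ) : ℂ) * Complex.exp ((((j : ℝ) * θ : ℝ) : ℂ) * Complex.I))
        = ((r ^ j : ℝ) : ℂ) * Complex.exp ((((j : ℝ) * θ - φ : ℝ) : ℂ) * Complex.I) := by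
      rw [mul_left_comm, ← Complex.exp_add]
      congr 2
      push_cast
      ring
    rw [h2, Complex.re_ofReal_mul]
    congr 1
    rw [Complex.exp_re]
    simp
  -- take real part of w * (sum)
  have hre : ∑ S : Finset (Fin n), c S * (r ^ S.card * Real.cos ((S.card : ℝ) * θ - φ)) = 0 := by
    have h0 : (w * ∑ S : Finset (Fin n), μ ^ S.card * ((c S : ℝ) : ℂ)).re = 0 := by
      rw [hsum, mul_zero, Complex.zero_re]
    rw [Finset.mul_sum] at h0
    rw [← h0, Complex.re_sum]
    refine Finset.sum_congr rfl (fun S _ => ?_)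
    have : w * (μ ^ S.card * ((c S : ℝ) : ℂ)) = ((c S : ℝ) : ℂ) * (w * μ ^ S.card) := by ring
    rw [this, Complex.re_ofReal_mul, hterm]
  -- positivity
  have hpos : 0 < ∑ S : Finset (Fin n),
      c S * (r ^ S.card * Real.cos ((S.card : ℝ) * θ - φ)) := by
    refine Finset.sum_pos' (fun S _ => ?_) ⟨Finset.univ, Finset.mem_univ _, ?_⟩
    · have hcos : 0 < Real.cos ((S.card : ℝ) * θ - φ) := by
        rw [hφdef]
        have hcard : S.card ≤ n := by
          have := Finset.card_le_univ S
          simpa using this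
        exact cos_aux hn hθπ hcard
      exact mul_nonneg (hc_nonneg S) (mul_pos (pow_pos hr _) hcos).le
    · have hcos : 0 < Real.cos (((Finset.univ : Finset (Fin n)).card : ℝ) * θ - φ) := by
        rw [hφdef]
        have hcard : (Finset.univ : Finset (Fin n)).card ≤ n := by simp
        exact cos_aux hn hθπ hcard
      rw [hc_univ, one_mul]
      exact mul_pos (pow_pos hr _) hcos
  rw [hre] at hpos
  exact lt_irrefl 0 hpos

/-- Kellogg: if all principal minors of a real `n×n` matrix `A` are
nonnegative then no eigenvalue of `A` lies in `F(n)`; consequently, if `A^k` is a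
`P₀`-matrix then no eigenvalue `λ` of `A` has `λ^k ∈ F(n)`. -/
theorem p0_eigenvalues_avoid_sector (n : ℕ) :
    (∀ A : Matrix (Fin n) (Fin n) ℝ, IsP0 A → ∀ z : ℂ,
      ((A.charpoly).map (algebraMap ℝ ℂ)).IsRoot z → z ∉ Fsector n) ∧
    (∀ (A : Matrix (Fin n) (Fin n) ℝ) (k : ℕ), 0 < k → IsP0 (A ^ k) → ∀ z : ℂ,
      ((A.charpoly).map (algebraMap ℝ ℂ)).IsRoot z → z ^ k ∉ Fsector n) := by
  constructor
  · intro A hA z hz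
    exact core A hA z (det_sub_eq_zero_of_root A hz)
  · intro A k hk hA z hz
    have hd : (z • (1 : Matrix (Fin n) (Fin n) ℂ) - A.map (algebraMap ℝ ℂ)).det = 0 :=
      det_sub_eq_zero_of_root A hz
    set B := A.map (algebraMap ℝ ℂ) with hBdef
    have hcomm : Commute (z • (1 : Matrix (Fin n) (Fin n) ℂ)) B :=
      (Commute.one_left B).smul_left z
    have hfact := hcomm.geom_sum₂_mul k
    have hdk : ((z • (1 : Matrix (Fin n) (Fin n) ℂ)) ^ k - B ^ k).det = 0 := by
      rw [← hfact, Matrix.det_mul, hd, mul_zero]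
    have hpow1 : (z • (1 : Matrix (Fin n) (Fin n) ℂ)) ^ k = z ^ k • 1 := by
      rw [smul_pow, one_pow]
    have hpow2 : B ^ k = (A ^ k).map (algebraMap ℝ ℂ) := by
      rw [hBdef, ← RingHom.mapMatrix_apply, ← RingHom.mapMatrix_apply, ← map_pow]
    rw [hpow1, hpow2] at hdk
    exact core (A ^ k) hA (z ^ k) hdk
end
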